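/- arXiv:2102.04580 — 10 statements merged into one kernel-verified Lean document; each statement's English description precedes it below -/
import Mathlib

section
/- In any Nash equilibrium (x,y) of a nondegenerate m×n bimatrix game (A,B), the supports of x and y have equal size: |supp(x)| = |supp(y)|. -/
open Matrix
open scoped Classical

noncomputable section

def IsMixed {ι : Type*} [Fintype ι] (x : ι → ℝ) : Prop :=
  (∀ i, 0 ≤ x i) ∧ ∑ i, x i = 1

def IsNash {ι κ : Type*} [Fintype ι] [Fintype κ]
    (A B : Matrix ι κ ℝ) (x : ι → ℝ) (y : κ → ℝ) : Prop :=
  IsMixed x ∧ IsMixed y ∧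
    (∀ x' : ι → ℝ, IsMixed x' → x' ⬝ᵥ (A *ᵥ y) ≤ x ⬝ᵥ (A *ᵥ y)) ∧
    (∀ y' : κ → ℝ, IsMixed y' → x ⬝ᵥ (B *ᵥ y') ≤ x ⬝ᵥ (B *ᵥ y))

def supp {ι : Type*} [Fintype ι] (x : ι → ℝ) : Finset ι :=
  Finset.univ.filter fun i => 0 < x i

/-- Pure best responses of player 1 against a mixed strategy `y` of player 2. -/
def bestresp1 {ι κ : Type*} [Fintype ι] [Fintype κ] (A : Matrix ι κ ℝ) (y : κ → ℝ) :
    Finset ι :=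
  Finset.univ.filter fun i => ∀ k, (A *ᵥ y) k ≤ (A *ᵥ y) i

/-- Pure best responses of player 2 against a mixed strategy `x` of player 1. -/
def bestresp2 {ι κ : Type*} [Fintype ι] [Fintype κ] (B : Matrix ι κ ℝ) (x : ι → ℝ) :
    Finset κ :=
  Finset.univ.filter fun j => ∀ k, (Bᵀ *ᵥ x) k ≤ (Bᵀ *ᵥ x) j

/-- A bimatrix game is nondegenerate if no mixed strategy of either player has more
pure best responses than the size of its support. -/
def Nondegenerate {ι κ : Type*} [Fintype ι] [Fintype κ] (A B : Matrix ι κ ℝ) : Prop :=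
  (∀ x : ι → ℝ, IsMixed x → (bestresp2 B x).card ≤ (supp x).card) ∧
  (∀ y : κ → ℝ, IsMixed y → (bestresp1 A y).card ≤ (supp y).card)

lemma supp_subset_best {ι : Type*} [Fintype ι] (v x : ι → ℝ) (hx : IsMixed x)
    (hbr : ∀ x' : ι → ℝ, IsMixed x' → x' ⬝ᵥ v ≤ x ⬝ᵥ v) :
    supp x ⊆ Finset.univ.filter fun i => ∀ k, v k ≤ v i := by
  have hne : (Finset.univ : Finset ι).Nonempty := by
    by_contra hc
    simp only [Finset.not_nonempty_iff_eq_empty] at hc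
    have := hx.2
    simp [hc] at this
  obtain ⟨i0, -, hi0⟩ := Finset.exists_max_image Finset.univ v hne
  -- pure strategy at i0
  set x' : ι → ℝ := fun j => if j = i0 then 1 else 0 with hx'
  have hx'm : IsMixed x' := by
    constructor
    · intro i; by_cases hi : i = i0 <;> simp [hx', hi]
    · simp [hx']
  have hdot : x' ⬝ᵥ v = v i0 := by
    simp [hx', dotProduct, ite_mul]
  have hge : v i0 ≤ x ⬝ᵥ v := hdot ▸ hbr x' hx'm
  intro i hi
  simp only [supp, Finset.mem_filter, Finset.mem_univ, true_and] at hi ⊢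
  intro k
  by_contra hk
  push_neg at hk
  have hvi : v i < v i0 := lt_of_lt_of_le hk (hi0 k (Finset.mem_univ k))
  have hlt : x ⬝ᵥ v < v i0 := by
    have h1 : ∑ j, x j * v j < ∑ j, x j * v i0 := by
      apply Finset.sum_lt_sum
      · intro j _
        exact mul_le_mul_of_nonneg_left (hi0 j (Finset.mem_univ j)) (hx.1 j)
      · exact ⟨i, Finset.mem_univ i, mul_lt_mul_of_pos_left hvi hi⟩
    calc x ⬝ᵥ v = ∑ j, x j * v j := rfl
      _ < ∑ j, x j * v i0 := h1
      _ = v i0 := by rw [← Finset.sum_mul, hx.2, one_mul]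
  exact absurd hge (not_le.mpr hlt)

/-- In any Nash equilibrium of a nondegenerate bimatrix game, the supports of the two
equilibrium strategies have equal size. -/
theorem equal_support_sizes {m n : ℕ} (A B : Matrix (Fin m) (Fin n) ℝ)
    (hnd : Nondegenerate A B) (x : Fin m → ℝ) (y : Fin n → ℝ)
    (h : IsNash A B x y) : (supp x).card = (supp y).card := by
  obtain ⟨hx, hy, h1, h2⟩ := h
  have hs1 : supp x ⊆ bestresp1 A y := supp_subset_best (A *ᵥ y) x hx h1
  have hs2 : supp y ⊆ bestresp2 B x := by
    apply supp_subset_best (Bᵀ *ᵥ x) y hy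
    intro y' hy'
    have e : ∀ z : Fin n → ℝ, z ⬝ᵥ (Bᵀ *ᵥ x) = x ⬝ᵥ (B *ᵥ z) := by
      intro z
      rw [dotProduct_mulVec, vecMul_transpose, dotProduct_comm]
    rw [e, e]
    exact h2 y' hy'
  have c1 : (supp x).card ≤ (bestresp1 A y).card := Finset.card_le_card hs1
  have c2 : (supp y).card ≤ (bestresp2 B x).card := Finset.card_le_card hs2
  have c3 := hnd.1 x hx
  have c4 := hnd.2 y hy
  omega
end
end

section
/- Let (x,y) ∈ X × Y for an m×n bimatrix game (A,B). Then (x,y) is a Nash equilibrium of (A,B) if and only if (x,y) is completely labeled. -/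
open Matrix
open scoped Classical

noncomputable section

/-- A mixed strategy `x ∈ X` has label `i` (encoded `Sum.inl i`) if `x i = 0`, and
label `m + j` (encoded `Sum.inr j`) if column `j` is a pure best response to `x`. -/
def hasLabelX {m n : ℕ} (B : Matrix (Fin m) (Fin n) ℝ) (x : Fin m → ℝ) :
    Fin m ⊕ Fin n → Prop :=
  Sum.elim (fun i => x i = 0) (fun j => ∀ k, (Bᵀ *ᵥ x) k ≤ (Bᵀ *ᵥ x) j)

/-- A mixed strategy `y ∈ Y` has label `i` (encoded `Sum.inl i`) if row `i` is a pure
best response to `y`, and label `m + j` (encoded `Sum.inr j`) if `y j = 0`. -/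
def hasLabelY {m n : ℕ} (A : Matrix (Fin m) (Fin n) ℝ) (y : Fin n → ℝ) :
    Fin m ⊕ Fin n → Prop :=
  Sum.elim (fun i => ∀ k, (A *ᵥ y) k ≤ (A *ᵥ y) i) (fun j => y j = 0)

lemma mixed_nonempty {ι : Type*} [Fintype ι] {x : ι → ℝ} (hx : IsMixed x) :
    Nonempty ι := by
  by_contra h
  rw [not_nonempty_iff] at h
  have := hx.2
  simp [Finset.sum_of_isEmpty] at this

lemma key {ι : Type*} [Fintype ι] (v : ι → ℝ) (x : ι → ℝ) (hx : IsMixed x) :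
    (∀ x' : ι → ℝ, IsMixed x' → x' ⬝ᵥ v ≤ x ⬝ᵥ v) ↔
      ∀ i, x i = 0 ∨ ∀ k, v k ≤ v i := by
  have hne : Nonempty ι := mixed_nonempty hx
  constructor
  · intro h i
    by_cases hxi : x i = 0
    · exact Or.inl hxi
    right
    intro k
    -- there is a maximizer
    obtain ⟨i0, hi0⟩ := Finite.exists_max v
    have hpure : IsMixed (fun l => if l = i0 then (1:ℝ) else 0) := by
      constructor
      · intro l; positivity
      · simp
    have h1 : v i0 ≤ x ⬝ᵥ v := by
      have := h _ hpure
      simpa [dotProduct, Finset.sum_ite_eq'] using this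
    have h2 : x ⬝ᵥ v ≤ v i0 := by
      calc x ⬝ᵥ v = ∑ l, x l * v l := rfl
        _ ≤ ∑ l, x l * v i0 := by
            apply Finset.sum_le_sum
            intro l _
            exact mul_le_mul_of_nonneg_left (hi0 l) (hx.1 l)
        _ = v i0 := by rw [← Finset.sum_mul, hx.2, one_mul]
    have heq : x ⬝ᵥ v = v i0 := le_antisymm h2 h1
    -- each term must be maximal on the support
    by_contra hlt
    push_neg at hlt
    have hvi : v i < v i0 := lt_of_lt_of_le hlt (hi0 k)
    have hstrict : ∑ l, x l * v l < ∑ l, x l * v i0 := by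
      apply Finset.sum_lt_sum
      · intro l _
        exact mul_le_mul_of_nonneg_left (hi0 l) (hx.1 l)
      · exact ⟨i, Finset.mem_univ i,
          mul_lt_mul_of_pos_left hvi (lt_of_le_of_ne (hx.1 i) (Ne.symm hxi))⟩
    rw [← Finset.sum_mul, hx.2, one_mul] at hstrict
    exact absurd heq (ne_of_lt hstrict)
  · intro h x' hx'
    obtain ⟨i0, hi0⟩ : ∃ i0, x i0 ≠ 0 := by
      by_contra hc
      push_neg at hc
      have := hx.2
      simp [hc] at this
    have hmax : ∀ k, v k ≤ v i0 := (h i0).resolve_left hi0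
    have hxval : x ⬝ᵥ v = v i0 := by
      have : ∀ l, x l * v l = x l * v i0 := by
        intro l
        rcases h l with h0 | hm
        · simp [h0]
        · congr 1
          exact le_antisymm (hmax l) (hm i0)
      calc x ⬝ᵥ v = ∑ l, x l * v l := rfl
        _ = ∑ l, x l * v i0 := by simp_rw [this]
        _ = v i0 := by rw [← Finset.sum_mul, hx.2, one_mul]
    calc x' ⬝ᵥ v = ∑ l, x' l * v l := rfl
      _ ≤ ∑ l, x' l * v i0 := Finset.sum_le_sum fun l _ =>
          mul_le_mul_of_nonneg_left (hmax l) (hx'.1 l)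
      _ = v i0 := by rw [← Finset.sum_mul, hx'.2, one_mul]
      _ = x ⬝ᵥ v := hxval.symm

lemma dot_flip {m n : ℕ} (B : Matrix (Fin m) (Fin n) ℝ) (x : Fin m → ℝ)
    (y' : Fin n → ℝ) : x ⬝ᵥ (B *ᵥ y') = y' ⬝ᵥ (Bᵀ *ᵥ x) := by
  rw [dotProduct_mulVec, mulVec_transpose, dotProduct_comm]

/-- `(x, y) ∈ X × Y` is a Nash equilibrium of `(A, B)` iff `(x, y)` is completely
labeled, i.e. every label in `{1, …, m + n}` is a label of `x` or of `y`. -/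
theorem nash_iff_completely_labeled {m n : ℕ} (A B : Matrix (Fin m) (Fin n) ℝ)
    (x : Fin m → ℝ) (y : Fin n → ℝ) (hx : IsMixed x) (hy : IsMixed y) :
    IsNash A B x y ↔ ∀ l : Fin m ⊕ Fin n, hasLabelX B x l ∨ hasLabelY A y l := by
  have key1 := key (A *ᵥ y) x hx
  have key2 := key (Bᵀ *ᵥ x) y hy
  constructor
  · rintro ⟨-, -, h1, h2⟩ l
    have h2' : ∀ y' : Fin n → ℝ, IsMixed y' → y' ⬝ᵥ (Bᵀ *ᵥ x) ≤ y ⬝ᵥ (Bᵀ *ᵥ x) := by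
      intro y' hy'
      have := h2 y' hy'
      rwa [dot_flip, dot_flip B x y] at this
    cases l with
    | inl i =>
      rcases key1.mp h1 i with h | h
      · exact Or.inl h
      · exact Or.inr h
    | inr j =>
      rcases key2.mp h2' j with h | h
      · exact Or.inr h
      · exact Or.inl h
  · intro h
    refine ⟨hx, hy, key1.mpr ?_, ?_⟩
    · intro i
      rcases h (Sum.inl i) with h' | h'
      · exact Or.inl h'
      · exact Or.inr h'
    · have h2' : ∀ y' : Fin n → ℝ, IsMixed y' → y' ⬝ᵥ (Bᵀ *ᵥ x) ≤ y ⬝ᵥ (Bᵀ *ᵥ x) := by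
        apply key2.mpr
        intro j
        rcases h (Sum.inr j) with h' | h'
        · exact Or.inr h'
        · exact Or.inl h'
      intro y' hy'
      rw [dot_flip, dot_flip B x y]
      exact h2' y' hy'
end
end

section
/- Let (A,B) be an m×n bimatrix game. Then P is bounded (hence a polytope) if and only if max_j (Bᵀx)_j > 0 for every x ∈ X, and Q is bounded (hence a polytope) if and only if max_i (Ay)_i > 0 for every y ∈ Y. -/
open Matrix
open scoped Classical

noncomputable section

/-- The polyhedron `P = {x ∈ ℝ^m : x ≥ 0, Bᵀx ≤ 𝟙}`. -/
def Pset {m n : ℕ} (B : Matrix (Fin m) (Fin n) ℝ) : Set (Fin m → ℝ) :=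
  {x | (∀ i, 0 ≤ x i) ∧ ∀ j, (Bᵀ *ᵥ x) j ≤ 1}

/-- The polyhedron `Q = {y ∈ ℝ^n : Ay ≤ 𝟙, y ≥ 0}`. -/
def Qset {m n : ℕ} (A : Matrix (Fin m) (Fin n) ℝ) : Set (Fin n → ℝ) :=
  {y | (∀ i, (A *ᵥ y) i ≤ 1) ∧ ∀ j, 0 ≤ y j}

lemma bounded_iff_pos_aux {m n : ℕ} (M : Matrix (Fin n) (Fin m) ℝ) :
    Bornology.IsBounded {x : Fin m → ℝ | (∀ i, 0 ≤ x i) ∧ ∀ j, (M *ᵥ x) j ≤ 1} ↔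
      ∀ x : Fin m → ℝ, IsMixed x → ∃ j, 0 < (M *ᵥ x) j := by
  constructor
  · intro hb x hx
    by_contra hc
    push_neg at hc
    obtain ⟨R, hR⟩ := hb.subset_closedBall 0
    have hxn : 0 < ‖x‖ := by
      rw [norm_pos_iff]
      intro h0
      have h2 := hx.2
      rw [h0] at h2
      simp at h2
    set t : ℝ := (|R| + 1) / ‖x‖ with ht
    have htn : 0 ≤ t := div_nonneg (by positivity) hxn.le
    have hmem : t • x ∈ {x : Fin m → ℝ | (∀ i, 0 ≤ x i) ∧ ∀ j, (M *ᵥ x) j ≤ 1} := by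
      refine ⟨fun i => mul_nonneg htn (hx.1 i), fun j => ?_⟩
      rw [Matrix.mulVec_smul]
      have hj := hc j
      have : (t • (M *ᵥ x)) j = t * (M *ᵥ x) j := rfl
      rw [this]
      nlinarith
    have h1 := hR hmem
    rw [Metric.mem_closedBall, dist_zero_right, norm_smul, Real.norm_of_nonneg htn,
      ht, div_mul_cancel₀ _ hxn.ne'] at h1
    have := le_abs_self R
    linarith
  · intro hpos
    rcases isEmpty_or_nonempty (Fin m) with hm | hm
    · haveI : Subsingleton (Fin m → ℝ) := ⟨fun a b => funext fun i => (hm.false i).elim⟩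
      have hsub : {x : Fin m → ℝ | (∀ i, 0 ≤ x i) ∧ ∀ j, (M *ᵥ x) j ≤ 1} ⊆ {0} :=
        fun x _ => Subsingleton.elim x 0
      exact Bornology.isBounded_singleton.subset hsub
    · have hm0 : (m : ℝ) ≠ 0 := by
        have : 0 < m := Fin.pos_iff_nonempty.mpr hm
        exact_mod_cast this.ne'
      have hxmix : IsMixed (fun _ : Fin m => (m : ℝ)⁻¹) := by
        refine ⟨fun i => by positivity, ?_⟩
        simp [Finset.sum_const, Finset.card_univ]
        field_simp
      obtain ⟨j0, _⟩ := hpos _ hxmix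
      have hn : Nonempty (Fin n) := ⟨j0⟩
      set h : (Fin m → ℝ) → ℝ := fun x => ∑ j, max ((M *ᵥ x) j) 0 with hh
      have hMc : ∀ j, Continuous fun x : Fin m → ℝ => (M *ᵥ x) j := by
        intro j
        simp only [Matrix.mulVec, dotProduct]
        exact continuous_finset_sum _ fun k _ => (continuous_const.mul (continuous_apply k))
      have hcont : Continuous h :=
        continuous_finset_sum _ fun j _ => ((hMc j).max continuous_const)
      have hsimplexmix : ∀ x : Fin m → ℝ, x ∈ stdSimplex ℝ (Fin m) ↔ IsMixed x := by
        intro x; rfl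
      have hne : (stdSimplex ℝ (Fin m)).Nonempty :=
        ⟨_, (hsimplexmix _).mpr hxmix⟩
      obtain ⟨x0, hx0mem, hx0min⟩ :=
        (isCompact_stdSimplex ℝ (Fin m)).exists_isMinOn hne hcont.continuousOn
      obtain ⟨j1, hj1⟩ := hpos x0 ((hsimplexmix x0).mp hx0mem)
      have hδ : 0 < h x0 := by
        have h1 : (M *ᵥ x0) j1 ≤ max ((M *ᵥ x0) j1) 0 := le_max_left _ _
        have h2 : max ((M *ᵥ x0) j1) 0 ≤ h x0 :=
          Finset.single_le_sum (f := fun j => max ((M *ᵥ x0) j) 0)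
            (fun j _ => le_max_right _ _) (Finset.mem_univ j1)
        linarith
      set δ : ℝ := h x0 with hδdef
      -- the set is contained in the closed ball of radius n/δ
      have hsub : {x : Fin m → ℝ | (∀ i, 0 ≤ x i) ∧ ∀ j, (M *ᵥ x) j ≤ 1} ⊆
          Metric.closedBall 0 (n / δ) := by
        intro x hx
        rw [Metric.mem_closedBall, dist_zero_right]
        have hnd : (0:ℝ) ≤ n / δ := by positivity
        rw [pi_norm_le_iff_of_nonneg hnd]
        intro i
        rw [Real.norm_of_nonneg (hx.1 i)]
        -- show x i ≤ s ≤ n / δ where s = ∑ x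
        set s : ℝ := ∑ k, x k with hs
        have hxis : x i ≤ s :=
          Finset.single_le_sum (fun k _ => hx.1 k) (Finset.mem_univ i)
        have hsnn : 0 ≤ s := Finset.sum_nonneg (fun k _ => hx.1 k)
        rcases eq_or_lt_of_le hsnn with hs0 | hspos
        · have : x i ≤ 0 := le_trans hxis hs0.symm.le
          have := hx.1 i
          have hxi0 : x i = 0 := le_antisymm ‹x i ≤ 0› ‹0 ≤ x i›
          rw [hxi0]; positivity
        · -- normalized vector is mixed
          have hzmix : IsMixed (s⁻¹ • x) := by
            refine ⟨fun k => mul_nonneg (inv_nonneg.mpr hsnn) (hx.1 k), ?_⟩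
            simp only [Pi.smul_apply, smul_eq_mul, ← Finset.mul_sum]
            rw [← hs, inv_mul_cancel₀ hspos.ne']
          have hzsimplex : s⁻¹ • x ∈ stdSimplex ℝ (Fin m) := (hsimplexmix _).mpr hzmix
          have hz : δ ≤ h (s⁻¹ • x) := hx0min hzsimplex
          -- find j with max ((M z) j) 0 ≥ δ / n
          have hexj : ∃ j, δ / n ≤ max ((M *ᵥ (s⁻¹ • x)) j) 0 := by
            by_contra hcj
            push_neg at hcj
            have : h (s⁻¹ • x) < ∑ _j : Fin n, δ / n :=
              Finset.sum_lt_sum_of_nonempty Finset.univ_nonempty (fun j _ => hcj j)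
            rw [Finset.sum_const, Finset.card_univ, Fintype.card_fin, nsmul_eq_mul] at this
            have hn0 : (n : ℝ) ≠ 0 := by
              have : 0 < n := Fin.pos_iff_nonempty.mpr hn
              exact_mod_cast this.ne'
            rw [mul_div_cancel₀ _ hn0] at this
            linarith
          obtain ⟨j, hj⟩ := hexj
          have hδn : 0 < δ / n := by
            have : 0 < n := Fin.pos_iff_nonempty.mpr hn
            positivity
          have hjval : δ / n ≤ (M *ᵥ (s⁻¹ • x)) j := by
            rcases le_max_iff.mp hj with h' | h'
            · exact h'
            · linarith
          have hscale : (M *ᵥ (s⁻¹ • x)) j = s⁻¹ * (M *ᵥ x) j := by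
            rw [Matrix.mulVec_smul]; rfl
          rw [hscale] at hjval
          have hMx1 := hx.2 j
          -- s * (δ/n) ≤ (M x) j ≤ 1
          have hn0 : (n : ℝ) ≠ 0 := by
            have : 0 < n := Fin.pos_iff_nonempty.mpr hn
            exact_mod_cast this.ne'
          have hkey : s * (δ / n) ≤ (M *ᵥ x) j := by
            have h' := mul_le_mul_of_nonneg_left hjval hsnn
            rwa [← mul_assoc, mul_inv_cancel₀ hspos.ne', one_mul] at h'
          have hsle : s ≤ n / δ := by
            rw [le_div_iff₀ hδ]
            calc s * δ = s * (δ / n) * n := by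
                  rw [mul_assoc, div_mul_cancel₀ _ hn0]
              _ ≤ 1 * n := by
                  have hnn : (0:ℝ) ≤ n := Nat.cast_nonneg n
                  nlinarith
              _ = n := one_mul _
          linarith
      exact Metric.isBounded_closedBall.subset hsub

/-- `P` is bounded iff the best-response payoff `max_j (Bᵀx)_j` to every mixed strategy
`x ∈ X` is positive, and `Q` is bounded iff the best-response payoff `max_i (Ay)_i` to
every mixed strategy `y ∈ Y` is positive. -/
theorem polytope_iff_positive_bestresponse_payoff {m n : ℕ}
    (A B : Matrix (Fin m) (Fin n) ℝ) :
    (Bornology.IsBounded (Pset B) ↔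
      ∀ x : Fin m → ℝ, IsMixed x → ∃ j, 0 < (Bᵀ *ᵥ x) j) ∧
    (Bornology.IsBounded (Qset A) ↔
      ∀ y : Fin n → ℝ, IsMixed y → ∃ i, 0 < (A *ᵥ y) i) := by
  constructor
  · exact bounded_iff_pos_aux Bᵀ
  · have hQ : Qset A = {y : Fin n → ℝ | (∀ j, 0 ≤ y j) ∧ ∀ i, (A *ᵥ y) i ≤ 1} := by
      ext y; exact and_comm
    rw [hQ]
    exact bounded_iff_pos_aux A
end
end

section
/- Let c_0, c_1, …, c_d ∈ ℝ^d and q_0, q_1, …, q_d ∈ ℝ, and let x, y ∈ ℝ^d satisfy: c_0ᵀx < q_0 and c_0ᵀy = q_0; c_1ᵀx = q_1 and c_1ᵀy < q_1; and c_iᵀx = q_i and c_iᵀy = q_i for all i = 2,…,d. Assume the vectors c_1, c_2, …, c_d are linearly independent and the vectors c_0, c_2, …, c_d are linearly independent. Then sign(det[c_1 c_2 ⋯ c_d]) = −sign(det[c_0 c_2 ⋯ c_d]) ≠ 0, where [v_1 ⋯ v_d] denotes the d×d matrix with columns v_1,…,v_d. -/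
open Matrix
open scoped Classical

noncomputable section

/-- **Pivoting changes sign.**  Let `x` and `y` be the endpoints of an edge of a
nondegenerate polytope, defined by the `d - 1` binding inequalities
`c_iᵀ z = q_i` (`i = 2, …, d`), with additional binding inequality `c_1ᵀ x = q_1`
at `x` and `c_0ᵀ y = q_0` at `y`.  Then
`sign det[c_1 c_2 ⋯ c_d] = - sign det[c_0 c_2 ⋯ c_d] ≠ 0`. -/
theorem pivoting_changes_sign {d : ℕ}
    (c : Fin (d + 1) → Fin d → ℝ) (q : Fin (d + 1) → ℝ) (x y : Fin d → ℝ)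
    (hx0 : c 0 ⬝ᵥ x < q 0) (hy0 : c 0 ⬝ᵥ y = q 0)
    (hx1 : c 1 ⬝ᵥ x = q 1) (hy1 : c 1 ⬝ᵥ y < q 1)
    (hxi : ∀ i : Fin (d + 1), 2 ≤ (i : ℕ) → c i ⬝ᵥ x = q i)
    (hyi : ∀ i : Fin (d + 1), 2 ≤ (i : ℕ) → c i ⬝ᵥ y = q i)
    (hli1 : LinearIndependent ℝ (fun j : Fin d => c j.succ))
    (hli0 : LinearIndependent ℝ (fun j : Fin d => if (j : ℕ) = 0 then c 0 else c j.succ)) :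
    Real.sign (Matrix.of fun r j : Fin d => c j.succ r).det =
      - Real.sign (Matrix.of fun r j : Fin d =>
          if (j : ℕ) = 0 then c 0 r else c j.succ r).det ∧
    (Matrix.of fun r j : Fin d => if (j : ℕ) = 0 then c 0 r else c j.succ r).det ≠ 0 := by
  cases d with
  | zero =>
      exfalso
      have h1 : (1 : Fin 1) = 0 := rfl
      rw [h1] at hx1
      exact absurd hx1 (ne_of_lt hx0)
  | succ n =>
    set A : Matrix (Fin (n+1)) (Fin (n+1)) ℝ :=
      Matrix.of fun r j => c j.succ r with hA
    set B : Matrix (Fin (n+1)) (Fin (n+1)) ℝ :=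
      Matrix.of fun r j => if (j : ℕ) = 0 then c 0 r else c j.succ r with hB
    have hBeq : B = A.updateCol 0 (c 0) := by
      ext r j
      by_cases h : j = 0
      · subst h; simp [hB, Matrix.updateCol_apply]
      · have h' : (j : ℕ) ≠ 0 := fun hh => h (Fin.ext hh)
        simp [hB, hA, Matrix.updateCol_apply, h, h']
    have hdetB : B.det ≠ 0 := by
      have hu : IsUnit B := by
        rw [← Matrix.linearIndependent_cols_iff_isUnit]
        have : (fun j : Fin (n+1) => Bᵀ j)
            = fun j : Fin (n+1) => if (j : ℕ) = 0 then c 0 else c j.succ := by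
          funext j
          by_cases h : (j : ℕ) = 0 <;> funext r <;> simp_all [hB, Matrix.transpose_apply]
        rw [show B.col = fun j => Bᵀ j from rfl, this]
        exact hli0
      simpa using ((Matrix.isUnit_iff_isUnit_det B).mp hu).ne_zero
    set z : Fin (n+1) → ℝ := x - y with hz
    have hsub : ∀ i : Fin (n+2), c i ⬝ᵥ z = c i ⬝ᵥ x - c i ⬝ᵥ y := by
      intro i; simp [hz, dotProduct_sub]
    have ht1 : 0 < c 1 ⬝ᵥ z := by rw [hsub, hx1]; linarith
    have ht0 : c 0 ⬝ᵥ z < 0 := by rw [hsub, hy0]; linarith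
    have hti : ∀ j : Fin (n+1), j ≠ 0 → c j.succ ⬝ᵥ z = 0 := by
      intro j hj
      have hpos : 0 < (j : ℕ) := Fin.pos_of_ne_zero hj
      have h2 : 2 ≤ ((j.succ : Fin (n+2)) : ℕ) := by
        simp [Fin.val_succ]; omega
      rw [hsub, hxi _ h2, hyi _ h2, sub_self]
    have hsucc0 : (0 : Fin (n+1)).succ = (1 : Fin (n+2)) := by
      apply Fin.ext; simp
    have key : B.det * (c 1 ⬝ᵥ z) = A.det * (c 0 ⬝ᵥ z) := by
      have h1 : A *ᵥ (Matrix.cramer A (c 0)) = A.det • (c 0) :=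
        Matrix.mulVec_cramer A (c 0)
      have h2 : z ⬝ᵥ (A *ᵥ Matrix.cramer A (c 0)) = z ⬝ᵥ (A.det • c 0) := by rw [h1]
      rw [Matrix.dotProduct_mulVec] at h2
      have hR : z ⬝ᵥ (A.det • c 0) = A.det * (c 0 ⬝ᵥ z) := by
        rw [dotProduct_smul, smul_eq_mul, dotProduct_comm]
      have hL : (z ᵥ* A) ⬝ᵥ Matrix.cramer A (c 0) = B.det * (c 1 ⬝ᵥ z) := by
        unfold dotProduct
        rw [Finset.sum_eq_single (0 : Fin (n+1))]
        · have hv : (z ᵥ* A) 0 = c 1 ⬝ᵥ z := by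
            simp only [Matrix.vecMul, dotProduct, hA, Matrix.of_apply, hsucc0]
            exact Finset.sum_congr rfl fun i _ => mul_comm _ _
          have hc : Matrix.cramer A (c 0) 0 = B.det := by
            rw [Matrix.cramer_apply, ← hBeq]
          rw [hv, hc, mul_comm]
          rfl
        · intro j _ hj
          have hv : (z ᵥ* A) j = c j.succ ⬝ᵥ z := by
            simp only [Matrix.vecMul, dotProduct, hA, Matrix.of_apply]
            exact Finset.sum_congr rfl fun i _ => mul_comm _ _
          rw [hv, hti j hj, zero_mul]
        · intro h; exact absurd (Finset.mem_univ _) h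
      rw [hL, hR] at h2
      exact h2
    have hdetA : A.det ≠ 0 := by
      intro h
      rw [h, zero_mul] at key
      exact hdetB (by
        have := mul_eq_zero.mp key
        rcases this with h' | h'
        · exact h'
        · exact absurd h' (ne_of_gt ht1))
    refine ⟨?_, hdetB⟩
    rcases lt_trichotomy A.det 0 with hAn | hA0 | hAp
    · have hBp : 0 < B.det := by nlinarith
      rw [Real.sign_of_neg hAn, Real.sign_of_pos hBp]
    · exact absurd hA0 hdetA
    · have hBn : B.det < 0 := by nlinarith
      rw [Real.sign_of_pos hAp, Real.sign_of_neg hBn]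
      ring
end
end

section
/- Let (A,B) be an m×n bimatrix game such that P and Q are bounded. Then (A,B) is nondegenerate if and only if no point of P has more than m labels and no point of Q has more than n labels. -/
open Matrix
open scoped Classical

noncomputable section

/-- The labels of a point `x ∈ P`: label `i` (encoded `Sum.inl i`) if `x i = 0`, and
label `m + j` (encoded `Sum.inr j`) if `(Bᵀx)_j = 1`. -/
def labelsP {m n : ℕ} (B : Matrix (Fin m) (Fin n) ℝ) (x : Fin m → ℝ) :
    Finset (Fin m ⊕ Fin n) :=
  Finset.univ.filter (Sum.elim (fun i => x i = 0) (fun j => (Bᵀ *ᵥ x) j = 1))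

/-- The labels of a point `y ∈ Q`: label `i` (encoded `Sum.inl i`) if `(Ay)_i = 1`,
and label `m + j` (encoded `Sum.inr j`) if `y j = 0`. -/
def labelsQ {m n : ℕ} (A : Matrix (Fin m) (Fin n) ℝ) (y : Fin n → ℝ) :
    Finset (Fin m ⊕ Fin n) :=
  Finset.univ.filter (Sum.elim (fun i => (A *ᵥ y) i = 1) (fun j => y j = 0))

/-- Counting a filter over a sum type splits into the two components. -/
lemma card_filter_elim {α β : Type*} [Fintype α] [Fintype β]
    (p : α → Prop) (q : β → Prop) :
    (Finset.univ.filter (Sum.elim p q)).card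
      = (Finset.univ.filter p).card + (Finset.univ.filter q).card := by
  have hL : (Finset.univ.filter (Sum.elim p q)).toLeft = Finset.univ.filter p := by
    ext a; simp
  have hR : (Finset.univ.filter (Sum.elim p q)).toRight = Finset.univ.filter q := by
    ext b; simp
  rw [← Finset.card_toLeft_add_card_toRight, hL, hR]

/-- For a nonnegative vector, the zero coordinates and the support partition `Fin b`. -/
lemma card_zero_add_card_supp {b : ℕ} (x : Fin b → ℝ) (hx : ∀ i, 0 ≤ x i) :
    (Finset.univ.filter fun i => x i = 0).card + (supp x).card = b := by
  have h : (Finset.univ.filter fun i => x i = 0)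
      = Finset.univ.filter fun i => ¬ 0 < x i := by
    ext i
    simp only [Finset.mem_filter, Finset.mem_univ, true_and, not_lt]
    constructor
    · intro h; rw [h]
    · intro h; exact le_antisymm h (hx i)
  rw [h, supp, Nat.add_comm]
  rw [Finset.card_filter_add_card_filter_not]
  simp

/-- Key one-sided lemma: square-free form of the equivalence for a single matrix. -/
lemma key_s10 {a b : ℕ} (M : Matrix (Fin a) (Fin b) ℝ)
    (hbdd : Bornology.IsBounded {x : Fin b → ℝ | (∀ i, 0 ≤ x i) ∧ ∀ j, (M *ᵥ x) j ≤ 1}) :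
    (∀ x : Fin b → ℝ, IsMixed x →
        (bestresp1 M x).card ≤ (supp x).card)
      ↔ ∀ x : Fin b → ℝ, (∀ i, 0 ≤ x i) → (∀ j, (M *ᵥ x) j ≤ 1) →
          (Finset.univ.filter fun i => x i = 0).card
            + (Finset.univ.filter fun j => (M *ᵥ x) j = 1).card ≤ b := by
  constructor
  · -- nondegeneracy (one side) implies the label bound
    intro hnd x hx hMx
    have hsupp := card_zero_add_card_supp x hx
    by_cases hs : ∀ i, x i = 0
    · have hx0 : x = 0 := funext hs
      have h2 : (Finset.univ.filter fun j => (M *ᵥ x) j = 1) = ∅ := by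
        ext j
        simp only [Finset.mem_filter, Finset.mem_univ, true_and, Finset.notMem_empty,
          iff_false, hx0]
        simp [Matrix.mulVec_zero]
      rw [h2, Finset.card_empty]
      omega
    · push_neg at hs
      obtain ⟨i0, hi0⟩ := hs
      have hxpos : 0 < x i0 := lt_of_le_of_ne (hx i0) (Ne.symm hi0)
      have hssum : 0 < ∑ i, x i :=
        Finset.sum_pos' (fun i _ => hx i) ⟨i0, Finset.mem_univ _, hxpos⟩
      set s : ℝ := ∑ i, x i with hsdef
      have hsne : s ≠ 0 := ne_of_gt hssum
      have hmix : IsMixed (s⁻¹ • x) := by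
        constructor
        · intro i
          exact mul_nonneg (inv_nonneg.2 hssum.le) (hx i)
        · simp only [Pi.smul_apply, smul_eq_mul, ← Finset.mul_sum]
          field_simp
          exact hsdef.symm
      have hbr := hnd (s⁻¹ • x) hmix
      have hsupp' : supp (s⁻¹ • x) = supp x := by
        ext i
        simp only [supp, Finset.mem_filter, Finset.mem_univ, true_and, Pi.smul_apply,
          smul_eq_mul]
        constructor
        · intro h
          by_contra hneg
          push_neg at hneg
          have hle : x i ≤ 0 := hneg
          nlinarith [inv_pos.2 hssum]
        · intro h
          exact mul_pos (inv_pos.2 hssum) h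
      have hbrset : bestresp1 M (s⁻¹ • x) = bestresp1 M x := by
        ext j
        simp only [bestresp1, Finset.mem_filter, Finset.mem_univ, true_and,
          Matrix.mulVec_smul, Pi.smul_apply, smul_eq_mul]
        constructor
        · intro h k
          have := h k
          have hipos : 0 < s⁻¹ := inv_pos.2 hssum
          nlinarith
        · intro h k
          have hinn : 0 ≤ s⁻¹ := (inv_pos.2 hssum).le
          exact mul_le_mul_of_nonneg_left (h k) hinn
      rw [hsupp', hbrset] at hbr
      -- the set of tight constraints is contained in the best responses
      have hsub : (Finset.univ.filter fun j => (M *ᵥ x) j = 1)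
          ⊆ bestresp1 M x := by
        intro j hj
        simp only [bestresp1, Finset.mem_filter, Finset.mem_univ, true_and] at hj ⊢
        intro k
        rw [hj]
        exact hMx k
      have := Finset.card_le_card hsub
      omega
  · -- the label bound implies nondegeneracy (one side)
    intro hlab x hmix
    obtain ⟨hx, hsum⟩ := hmix
    -- x has a positive coordinate
    have hxne : ∃ i, 0 < x i := by
      by_contra h
      push_neg at h
      have : ∀ i, x i = 0 := fun i => le_antisymm (h i) (hx i)
      rw [Finset.sum_congr rfl (fun i _ => this i)] at hsum
      simp at hsum
    obtain ⟨i0, hi0⟩ := hxne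
    -- boundedness forces a positive component of M *ᵥ x
    have hpos : ∃ j, 0 < (M *ᵥ x) j := by
      by_contra h
      push_neg at h
      obtain ⟨C, hC⟩ := isBounded_iff_forall_norm_le.1 hbdd
      have h0 : (0 : Fin b → ℝ) ∈ {x : Fin b → ℝ | (∀ i, 0 ≤ x i) ∧ ∀ j, (M *ᵥ x) j ≤ 1} := by
        constructor
        · intro i; simp
        · intro j; simp [Matrix.mulVec_zero]
      have hC0 : 0 ≤ C := by
        have := hC 0 h0
        simpa using this
      set t : ℝ := (C + 1) / x i0 with htdef
      have ht : 0 ≤ t := div_nonneg (by linarith) hi0.le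
      have hmem : t • x ∈ {x : Fin b → ℝ | (∀ i, 0 ≤ x i) ∧ ∀ j, (M *ᵥ x) j ≤ 1} := by
        constructor
        · intro i
          exact mul_nonneg ht (hx i)
        · intro j
          rw [Matrix.mulVec_smul]
          have : t * (M *ᵥ x) j ≤ 0 := mul_nonpos_of_nonneg_of_nonpos ht (h j)
          simp only [Pi.smul_apply, smul_eq_mul]
          linarith
      have hnorm := hC _ hmem
      have habs : |(t • x) i0| ≤ ‖t • x‖ := norm_le_pi_norm (t • x) i0
      have hcoord : (t • x) i0 = C + 1 := by
        simp only [Pi.smul_apply, smul_eq_mul, htdef]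
        field_simp
      rw [hcoord] at habs
      rw [abs_of_nonneg (by linarith : (0:ℝ) ≤ C + 1)] at habs
      linarith
    obtain ⟨j0, hj0⟩ := hpos
    obtain ⟨jm, _, hjm⟩ := Finset.exists_max_image Finset.univ (fun j => (M *ᵥ x) j)
      ⟨j0, Finset.mem_univ j0⟩
    set v : ℝ := (M *ᵥ x) jm with hvdef
    have hv : 0 < v := lt_of_lt_of_le hj0 (hjm j0 (Finset.mem_univ j0))
    have hvinv : 0 < v⁻¹ := inv_pos.2 hv
    set x' : Fin b → ℝ := v⁻¹ • x with hx'def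
    have hmem' : (∀ i, 0 ≤ x' i) ∧ ∀ j, (M *ᵥ x') j ≤ 1 := by
      constructor
      · intro i
        exact mul_nonneg hvinv.le (hx i)
      · intro j
        rw [hx'def, Matrix.mulVec_smul]
        simp only [Pi.smul_apply, smul_eq_mul]
        have := hjm j (Finset.mem_univ j)
        rw [← mul_inv_cancel₀ (ne_of_gt hv), mul_comm v v⁻¹]
        exact mul_le_mul_of_nonneg_left this hvinv.le
    have hb := hlab x' hmem'.1 hmem'.2
    have hz : (Finset.univ.filter fun i => x' i = 0)
        = Finset.univ.filter fun i => x i = 0 := by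
      ext i
      simp only [Finset.mem_filter, Finset.mem_univ, true_and, hx'def, Pi.smul_apply,
        smul_eq_mul]
      constructor
      · intro h
        rcases mul_eq_zero.1 h with h' | h'
        · exact absurd h' (ne_of_gt hvinv)
        · exact h'
      · intro h; rw [h, mul_zero]
    have hone : (Finset.univ.filter fun j => (M *ᵥ x') j = 1)
        = bestresp1 M x := by
      ext j
      simp only [bestresp1, Finset.mem_filter, Finset.mem_univ, true_and, hx'def,
        Matrix.mulVec_smul, Pi.smul_apply, smul_eq_mul]
      constructor
      · intro h k
        have hjv : (M *ᵥ x) j = v := by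
          field_simp at h
          linarith [h]
        rw [hjv]
        exact hjm k (Finset.mem_univ k)
      · intro h
        have h1 : (M *ᵥ x) j ≤ v := hjm j (Finset.mem_univ j)
        have h2 : v ≤ (M *ᵥ x) j := h jm
        have : (M *ᵥ x) j = v := le_antisymm h1 h2
        rw [this]
        exact inv_mul_cancel₀ (ne_of_gt hv)
    rw [hz, hone] at hb
    have hsupp := card_zero_add_card_supp x hx
    omega

/-- If `P` and `Q` are bounded, then `(A,B)` is nondegenerate iff no point of `P` has
more than `m` labels and no point of `Q` has more than `n` labels. -/
theorem nondegenerate_iff_polytope_labels {m n : ℕ} (A B : Matrix (Fin m) (Fin n) ℝ)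
    (hP : Bornology.IsBounded (Pset B)) (hQ : Bornology.IsBounded (Qset A)) :
    Nondegenerate A B ↔
      (∀ x ∈ Pset B, (labelsP B x).card ≤ m) ∧
      (∀ y ∈ Qset A, (labelsQ A y).card ≤ n) := by
  have hQ' : Bornology.IsBounded {y : Fin n → ℝ | (∀ j, 0 ≤ y j) ∧ ∀ i, (A *ᵥ y) i ≤ 1} := by
    have h : {y : Fin n → ℝ | (∀ j, 0 ≤ y j) ∧ ∀ i, (A *ᵥ y) i ≤ 1} = Qset A := by
      ext y; exact and_comm
    rwa [h]
  have hbr : ∀ x : Fin m → ℝ, bestresp2 B x = bestresp1 Bᵀ x := fun _ => rfl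
  have k1 := key_s10 Bᵀ hP
  have k2 := key_s10 A hQ'
  constructor
  · rintro ⟨h1, h2⟩
    simp only [hbr] at h1
    refine ⟨fun x hx => ?_, fun y hy => ?_⟩
    · rw [labelsP, card_filter_elim]
      exact k1.mp h1 x hx.1 hx.2
    · rw [labelsQ, card_filter_elim, Nat.add_comm]
      exact k2.mp h2 y hy.2 hy.1
  · rintro ⟨h1, h2⟩
    constructor
    · intro x hmx
      rw [hbr]
      revert hmx
      revert x
      apply k1.mpr
      intro x hx hMx
      have := h1 x ⟨hx, hMx⟩
      rwa [labelsP, card_filter_elim] at this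
    · intro y hmy
      revert hmy
      revert y
      apply k2.mpr
      intro y hy hMy
      have := h2 y ⟨hMy, hy⟩
      rwa [labelsQ, card_filter_elim, Nat.add_comm] at this
end
end

section
/- Let (A,B) be an m×n bimatrix game such that P and Q are bounded, let d = m+n, and let C be the d×d block matrix C = [[0, A], [Bᵀ, 0]]. Then (A,B) is nondegenerate if and only if the d×d bimatrix game (C, Cᵀ) is nondegenerate. -/
open Matrix
open scoped Classical

noncomputable section

/-- The set of indices at which `v` attains its maximum. -/
def brS {ι : Type*} [Fintype ι] (v : ι → ℝ) : Finset ι :=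
  Finset.univ.filter fun i => ∀ k, v k ≤ v i

lemma pos_of_bounded {ι κ : Type*} [Fintype ι] [Fintype κ] (M : Matrix ι κ ℝ)
    (hb : Bornology.IsBounded {w : κ → ℝ | (∀ j, 0 ≤ w j) ∧ ∀ i, (M *ᵥ w) i ≤ 1})
    (w : κ → ℝ) (hw : ∀ j, 0 ≤ w j) (hw0 : w ≠ 0) : ∃ i, 0 < (M *ᵥ w) i := by
  by_contra h
  push_neg at h
  obtain ⟨r, hr⟩ := hb.subset_closedBall 0
  obtain ⟨j, hj⟩ : ∃ j, 0 < w j := by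
    by_contra h'
    push_neg at h'
    exact hw0 (funext fun j => le_antisymm (h' j) (hw j))
  set t : ℝ := (max r 0 + 1) / w j with ht
  have htpos : 0 ≤ t := div_nonneg (by positivity) hj.le
  have hmem : t • w ∈ {w : κ → ℝ | (∀ j, 0 ≤ w j) ∧ ∀ i, (M *ᵥ w) i ≤ 1} := by
    refine ⟨fun k => mul_nonneg htpos (hw k), fun i => ?_⟩
    rw [mulVec_smul]
    have h0 : t * (M *ᵥ w) i ≤ 0 := mul_nonpos_of_nonneg_of_nonpos htpos (h i)
    simpa using h0.trans zero_le_one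
  have h1 : ‖t • w‖ ≤ r := by
    simpa [dist_eq_norm] using Metric.mem_closedBall.mp (hr hmem)
  have h2 : (t • w) j = max r 0 + 1 := by
    simp only [Pi.smul_apply, smul_eq_mul, ht]
    field_simp
  have h3 : ‖(t • w) j‖ ≤ ‖t • w‖ := norm_le_pi_norm _ j
  rw [h2] at h3
  have : max r 0 + 1 ≤ r := le_trans (le_trans (le_abs_self _) h3) h1
  have := le_max_left r 0
  linarith

lemma supp_smul_pos {ι : Type*} [Fintype ι] {c : ℝ} (hc : 0 < c) (w : ι → ℝ) :
    supp (c • w) = supp w := by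
  ext i
  simp only [supp, Finset.mem_filter, Finset.mem_univ, true_and, Pi.smul_apply, smul_eq_mul]
  constructor <;> intro h
  · nlinarith
  · positivity

lemma brS_smul_pos {ι : Type*} [Fintype ι] {c : ℝ} (hc : 0 < c) (v : ι → ℝ) :
    brS (c • v) = brS v := by
  ext i
  simp only [brS, Finset.mem_filter, Finset.mem_univ, true_and, Pi.smul_apply, smul_eq_mul]
  constructor <;> intro h k
  · exact le_of_mul_le_mul_left (h k) hc
  · exact mul_le_mul_of_nonneg_left (h k) hc.le

lemma supp_sum_card {m n : ℕ} (z : Fin m ⊕ Fin n → ℝ) :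
    (supp z).card = (supp (z ∘ Sum.inl)).card + (supp (z ∘ Sum.inr)).card := by
  have h : supp z = (supp (z ∘ Sum.inl)).disjSum (supp (z ∘ Sum.inr)) := by
    ext k
    cases k <;> simp [supp]
  rw [h, Finset.card_disjSum]

lemma mulVec_block_inl {m n : ℕ} (A B : Matrix (Fin m) (Fin n) ℝ)
    (z : Fin m ⊕ Fin n → ℝ) (i : Fin m) :
    (Matrix.fromBlocks 0 A Bᵀ 0 *ᵥ z) (Sum.inl i) = (A *ᵥ (z ∘ Sum.inr)) i := by
  simp [mulVec, dotProduct, Fintype.sum_sum_type, fromBlocks]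

lemma mulVec_block_inr {m n : ℕ} (A B : Matrix (Fin m) (Fin n) ℝ)
    (z : Fin m ⊕ Fin n → ℝ) (j : Fin n) :
    (Matrix.fromBlocks 0 A Bᵀ 0 *ᵥ z) (Sum.inr j) = (Bᵀ *ᵥ (z ∘ Sum.inl)) j := by
  simp [mulVec, dotProduct, Fintype.sum_sum_type, fromBlocks]

/-- Let `P` and `Q` be bounded and let `C` be the `(m+n) × (m+n)` block matrix
`C = [[0, A], [Bᵀ, 0]]`.  Then `(A, B)` is nondegenerate iff the symmetric game
`(C, Cᵀ)` is nondegenerate. -/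
theorem nondegenerate_iff_symmetrized_nondegenerate {m n : ℕ}
    (A B : Matrix (Fin m) (Fin n) ℝ)
    (hP : Bornology.IsBounded (Pset B)) (hQ : Bornology.IsBounded (Qset A)) :
    Nondegenerate A B ↔
      Nondegenerate (Matrix.fromBlocks 0 A Bᵀ 0) (Matrix.fromBlocks 0 A Bᵀ 0)ᵀ := by
  set C : Matrix (Fin m ⊕ Fin n) (Fin m ⊕ Fin n) ℝ := Matrix.fromBlocks 0 A Bᵀ 0 with hC
  -- positivity facts from boundedness
  have posB : ∀ x : Fin m → ℝ, (∀ i, 0 ≤ x i) → x ≠ 0 → ∃ j, 0 < (Bᵀ *ᵥ x) j :=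
    pos_of_bounded Bᵀ hP
  have posA : ∀ y : Fin n → ℝ, (∀ j, 0 ≤ y j) → y ≠ 0 → ∃ i, 0 < (A *ᵥ y) i := by
    refine pos_of_bounded A ?_
    have hset : Qset A = {w : Fin n → ℝ | (∀ j, 0 ≤ w j) ∧ ∀ i, (A *ᵥ w) i ≤ 1} := by
      ext w; exact and_comm
    rw [← hset]; exact hQ
  -- bridge lemmas
  have hbr1 : ∀ y : Fin n → ℝ, bestresp1 A y = brS (A *ᵥ y) := fun _ => rfl
  have hbr2 : ∀ x : Fin m → ℝ, bestresp2 B x = brS (Bᵀ *ᵥ x) := fun _ => rfl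
  have hbrC1 : ∀ z : Fin m ⊕ Fin n → ℝ, bestresp1 C z = brS (C *ᵥ z) := fun _ => rfl
  have hbrC2 : ∀ z : Fin m ⊕ Fin n → ℝ, bestresp2 Cᵀ z = brS (C *ᵥ z) := by
    intro z
    simp [bestresp2, brS, Matrix.transpose_transpose]
  have hvl : ∀ (z : Fin m ⊕ Fin n → ℝ) (i : Fin m),
      (C *ᵥ z) (Sum.inl i) = (A *ᵥ (z ∘ Sum.inr)) i := fun z i => mulVec_block_inl A B z i
  have hvr : ∀ (z : Fin m ⊕ Fin n → ℝ) (j : Fin n),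
      (C *ᵥ z) (Sum.inr j) = (Bᵀ *ᵥ (z ∘ Sum.inl)) j := fun z j => mulVec_block_inr A B z j
  have hmemBrS : ∀ {ι : Type} [Fintype ι] (v : ι → ℝ) (i : ι),
      i ∈ brS v ↔ ∀ k, v k ≤ v i := by
    intro ι _ v i
    simp [brS]
  constructor
  · rintro ⟨hND1, hND2⟩
    -- scaled versions of nondegeneracy
    have key1 : ∀ x' : Fin m → ℝ, (∀ i, 0 ≤ x' i) → x' ≠ 0 →
        (brS (Bᵀ *ᵥ x')).card ≤ (supp x').card := by
      intro x' hx hx0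
      obtain ⟨i, hi⟩ : ∃ i, 0 < x' i := by
        by_contra h'
        push_neg at h'
        exact hx0 (funext fun i => le_antisymm (h' i) (hx i))
      have hc : 0 < ∑ i, x' i := Finset.sum_pos' (fun i _ => hx i) ⟨i, Finset.mem_univ i, hi⟩
      have hmix : IsMixed ((∑ i, x' i)⁻¹ • x') := by
        refine ⟨fun i => mul_nonneg (inv_nonneg.mpr hc.le) (hx i), ?_⟩
        simp only [Pi.smul_apply, smul_eq_mul, ← Finset.mul_sum]
        field_simp
      have h := hND1 _ hmix
      rwa [hbr2, mulVec_smul, brS_smul_pos (inv_pos.mpr hc), supp_smul_pos (inv_pos.mpr hc)]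
        at h
    have key2 : ∀ y' : Fin n → ℝ, (∀ j, 0 ≤ y' j) → y' ≠ 0 →
        (brS (A *ᵥ y')).card ≤ (supp y').card := by
      intro y' hy hy0
      obtain ⟨j, hj⟩ : ∃ j, 0 < y' j := by
        by_contra h'
        push_neg at h'
        exact hy0 (funext fun j => le_antisymm (h' j) (hy j))
      have hc : 0 < ∑ j, y' j := Finset.sum_pos' (fun j _ => hy j) ⟨j, Finset.mem_univ j, hj⟩
      have hmix : IsMixed ((∑ j, y' j)⁻¹ • y') := by
        refine ⟨fun j => mul_nonneg (inv_nonneg.mpr hc.le) (hy j), ?_⟩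
        simp only [Pi.smul_apply, smul_eq_mul, ← Finset.mul_sum]
        field_simp
      have h := hND2 _ hmix
      rwa [hbr1, mulVec_smul, brS_smul_pos (inv_pos.mpr hc), supp_smul_pos (inv_pos.mpr hc)]
        at h
    have hsym : ∀ z : Fin m ⊕ Fin n → ℝ, IsMixed z →
        (brS (C *ᵥ z)).card ≤ (supp z).card := by
      intro z hz
      have hsum : ∑ i, (z ∘ Sum.inl) i + ∑ j, (z ∘ Sum.inr) j = 1 := by
        rw [← hz.2, Fintype.sum_sum_type]
        rfl
      have hsplit : brS (C *ᵥ z) =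
          (Finset.univ.filter (fun i => Sum.inl i ∈ brS (C *ᵥ z))).disjSum
          (Finset.univ.filter (fun j => Sum.inr j ∈ brS (C *ᵥ z))) := by
        ext k
        cases k <;> simp
      have hLcard : (Finset.univ.filter (fun i => Sum.inl i ∈ brS (C *ᵥ z))).card
          ≤ (supp (z ∘ Sum.inr)).card := by
        by_cases hy0 : z ∘ Sum.inr = 0
        · have hLe : (Finset.univ.filter (fun i => Sum.inl i ∈ brS (C *ᵥ z))) = ∅ := by
            rw [Finset.eq_empty_iff_forall_notMem]
            intro i hiL
            have hiB : ∀ k, (C *ᵥ z) k ≤ (C *ᵥ z) (Sum.inl i) :=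
              (hmemBrS _ _).mp (Finset.mem_filter.mp hiL).2
            have hx0 : z ∘ Sum.inl ≠ 0 := by
              intro h0
              rw [h0, hy0] at hsum
              simp at hsum
            obtain ⟨j, hj⟩ := posB (z ∘ Sum.inl) (fun i => hz.1 (Sum.inl i)) hx0
            have h1 := hvr z j
            have h2 := hvl z i
            rw [hy0, mulVec_zero] at h2
            have h3 := hiB (Sum.inr j)
            rw [h1, h2] at h3
            simp at h3
            linarith
          simp [hLe]
        · have hsub : (Finset.univ.filter (fun i => Sum.inl i ∈ brS (C *ᵥ z)))
              ⊆ brS (A *ᵥ (z ∘ Sum.inr)) := by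
            intro i hiL
            have hiB : ∀ k, (C *ᵥ z) k ≤ (C *ᵥ z) (Sum.inl i) :=
              (hmemBrS _ _).mp (Finset.mem_filter.mp hiL).2
            rw [hmemBrS]
            intro k
            have h := hiB (Sum.inl k)
            rwa [hvl z k, hvl z i] at h
          exact le_trans (Finset.card_le_card hsub)
            (key2 _ (fun j => hz.1 (Sum.inr j)) hy0)
      have hRcard : (Finset.univ.filter (fun j => Sum.inr j ∈ brS (C *ᵥ z))).card
          ≤ (supp (z ∘ Sum.inl)).card := by
        by_cases hx0 : z ∘ Sum.inl = 0
        · have hRe : (Finset.univ.filter (fun j => Sum.inr j ∈ brS (C *ᵥ z))) = ∅ := by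
            rw [Finset.eq_empty_iff_forall_notMem]
            intro j hjR
            have hjB : ∀ k, (C *ᵥ z) k ≤ (C *ᵥ z) (Sum.inr j) :=
              (hmemBrS _ _).mp (Finset.mem_filter.mp hjR).2
            have hy0 : z ∘ Sum.inr ≠ 0 := by
              intro h0
              rw [h0, hx0] at hsum
              simp at hsum
            obtain ⟨i, hi⟩ := posA (z ∘ Sum.inr) (fun j => hz.1 (Sum.inr j)) hy0
            have h1 := hvl z i
            have h2 := hvr z j
            rw [hx0, mulVec_zero] at h2
            have h3 := hjB (Sum.inl i)
            rw [h1, h2] at h3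
            simp at h3
            linarith
          simp [hRe]
        · have hsub : (Finset.univ.filter (fun j => Sum.inr j ∈ brS (C *ᵥ z)))
              ⊆ brS (Bᵀ *ᵥ (z ∘ Sum.inl)) := by
            intro j hjR
            have hjB : ∀ k, (C *ᵥ z) k ≤ (C *ᵥ z) (Sum.inr j) :=
              (hmemBrS _ _).mp (Finset.mem_filter.mp hjR).2
            rw [hmemBrS]
            intro k
            have h := hjB (Sum.inr k)
            rwa [hvr z k, hvr z j] at h
          exact le_trans (Finset.card_le_card hsub)
            (key1 _ (fun i => hz.1 (Sum.inl i)) hx0)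
      calc (brS (C *ᵥ z)).card
          = (Finset.univ.filter (fun i => Sum.inl i ∈ brS (C *ᵥ z))).card
            + (Finset.univ.filter (fun j => Sum.inr j ∈ brS (C *ᵥ z))).card := by
            conv_lhs => rw [hsplit]
            rw [Finset.card_disjSum]
        _ ≤ (supp (z ∘ Sum.inr)).card + (supp (z ∘ Sum.inl)).card :=
            Nat.add_le_add hLcard hRcard
        _ = (supp z).card := by rw [supp_sum_card z]; omega
    exact ⟨fun z hz => by rw [hbrC2]; exact hsym z hz,
           fun z hz => by rw [hbrC1]; exact hsym z hz⟩
  · rintro ⟨hC1, _⟩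
    have hCz : ∀ z : Fin m ⊕ Fin n → ℝ, IsMixed z →
        (brS (C *ᵥ z)).card ≤ (supp z).card := by
      intro z hz
      have h := hC1 z hz
      rwa [hbrC2] at h
    constructor
    · intro x hx
      set z : Fin m ⊕ Fin n → ℝ := Sum.elim x 0 with hzd
      have hzl : z ∘ Sum.inl = x := rfl
      have hzr : z ∘ Sum.inr = (0 : Fin n → ℝ) := rfl
      have hzmix : IsMixed z := by
        constructor
        · rintro (i | j)
          · exact hx.1 i
          · exact le_refl 0
        · rw [Fintype.sum_sum_type]
          simp [hzd, hx.2]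
      have hx0 : x ≠ 0 := by
        intro h0
        have h := hx.2
        rw [h0] at h
        simp at h
      obtain ⟨j0, hj0⟩ := posB x hx.1 hx0
      have hmap : (bestresp2 B x).map ⟨Sum.inr, Sum.inr_injective⟩ ⊆ brS (C *ᵥ z) := by
        intro k hk
        obtain ⟨j, hj, rfl⟩ := Finset.mem_map.mp hk
        have hjB : ∀ k, (Bᵀ *ᵥ x) k ≤ (Bᵀ *ᵥ x) j := by simpa [bestresp2] using hj
        simp only [Function.Embedding.coeFn_mk]
        rw [hmemBrS]
        rintro (i | k')
        · rw [hvl z i, hvr z j, hzl, hzr, mulVec_zero]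
          simp only [Pi.zero_apply]
          exact le_trans hj0.le (hjB j0)
        · rw [hvr z k', hvr z j, hzl]
          exact hjB k'
      calc (bestresp2 B x).card
          = ((bestresp2 B x).map ⟨Sum.inr, Sum.inr_injective⟩).card := (Finset.card_map _).symm
        _ ≤ (brS (C *ᵥ z)).card := Finset.card_le_card hmap
        _ ≤ (supp z).card := hCz z hzmix
        _ = (supp x).card := by
            rw [supp_sum_card z, hzl, hzr]
            simp [supp]
    · intro y hy
      set z : Fin m ⊕ Fin n → ℝ := Sum.elim 0 y with hzd
      have hzl : z ∘ Sum.inl = (0 : Fin m → ℝ) := rfl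
      have hzr : z ∘ Sum.inr = y := rfl
      have hzmix : IsMixed z := by
        constructor
        · rintro (i | j)
          · exact le_refl 0
          · exact hy.1 j
        · rw [Fintype.sum_sum_type]
          simp [hzd, hy.2]
      have hy0 : y ≠ 0 := by
        intro h0
        have h := hy.2
        rw [h0] at h
        simp at h
      obtain ⟨i0, hi0⟩ := posA y hy.1 hy0
      have hmap : (bestresp1 A y).map ⟨Sum.inl, Sum.inl_injective⟩ ⊆ brS (C *ᵥ z) := by
        intro k hk
        obtain ⟨i, hi, rfl⟩ := Finset.mem_map.mp hk
        have hiB : ∀ k, (A *ᵥ y) k ≤ (A *ᵥ y) i := by simpa [bestresp1] using hi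
        simp only [Function.Embedding.coeFn_mk]
        rw [hmemBrS]
        rintro (i' | j')
        · rw [hvl z i', hvl z i, hzr]
          exact hiB i'
        · rw [hvr z j', hvl z i, hzl, hzr, mulVec_zero]
          simp only [Pi.zero_apply]
          exact le_trans hi0.le (hiB i0)
      calc (bestresp1 A y).card
          = ((bestresp1 A y).map ⟨Sum.inl, Sum.inl_injective⟩).card := (Finset.card_map _).symm
        _ ≤ (brS (C *ᵥ z)).card := Finset.card_le_card hmap
        _ ≤ (supp z).card := hCz z hzmix
        _ = (supp y).card := by
            rw [supp_sum_card z, hzl, hzr]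
            simp [supp]
end
end

section
/- Let C be a d×d real matrix such that S = {z ∈ ℝ^d : z ≥ 0, Cz ≤ 𝟙} is bounded. Then the following are equivalent: (i) no z ∈ S has more than d binding inequalities among z ≥ 0, Cz ≤ 𝟙; (ii) for every z ∈ S, the family of vectors consisting of the unit vectors e_i for each binding inequality z_i = 0 together with the rows c_jᵀ of C for each binding inequality (Cz)_j = 1 is linearly independent. -/
open Matrix
open scoped Classical

noncomputable section

/-- The polytope `S = {z ∈ ℝ^d : z ≥ 0, Cz ≤ 𝟙}`. -/
def Sset {d : ℕ} (C : Matrix (Fin d) (Fin d) ℝ) : Set (Fin d → ℝ) :=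
  {z | (∀ i, 0 ≤ z i) ∧ ∀ i, (C *ᵥ z) i ≤ 1}

namespace BindingAux

variable {d : ℕ} (C : Matrix (Fin d) (Fin d) ℝ)

def Fam (z : Fin d → ℝ) : {i : Fin d // z i = 0} ⊕ {j : Fin d // (C *ᵥ z) j = 1} → (Fin d → ℝ) :=
  Sum.elim (fun i => (Pi.single i.1 1 : Fin d → ℝ)) (fun j => C j.1)

def Ncard (z : Fin d → ℝ) : ℕ :=
  (Finset.univ.filter fun i => z i = 0).card +
    (Finset.univ.filter fun j => (C *ᵥ z) j = 1).card

lemma card_index (z : Fin d → ℝ) :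
    Fintype.card ({i : Fin d // z i = 0} ⊕ {j : Fin d // (C *ᵥ z) j = 1}) = Ncard C z := by
  simp [Ncard, Fintype.card_sum, Fintype.card_subtype]

lemma exists_dir {z : Fin d → ℝ} (hdep : ¬ LinearIndependent ℝ (Fam C z))
    (hc : Ncard C z ≤ d) :
    ∃ v : Fin d → ℝ, v ≠ 0 ∧ (∀ i, z i = 0 → v i = 0) ∧
      (∀ j, (C *ᵥ z) j = 1 → (C *ᵥ v) j = 0) := by
  set M : Matrix ({i : Fin d // z i = 0} ⊕ {j : Fin d // (C *ᵥ z) j = 1}) (Fin d) ℝ :=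
    Matrix.of (Fam C z) with hM
  have hrank : M.rank < Ncard C z := by
    rw [Matrix.rank_eq_finrank_span_row, ← card_index C z]
    rw [linearIndependent_iff_card_le_finrank_span] at hdep
    have : Set.range M.row = Set.range (Fam C z) := rfl
    rw [this]
    exact lt_of_not_ge hdep
  have h2 := LinearMap.finrank_range_add_finrank_ker M.mulVecLin
  have hd : Module.finrank ℝ (Fin d → ℝ) = d := Module.finrank_fin_fun ℝ
  have hk : LinearMap.ker M.mulVecLin ≠ ⊥ := by
    intro hbot
    rw [hbot, finrank_bot, hd] at h2
    have : M.rank = d := by rw [Matrix.rank]; omega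
    omega
  obtain ⟨v, hvmem, hv0⟩ := Submodule.exists_mem_ne_zero_of_ne_bot hk
  have hker : M *ᵥ v = 0 := hvmem
  refine ⟨v, hv0, fun i hi => ?_, fun j hj => ?_⟩
  · have := congrFun hker (Sum.inl ⟨i, hi⟩)
    rw [Matrix.mulVec, dotProduct] at this
    simpa [hM, Fam, Pi.single_apply,
      Finset.mul_sum] using this
  · have := congrFun hker (Sum.inr ⟨j, hj⟩)
    rw [Matrix.mulVec, dotProduct] at this ⊢
    simpa [hM, Fam] using this

lemma isClosed_Sset : IsClosed (Sset C) := by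
  have : Sset C = (⋂ i, {z : Fin d → ℝ | 0 ≤ z i}) ∩ ⋂ i, {z | (C *ᵥ z) i ≤ 1} := by
    ext z; simp [Sset, Set.mem_iInter]
  rw [this]
  refine IsClosed.inter (isClosed_iInter fun i => ?_) (isClosed_iInter fun i => ?_)
  · exact isClosed_le continuous_const (continuous_apply i)
  · refine isClosed_le ?_ continuous_const
    have : (fun z : Fin d → ℝ => (C *ᵥ z) i) = fun z => ∑ k, C i k * z k := by
      funext z; simp [Matrix.mulVec, dotProduct]
    rw [this]
    exact continuous_finset_sum _ fun k _ => continuous_const.mul (continuous_apply k)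

lemma dep_mono {z z' : Fin d → ℝ} (hA : ∀ i, z i = 0 → z' i = 0)
    (hB : ∀ j, (C *ᵥ z) j = 1 → (C *ᵥ z') j = 1)
    (h : LinearIndependent ℝ (Fam C z')) : LinearIndependent ℝ (Fam C z) := by
  have hinj : Function.Injective
      (Sum.map (fun i : {i : Fin d // z i = 0} => (⟨i.1, hA i.1 i.2⟩ : {i : Fin d // z' i = 0}))
        (fun j : {j : Fin d // (C *ᵥ z) j = 1} =>
          (⟨j.1, hB j.1 j.2⟩ : {j : Fin d // (C *ᵥ z') j = 1}))) := by
    apply Function.Injective.sumMap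
    · intro a b hab; exact Subtype.ext (congrArg Subtype.val hab :)
    · intro a b hab; exact Subtype.ext (congrArg Subtype.val hab :)
  have := h.comp _ hinj
  convert this using 1
  funext s
  cases s <;> rfl

lemma step (hb : Bornology.IsBounded (Sset C)) {z : Fin d → ℝ} (hz : z ∈ Sset C)
    (hdep : ¬ LinearIndependent ℝ (Fam C z)) (hc : Ncard C z ≤ d) :
    ∃ z' ∈ Sset C, ¬ LinearIndependent ℝ (Fam C z') ∧ Ncard C z < Ncard C z' := by
  obtain ⟨v, hv0, hvi, hvj⟩ := exists_dir C hdep hc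
  have hCv : ∀ t : ℝ, C *ᵥ (z + t • v) = C *ᵥ z + t • (C *ᵥ v) := by
    intro t; rw [Matrix.mulVec_add, Matrix.mulVec_smul]
  set T : Set ℝ := {t | 0 ≤ t ∧ z + t • v ∈ Sset C} with hT
  have hT0 : (0 : ℝ) ∈ T := ⟨le_refl _, by simpa using hz⟩
  obtain ⟨R, hR⟩ := (isBounded_iff_forall_norm_le.1 hb)
  have hvpos : 0 < ‖v‖ := norm_pos_iff.2 hv0
  have hTbdd : BddAbove T := by
    refine ⟨(R + ‖z‖) / ‖v‖, fun t ht => ?_⟩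
    rw [le_div_iff₀ hvpos]
    have h1 : ‖t • v‖ ≤ ‖z + t • v‖ + ‖z‖ := by
      have he := norm_sub_le (z + t • v) z
      rwa [add_sub_cancel_left] at he
    have h2 : ‖z + t • v‖ ≤ R := hR _ ht.2
    have h3 : ‖t • v‖ = t * ‖v‖ := by
      rw [norm_smul, Real.norm_eq_abs, abs_of_nonneg ht.1]
    linarith
  have hTclosed : IsClosed T := by
    have : T = Set.Ici (0:ℝ) ∩ (fun t : ℝ => z + t • v) ⁻¹' (Sset C) := rfl
    rw [this]
    exact isClosed_Ici.inter ((isClosed_Sset C).preimage (continuous_const.add (continuous_id.smul continuous_const)))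
  set t0 := sSup T with ht0def
  have ht0 : t0 ∈ T := hTclosed.csSup_mem ⟨0, hT0⟩ hTbdd
  set z' := z + t0 • v with hz'def
  have hz' : z' ∈ Sset C := ht0.2
  have hAi : ∀ i, z i = 0 → z' i = 0 := by
    intro i hi
    simp [hz'def, hi, hvi i hi]
  have hBj : ∀ j, (C *ᵥ z) j = 1 → (C *ᵥ z') j = 1 := by
    intro j hj
    rw [hz'def, hCv]
    simp [hj, hvj j hj]
  have hnew : (∃ i, z' i = 0 ∧ ¬ z i = 0) ∨ (∃ j, (C *ᵥ z') j = 1 ∧ ¬ (C *ᵥ z) j = 1) := by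
    by_contra hcon
    push_neg at hcon
    obtain ⟨h1, h2⟩ := hcon
    set U : Set ℝ := (⋂ i, {t : ℝ | z i = 0 ∨ 0 < z i + t * v i}) ∩
      ⋂ j, {t : ℝ | (C *ᵥ z) j = 1 ∨ (C *ᵥ z) j + t * (C *ᵥ v) j < 1} with hU
    have hUopen : IsOpen U := by
      refine IsOpen.inter (isOpen_iInter_of_finite fun i => ?_)
        (isOpen_iInter_of_finite fun j => ?_)
      · by_cases hi : z i = 0
        · simp only [hi]; simp
        · have : {t : ℝ | z i = 0 ∨ 0 < z i + t * v i} = {t | 0 < z i + t * v i} := by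
            ext t; simp [hi]
          rw [this]
          exact isOpen_lt continuous_const (continuous_const.add (continuous_id.mul continuous_const))
      · by_cases hj : (C *ᵥ z) j = 1
        · simp only [hj]; simp
        · have : {t : ℝ | (C *ᵥ z) j = 1 ∨ (C *ᵥ z) j + t * (C *ᵥ v) j < 1}
              = {t | (C *ᵥ z) j + t * (C *ᵥ v) j < 1} := by
            ext t; simp [hj]
          rw [this]
          exact isOpen_lt (continuous_const.add (continuous_id.mul continuous_const)) continuous_const
    have ht0U : t0 ∈ U := by
      constructor
      · refine Set.mem_iInter.2 fun i => ?_
        by_cases hi : z i = 0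
        · exact Or.inl hi
        · refine Or.inr ?_
          have hzi' : z' i ≠ 0 := fun h => hi (h1 i h)
          have : 0 ≤ z' i := hz'.1 i
          have hform : z' i = z i + t0 * v i := by simp [hz'def]
          rw [hform] at this hzi'
          exact lt_of_le_of_ne this (Ne.symm hzi')
      · refine Set.mem_iInter.2 fun j => ?_
        by_cases hj : (C *ᵥ z) j = 1
        · exact Or.inl hj
        · refine Or.inr ?_
          have hzj' : (C *ᵥ z') j ≠ 1 := fun h => hj (h2 j h)
          have : (C *ᵥ z') j ≤ 1 := hz'.2 j
          have hform : (C *ᵥ z') j = (C *ᵥ z) j + t0 * (C *ᵥ v) j := by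
            rw [hz'def, hCv]; simp
          rw [hform] at this hzj'
          exact lt_of_le_of_ne this hzj'
    obtain ⟨ε, hε, hball⟩ := Metric.isOpen_iff.1 hUopen t0 ht0U
    have ht1U : t0 + ε / 2 ∈ U := by
      apply hball
      rw [Metric.mem_ball, Real.dist_eq]
      have habs : |t0 + ε / 2 - t0| = ε / 2 := by
        rw [abs_of_nonneg] <;> linarith
      rw [habs]; linarith
    have ht1T : t0 + ε / 2 ∈ T := by
      obtain ⟨hU1, hU2⟩ := ht1U
      refine ⟨by linarith [ht0.1], fun i => ?_, fun j => ?_⟩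
      · by_cases hi : z i = 0
        · have hf : (z + (t0 + ε/2) • v) i = 0 := by simp [hi, hvi i hi]
          rw [hf]
        · rcases Set.mem_iInter.1 hU1 i with h | h
          · exact absurd h hi
          · have hf : (z + (t0 + ε/2) • v) i = z i + (t0 + ε/2) * v i := by simp
            rw [hf]; linarith
      · rw [hCv]
        by_cases hj : (C *ᵥ z) j = 1
        · simp [hj, hvj j hj]
        · rcases Set.mem_iInter.1 hU2 j with h | h
          · exact absurd h hj
          · have hf : ((C *ᵥ z) + (t0 + ε/2) • (C *ᵥ v)) j
                = (C *ᵥ z) j + (t0 + ε/2) * (C *ᵥ v) j := by simp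
            rw [hf]; linarith
    have := le_csSup hTbdd ht1T
    linarith
  refine ⟨z', hz', fun hind => hdep (dep_mono C hAi hBj hind), ?_⟩
  have hsubA : (Finset.univ.filter fun i => z i = 0) ⊆ Finset.univ.filter fun i => z' i = 0 := by
    intro i hi
    simp only [Finset.mem_filter, Finset.mem_univ, true_and] at hi ⊢
    exact hAi i hi
  have hsubB : (Finset.univ.filter fun j => (C *ᵥ z) j = 1)
      ⊆ Finset.univ.filter fun j => (C *ᵥ z') j = 1 := by
    intro j hj
    simp only [Finset.mem_filter, Finset.mem_univ, true_and] at hj ⊢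
    exact hBj j hj
  unfold Ncard
  rcases hnew with ⟨i, hi1, hi2⟩ | ⟨j, hj1, hj2⟩
  · have : (Finset.univ.filter fun i => z i = 0) ⊂ Finset.univ.filter fun i => z' i = 0 :=
      ⟨hsubA, fun hsub => hi2 (by simpa using (Finset.mem_filter.1 (hsub (by simp [hi1]))).2)⟩
    have := Finset.card_lt_card this
    have := Finset.card_le_card hsubB
    omega
  · have : (Finset.univ.filter fun j => (C *ᵥ z) j = 1)
        ⊂ Finset.univ.filter fun j => (C *ᵥ z') j = 1 :=
      ⟨hsubB, fun hsub => hj2 (by simpa using (Finset.mem_filter.1 (hsub (by simp [hj1]))).2)⟩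
    have := Finset.card_lt_card this
    have := Finset.card_le_card hsubA
    omega

lemma main_aux (hb : Bornology.IsBounded (Sset C))
    (hle : ∀ z ∈ Sset C, Ncard C z ≤ d) :
    ∀ k : ℕ, ∀ z ∈ Sset C, ¬ LinearIndependent ℝ (Fam C z) → d + 1 ≤ Ncard C z + k → False := by
  intro k
  induction k with
  | zero => intro z hz _ hcard; exact absurd (hle z hz) (by omega)
  | succ k ih =>
    intro z hz hdep hcard
    obtain ⟨z', hz', hdep', hlt⟩ := step C hb hz hdep (hle z hz)
    exact ih z' hz' hdep' (by omega)

end BindingAux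

/-- Let `S = {z : z ≥ 0, Cz ≤ 𝟙}` be bounded.  Then no `z ∈ S` has more than `d`
binding inequalities iff for every `z ∈ S` the family consisting of the unit vectors
`e_i` for the binding inequalities `z_i = 0` together with the rows `c_jᵀ` of `C` for
the binding inequalities `(Cz)_j = 1` is linearly independent. -/
theorem nondegenerate_iff_binding_linearIndependent {d : ℕ}
    (C : Matrix (Fin d) (Fin d) ℝ) (hb : Bornology.IsBounded (Sset C)) :
    (∀ z ∈ Sset C,
      (Finset.univ.filter fun i => z i = 0).card +
        (Finset.univ.filter fun j => (C *ᵥ z) j = 1).card ≤ d) ↔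
    (∀ z ∈ Sset C,
      LinearIndependent ℝ
        (Sum.elim (fun i : {i : Fin d // z i = 0} => (Pi.single i.1 1 : Fin d → ℝ))
          (fun j : {j : Fin d // (C *ᵥ z) j = 1} => C j.1))) := by
  constructor
  · intro h z hz
    by_contra hdep
    exact BindingAux.main_aux C hb h (d + 1) z hz hdep (by omega)
  · intro h z hz
    have h1 : LinearIndependent ℝ (BindingAux.Fam C z) := h z hz
    have h2 := h1.fintype_card_le_finrank
    rw [BindingAux.card_index, Module.finrank_fin_fun] at h2
    exact h2
end
end

section
/- Let (A,B) be an m×n bimatrix game such that P and Q are bounded. Then (A,B) is nondegenerate if and only if the following holds: for every x̂ ∈ X, with I = supp(x̂) and J = bestresp(x̂), the columns of the submatrix B_{IJ} = (b_{ij})_{i∈I, j∈J} of B are linearly independent; and for every ŷ ∈ Y, with K = bestresp(ŷ) and L = supp(ŷ), the rows of the submatrix A_{KL} = (a_{ij})_{i∈K, j∈L} of A are linearly independent. -/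
open Matrix
open scoped Classical

noncomputable section

lemma ray_unbounded {m : ℕ} {S : Set (Fin m → ℝ)} {x d : Fin m → ℝ} (hd : d ≠ 0)
    (h : ∀ t : ℝ, 0 ≤ t → x + t • d ∈ S) : ¬ Bornology.IsBounded S := by
  rw [isBounded_iff_forall_norm_le]
  rintro ⟨C, hC⟩
  have hdn : 0 < ‖d‖ := norm_pos_iff.mpr hd
  have hxC : ‖x‖ ≤ C := by simpa using hC _ (h 0 le_rfl)
  have hC0 : 0 ≤ C := le_trans (norm_nonneg x) hxC
  set t := (C + ‖x‖ + 1) / ‖d‖ with ht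
  have ht0 : 0 ≤ t := by positivity
  have h1 : ‖x + t • d‖ ≤ C := hC _ (h t ht0)
  have h2 : t * ‖d‖ ≤ ‖x + t • d‖ + ‖x‖ := by
    have hns : ‖t • d‖ = t * ‖d‖ := by
      rw [norm_smul, Real.norm_eq_abs, abs_of_nonneg ht0]
    have : ‖(x + t • d) - x‖ ≤ ‖x + t • d‖ + ‖x‖ := norm_sub_le _ _
    simpa [hns] using this
  have h3 : t * ‖d‖ = C + ‖x‖ + 1 := by rw [ht, div_mul_cancel₀ _ hdn.ne']
  linarith

lemma exists_tight_span {m : ℕ} {ι : Type*} [Fintype ι] (a : ι → (Fin m → ℝ)) (b : ι → ℝ)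
    (hbdd : Bornology.IsBounded {x : Fin m → ℝ | ∀ c, a c ⬝ᵥ x ≤ b c})
    {x₀ : Fin m → ℝ} (hx₀ : ∀ c, a c ⬝ᵥ x₀ ≤ b c) :
    ∃ x, (∀ c, a c ⬝ᵥ x ≤ b c) ∧
      Submodule.span ℝ (a '' {c | a c ⬝ᵥ x = b c}) = ⊤ := by
  suffices H : ∀ (k : ℕ) (x : Fin m → ℝ), (∀ c, a c ⬝ᵥ x ≤ b c) →
      m ≤ Module.finrank ℝ (Submodule.span ℝ (a '' {c | a c ⬝ᵥ x = b c})) + k →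
      ∃ y, (∀ c, a c ⬝ᵥ y ≤ b c) ∧
        Submodule.span ℝ (a '' {c | a c ⬝ᵥ y = b c}) = ⊤ by
    exact H m x₀ hx₀ (le_add_self)
  intro k
  induction k with
  | zero =>
    intro x hx hrk
    refine ⟨x, hx, ?_⟩
    set V := Submodule.span ℝ (a '' {c | a c ⬝ᵥ x = b c})
    have h1 : Module.finrank ℝ V ≤ m := by
      simpa [Module.finrank_pi] using Submodule.finrank_le V
    have : Module.finrank ℝ V = Module.finrank ℝ (Fin m → ℝ) := by
      simp [Module.finrank_pi]; omega
    exact Submodule.eq_top_of_finrank_eq this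
  | succ k ih =>
    intro x hx hrk
    set V := Submodule.span ℝ (a '' {c | a c ⬝ᵥ x = b c}) with hV
    by_cases htop : V = ⊤
    · exact ⟨x, hx, htop⟩
    obtain ⟨d, hd0, hdker⟩ : ∃ d : Fin m → ℝ, d ≠ 0 ∧ ∀ c, a c ⬝ᵥ x = b c → a c ⬝ᵥ d = 0 := by
      set T := Finset.univ.filter (fun c => a c ⬝ᵥ x = b c) with hT
      have hmemT : ∀ c, c ∈ T ↔ a c ⬝ᵥ x = b c := fun c => by
        rw [hT]; simp
      set M : Matrix {c // c ∈ T} (Fin m) ℝ := fun c i => a c.1 i with hM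
      have hVr : V = Submodule.span ℝ (Set.range M) := by
        rw [hV]
        congr 1
        ext v
        constructor
        · rintro ⟨c, hc, rfl⟩
          exact ⟨⟨c, (hmemT c).mpr hc⟩, rfl⟩
        · rintro ⟨c, rfl⟩
          exact ⟨c.1, (hmemT c.1).mp c.2, rfl⟩
      have hrkM : Mᵀ.rank = Module.finrank ℝ V := by
        rw [Matrix.rank, Matrix.range_mulVecLin, hVr]; rfl
      have hker : Module.finrank ℝ (LinearMap.ker M.mulVecLin) ≠ 0 := by
        have hrn := LinearMap.finrank_range_add_finrank_ker (M.mulVecLin)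
        rw [Module.finrank_pi] at hrn
        have h1 : Module.finrank ℝ (LinearMap.range M.mulVecLin) = Module.finrank ℝ V := by
          rw [← hrkM, Matrix.rank_transpose, Matrix.rank]
        have h2 : Module.finrank ℝ V < m := by
          have := Submodule.finrank_lt (K := ℝ) (V := Fin m → ℝ)
            htop
          simpa [Module.finrank_pi] using this
        simp only [Fintype.card_fin] at hrn
        omega
      have hne : LinearMap.ker M.mulVecLin ≠ ⊥ := by
        intro hbot
        rw [← Submodule.finrank_eq_zero (S := LinearMap.ker M.mulVecLin)] at hbot
        exact hker hbot
      obtain ⟨d, hd, hd0⟩ := Submodule.exists_mem_ne_zero_of_ne_bot hne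
      refine ⟨d, hd0, fun c hc => ?_⟩
      have h1 := LinearMap.mem_ker.mp hd
      have h2 := congrFun h1 ⟨c, (hmemT c).mpr hc⟩
      exact h2
    -- V kills d
    have hVd : ∀ v ∈ V, v ⬝ᵥ d = 0 := by
      intro v hv
      induction hv using Submodule.span_induction with
      | mem v hv => obtain ⟨c, hc, rfl⟩ := hv; exact hdker c hc
      | zero => simp
      | add u v _ _ hu hv => rw [add_dotProduct, hu, hv, add_zero]
      | smul r v _ hv => rw [smul_dotProduct, hv, smul_zero]
    -- some constraint increases along d
    have hΓ : ∃ c, 0 < a c ⬝ᵥ d := by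
      by_contra hno
      push_neg at hno
      refine ray_unbounded (x := x) hd0 (fun t ht => ?_) hbdd
      intro c
      have : a c ⬝ᵥ (x + t • d) = a c ⬝ᵥ x + t * (a c ⬝ᵥ d) := by
        rw [dotProduct_add, dotProduct_smul]; rfl
      rw [this]
      have : t * (a c ⬝ᵥ d) ≤ 0 := mul_nonpos_of_nonneg_of_nonpos ht (hno c)
      linarith [hx c]
    set Γ := Finset.univ.filter (fun c => 0 < a c ⬝ᵥ d) with hΓdef
    have hΓne : Γ.Nonempty := by
      obtain ⟨c, hc⟩ := hΓ
      exact ⟨c, by rw [hΓdef]; simpa using hc⟩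
    obtain ⟨c₀, hc₀Γ, hc₀min⟩ := Finset.exists_min_image Γ
      (fun c => (b c - a c ⬝ᵥ x) / (a c ⬝ᵥ d)) hΓne
    have hc₀d : 0 < a c₀ ⬝ᵥ d := by
      have := hc₀Γ; rw [hΓdef] at this; simpa using this
    set tb := (b c₀ - a c₀ ⬝ᵥ x) / (a c₀ ⬝ᵥ d) with htb
    have htb0 : 0 ≤ tb := div_nonneg (by linarith [hx c₀]) hc₀d.le
    set y := x + tb • d with hy
    have hyval : ∀ c, a c ⬝ᵥ y = a c ⬝ᵥ x + tb * (a c ⬝ᵥ d) := by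
      intro c
      rw [hy, dotProduct_add, dotProduct_smul]; rfl
    have hyS : ∀ c, a c ⬝ᵥ y ≤ b c := by
      intro c
      rw [hyval c]
      by_cases hcd : 0 < a c ⬝ᵥ d
      · have hcΓ : c ∈ Γ := by rw [hΓdef]; simpa using hcd
        have h2 : tb * (a c ⬝ᵥ d) ≤ b c - a c ⬝ᵥ x :=
          (le_div_iff₀ hcd).mp (hc₀min c hcΓ)
        linarith
      · push_neg at hcd
        have : tb * (a c ⬝ᵥ d) ≤ 0 := mul_nonpos_of_nonneg_of_nonpos htb0 hcd
        linarith [hx c]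
    -- tight set grows
    have htsub : ∀ c, a c ⬝ᵥ x = b c → a c ⬝ᵥ y = b c := by
      intro c hc
      rw [hyval c, hdker c hc, mul_zero, add_zero, hc]
    have hc₀y : a c₀ ⬝ᵥ y = b c₀ := by
      rw [hyval c₀, htb]
      field_simp
      ring
    have hc₀V : a c₀ ∉ V := by
      intro hmem
      have := hVd _ hmem
      linarith
    set V' := Submodule.span ℝ (a '' {c | a c ⬝ᵥ y = b c}) with hV'
    have hVV' : V < V' := by
      refine lt_of_le_of_ne ?_ ?_
      · rw [hV, hV']
        exact Submodule.span_mono (fun v ⟨c, hc, hcv⟩ => ⟨c, htsub c hc, hcv⟩)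
      · intro heq
        exact hc₀V (heq ▸ Submodule.subset_span ⟨c₀, hc₀y, rfl⟩)
    have hrk' : Module.finrank ℝ V < Module.finrank ℝ V' :=
      Submodule.finrank_lt_finrank_of_lt hVV'
    refine ih y hyS ?_
    rw [← hV']
    omega

lemma onesided {m n : ℕ} (B : Matrix (Fin m) (Fin n) ℝ)
    (hP : Bornology.IsBounded (Pset B)) :
    (∀ x : Fin m → ℝ, IsMixed x → (bestresp2 B x).card ≤ (supp x).card) ↔
    (∀ x : Fin m → ℝ, IsMixed x → LinearIndependent ℝ (fun j : {j // j ∈ bestresp2 B x} =>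
        fun i : {i // i ∈ supp x} => B i.1 j.1)) := by
  have hmem_br : ∀ (x : Fin m → ℝ) (j : Fin n),
      j ∈ bestresp2 B x ↔ ∀ k, (Bᵀ *ᵥ x) k ≤ (Bᵀ *ᵥ x) j := by
    intro x j; simp [bestresp2]
  have hmem_supp : ∀ (ι : Type) (_ : Fintype ι) (x : ι → ℝ) (i : ι),
      i ∈ supp x ↔ 0 < x i := by
    intro ι _ x i; simp [supp]
  constructor
  · intro hnd x hx
    set I := supp x with hI
    set J := bestresp2 B x with hJ
    rcases J.eq_empty_or_nonempty with hJe | hJne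
    · have : IsEmpty {j // j ∈ J} := by rw [hJe]; exact Finset.isEmpty_coe_sort.mpr rfl
      exact linearIndependent_empty_type
    obtain ⟨j₀, hj₀⟩ := hJne
    have hj₀' : ∀ k, (Bᵀ *ᵥ x) k ≤ (Bᵀ *ᵥ x) j₀ := (hmem_br x j₀).mp hj₀
    set v := (Bᵀ *ᵥ x) j₀ with hv
    have hJval : ∀ j ∈ J, (Bᵀ *ᵥ x) j = v := fun j hj =>
      le_antisymm (hj₀' j) (((hmem_br x j).mp hj) j₀)
    -- v > 0
    have hv0 : 0 < v := by
      by_contra hle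
      push_neg at hle
      refine ray_unbounded (x := 0) (d := x) ?_ ?_ hP
      · intro h0
        rw [h0] at hx
        simpa using hx.2
      · intro t ht
        constructor
        · intro i
          simpa using mul_nonneg ht (hx.1 i)
        · intro j
          rw [zero_add, Matrix.mulVec_smul]
          have h1 : (Bᵀ *ᵥ x) j ≤ v := hj₀' j
          have : t * (Bᵀ *ᵥ x) j ≤ 0 :=
            mul_nonpos_of_nonneg_of_nonpos ht (le_trans h1 hle)
          calc (t • (Bᵀ *ᵥ x)) j = t * (Bᵀ *ᵥ x) j := rfl
            _ ≤ 0 := this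
            _ ≤ 1 := zero_le_one
    -- set up the constraint system
    set a : ((Fin m ⊕ Fin m) ⊕ (Fin n ⊕ Fin n)) → (Fin m → ℝ) := fun c =>
      match c with
      | .inl (.inl i) => -(Pi.single i 1)
      | .inl (.inr i) => if i ∈ I then 0 else Pi.single i 1
      | .inr (.inl j) => fun i => B i j
      | .inr (.inr j) => if j ∈ J then -(fun i => B i j) else 0
      with ha
    set b : ((Fin m ⊕ Fin m) ⊕ (Fin n ⊕ Fin n)) → ℝ := fun c =>
      match c with
      | .inl _ => 0
      | .inr (.inl _) => 1
      | .inr (.inr j) => if j ∈ J then -1 else 0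
      with hb
    have hcol : ∀ (z : Fin m → ℝ) (j : Fin n), (fun i => B i j) ⬝ᵥ z = (Bᵀ *ᵥ z) j := by
      intro z j; rfl
    have hsingle : ∀ (z : Fin m → ℝ) (i : Fin m), (Pi.single i 1 : Fin m → ℝ) ⬝ᵥ z = z i := by
      intro z i
      rw [single_dotProduct, one_mul]
    have hSchar : ∀ z : Fin m → ℝ, (∀ c, a c ⬝ᵥ z ≤ b c) ↔
        ((∀ i, 0 ≤ z i) ∧ (∀ i, i ∉ I → z i ≤ 0) ∧
         (∀ j, (Bᵀ *ᵥ z) j ≤ 1) ∧ (∀ j, j ∈ J → 1 ≤ (Bᵀ *ᵥ z) j)) := by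
      intro z
      constructor
      · intro h
        refine ⟨fun i => ?_, fun i hi => ?_, fun j => ?_, fun j hj => ?_⟩
        · have := h (.inl (.inl i))
          rw [ha, hb] at this
          simp only [neg_dotProduct, hsingle] at this
          linarith
        · have := h (.inl (.inr i))
          rw [ha, hb] at this
          simp only [if_neg hi, hsingle] at this
          exact this
        · have := h (.inr (.inl j))
          rw [ha, hb] at this
          rwa [hcol] at this
        · have := h (.inr (.inr j))
          rw [ha, hb] at this
          simp only [if_pos hj, neg_dotProduct, hcol] at this
          linarith
      · rintro ⟨h1, h2, h3, h4⟩ c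
        rcases c with (i | i) | (j | j) <;> rw [ha, hb]
        · simp only [neg_dotProduct, hsingle]
          linarith [h1 i]
        · by_cases hi : i ∈ I
          · simp [if_pos hi]
          · simp only [if_neg hi, hsingle]
            exact h2 i hi
        · simp only
          rw [hcol]
          exact h3 j
        · by_cases hj : j ∈ J
          · simp only [if_pos hj, neg_dotProduct, hcol]
            linarith [h4 j hj]
          · simp [if_neg hj]
    -- bounded
    have hbdd : Bornology.IsBounded {z : Fin m → ℝ | ∀ c, a c ⬝ᵥ z ≤ b c} := by
      refine hP.subset ?_
      intro z hz
      obtain ⟨h1, _, h3, _⟩ := (hSchar z).mp hz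
      exact ⟨h1, h3⟩
    -- nonempty
    have hx₀ : ∀ c, a c ⬝ᵥ (v⁻¹ • x) ≤ b c := by
      rw [hSchar]
      have hvinv : 0 < v⁻¹ := inv_pos.mpr hv0
      refine ⟨fun i => mul_nonneg hvinv.le (hx.1 i), fun i hi => ?_, fun j => ?_, fun j hj => ?_⟩
      · have hxi : x i = 0 := by
          have := hx.1 i
          by_contra hne
          exact hi ((hmem_supp _ _ x i).mpr (lt_of_le_of_ne this (Ne.symm hne)))
        simp [Pi.smul_apply, hxi]
      · rw [Matrix.mulVec_smul]
        have : (Bᵀ *ᵥ x) j ≤ v := hj₀' j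
        calc (v⁻¹ • (Bᵀ *ᵥ x)) j = v⁻¹ * (Bᵀ *ᵥ x) j := rfl
          _ ≤ v⁻¹ * v := by nlinarith
          _ = 1 := inv_mul_cancel₀ hv0.ne'
      · rw [Matrix.mulVec_smul]
        have hval : (Bᵀ *ᵥ x) j = v := hJval j hj
        have heq : (v⁻¹ • (Bᵀ *ᵥ x)) j = 1 := by
          show v⁻¹ * (Bᵀ *ᵥ x) j = 1
          rw [hval, inv_mul_cancel₀ hv0.ne']
        rw [heq]
    obtain ⟨xs, hxs, hspan⟩ := exists_tight_span a b hbdd hx₀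
    obtain ⟨hxs1, hxs2, hxs3, hxs4⟩ := (hSchar xs).mp hxs
    set SS := supp xs with hSS
    set TT := Finset.univ.filter (fun j => (Bᵀ *ᵥ xs) j = 1) with hTT
    have hmemTT : ∀ j, j ∈ TT ↔ (Bᵀ *ᵥ xs) j = 1 := fun j => by rw [hTT]; simp
    have hJT : J ⊆ TT := fun j hj =>
      (hmemTT j).mpr (le_antisymm (hxs3 j) (hxs4 j hj))
    have hxsI : ∀ i, i ∉ I → xs i = 0 := fun i hi => le_antisymm (hxs2 i hi) (hxs1 i)
    have hSI : SS ⊆ I := by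
      intro i hi
      by_contra hni
      have := (hmem_supp _ _ xs i).mp hi
      rw [hxsI i hni] at this
      exact lt_irrefl 0 this
    -- positive sum
    have hj₀T : j₀ ∈ TT := hJT hj₀
    have hxsne : ∃ i, 0 < xs i := by
      by_contra hno
      push_neg at hno
      have hz : xs = 0 := funext fun i => le_antisymm (hno i) (hxs1 i)
      have := (hmemTT j₀).mp hj₀T
      rw [hz, Matrix.mulVec_zero] at this
      simpa using this
    set σ := ∑ i, xs i with hσ
    have hσ0 : 0 < σ := by
      obtain ⟨i, hi⟩ := hxsne
      exact Finset.sum_pos' (fun k _ => hxs1 k) ⟨i, Finset.mem_univ i, hi⟩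
    set x' := σ⁻¹ • xs with hx'
    have hmix' : IsMixed x' := by
      constructor
      · intro i
        exact mul_nonneg (inv_pos.mpr hσ0).le (hxs1 i)
      · rw [hx']
        calc ∑ i, (σ⁻¹ • xs) i = σ⁻¹ * ∑ i, xs i := by
              rw [Finset.mul_sum]; rfl
          _ = 1 := inv_mul_cancel₀ hσ0.ne'
    have hsupp' : supp x' = SS := by
      ext i
      rw [hmem_supp _ _ x' i, hmem_supp _ _ xs i]
      constructor
      · intro h
        by_contra hno
        push_neg at hno
        have : xs i = 0 := le_antisymm hno (hxs1 i)
        rw [hx'] at h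
        simp [Pi.smul_apply, this] at h
      · intro h
        exact mul_pos (inv_pos.mpr hσ0) h
    have hTbr : TT ⊆ bestresp2 B x' := by
      intro j hj
      rw [hmem_br]
      intro k
      rw [hx', Matrix.mulVec_smul]
      have h1 : (Bᵀ *ᵥ xs) k ≤ 1 := hxs3 k
      have h2 : (Bᵀ *ᵥ xs) j = 1 := (hmemTT j).mp hj
      calc (σ⁻¹ • (Bᵀ *ᵥ xs)) k = σ⁻¹ * (Bᵀ *ᵥ xs) k := rfl
        _ ≤ σ⁻¹ * (Bᵀ *ᵥ xs) j := by
            rw [h2]; nlinarith [inv_pos.mpr hσ0]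
        _ = (σ⁻¹ • (Bᵀ *ᵥ xs)) j := rfl
    have hcardTS : TT.card ≤ SS.card := by
      calc TT.card ≤ (bestresp2 B x').card := Finset.card_le_card hTbr
        _ ≤ (supp x').card := hnd x' hmix'
        _ = SS.card := by rw [hsupp']
    -- the restricted columns span
    set g : {j // j ∈ TT} → ({i // i ∈ SS} → ℝ) := fun j => fun i => B i.1 j.1 with hg
    have htopg : ⊤ ≤ Submodule.span ℝ (Set.range g) := by
      intro w _
      set R : (Fin m → ℝ) →ₗ[ℝ] ({i // i ∈ SS} → ℝ) :=
        LinearMap.funLeft ℝ ℝ (Subtype.val) with hR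
      have hRtight : ∀ c, a c ⬝ᵥ xs = b c → R (a c) ∈ Submodule.span ℝ (Set.range g) := by
        intro c hc
        have hRzero : ∀ i : Fin m, xs i = 0 → R (Pi.single i 1) = 0 := by
          intro i hi
          funext k
          have hki : k.1 ≠ i := by
            intro heq
            have := (hmem_supp _ _ xs k.1).mp k.2
            rw [heq, hi] at this
            exact lt_irrefl 0 this
          show (Pi.single i 1 : Fin m → ℝ) k.1 = 0
          rw [Pi.single_apply, if_neg hki]
        have hRcol : ∀ j : Fin n, j ∈ TT → R (fun i => B i j) ∈ Submodule.span ℝ (Set.range g) := by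
          intro j hj
          exact Submodule.subset_span ⟨⟨j, hj⟩, rfl⟩
        rcases c with (i | i) | (j | j)
        · -- -(single i 1) tight: xs i = 0
          have : xs i = 0 := by
            rw [ha, hb] at hc
            simp only [neg_dotProduct, hsingle] at hc
            linarith
          rw [ha]
          simp only [map_neg]
          rw [hRzero i this]
          simp
        · by_cases hi : i ∈ I
          · rw [ha]; simp [if_pos hi]
          · have : xs i = 0 := hxsI i hi
            rw [ha]
            simp only [if_neg hi]
            rw [hRzero i this]
            simp
        · have : j ∈ TT := by
            rw [hmemTT]
            rw [ha, hb] at hc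
            rwa [hcol] at hc
          exact hRcol j this
        · by_cases hj : j ∈ J
          · have : j ∈ TT := hJT hj
            rw [ha]
            simp only [if_pos hj, map_neg]
            exact Submodule.neg_mem _ (hRcol j this)
          · rw [ha]; simp [if_neg hj]
      -- extend w
      set wext : Fin m → ℝ := fun i => if h : i ∈ SS then w ⟨i, h⟩ else 0 with hwext
      have hw : R wext = w := by
        funext k
        show wext k.1 = w k
        rw [hwext]
        simp [k.2]
      have hwmem : wext ∈ Submodule.span ℝ (a '' {c | a c ⬝ᵥ xs = b c}) := by
        rw [hspan]; trivial
      have : R wext ∈ (Submodule.span ℝ (a '' {c | a c ⬝ᵥ xs = b c})).map R :=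
        Submodule.mem_map_of_mem hwmem
      rw [Submodule.map_span] at this
      have hsub : R '' (a '' {c | a c ⬝ᵥ xs = b c}) ⊆
          (Submodule.span ℝ (Set.range g) : Set ({i // i ∈ SS} → ℝ)) := by
        rintro _ ⟨_, ⟨c, hc, rfl⟩, rfl⟩
        exact hRtight c hc
      have := Submodule.span_le.mpr hsub this
      rwa [hw] at this
    have hfr : Module.finrank ℝ ({i // i ∈ SS} → ℝ) = SS.card := by
      rw [Module.finrank_pi, Fintype.card_coe]
    have hcardST : SS.card ≤ TT.card := by
      have h1 : Module.finrank ℝ (Submodule.span ℝ (Set.range g)) =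
          Module.finrank ℝ ({i // i ∈ SS} → ℝ) := by
        rw [le_antisymm le_top htopg, finrank_top]
      have h2 := finrank_span_le_card (R := ℝ) (Set.range g)
      rw [h1, hfr] at h2
      calc SS.card ≤ (Set.range g).toFinset.card := h2
        _ = Fintype.card (Set.range g) := Set.toFinset_card _
        _ ≤ Fintype.card {j // j ∈ TT} := Fintype.card_range_le g
        _ = TT.card := Fintype.card_coe TT
    have hli : LinearIndependent ℝ g := by
      refine linearIndependent_of_top_le_span_of_card_eq_finrank htopg ?_
      rw [hfr, Fintype.card_coe]
      omega
    -- restrict columns to J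
    have hliJ : LinearIndependent ℝ (fun j : {j // j ∈ J} => g ⟨j.1, hJT j.2⟩) := by
      refine hli.comp (fun j : {j // j ∈ J} => (⟨j.1, hJT j.2⟩ : {j // j ∈ TT})) ?_
      intro j1 j2 h
      simp only [Subtype.mk.injEq] at h
      exact Subtype.ext h
    -- lift rows from SS to I
    rw [Fintype.linearIndependent_iff]
    intro gc hgc
    rw [Fintype.linearIndependent_iff] at hliJ
    refine hliJ gc ?_
    funext i
    have := congrFun hgc ⟨i.1, hSI i.2⟩
    rw [Finset.sum_apply] at this ⊢
    simpa using this
  · intro h x hx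
    have li := h x hx
    have := li.fintype_card_le_finrank
    simpa [Module.finrank_pi, Fintype.card_coe] using this

/-- Let `P` and `Q` be bounded.  Then `(A,B)` is nondegenerate iff for every mixed
strategy `x̂ ∈ X` with `I = supp(x̂)`, `J = bestresp(x̂)` the columns of the submatrix
`B_{IJ}` are linearly independent, and for every `ŷ ∈ Y` with `K = bestresp(ŷ)`,
`L = supp(ŷ)` the rows of the submatrix `A_{KL}` are linearly independent. -/
theorem nondegenerate_iff_submatrices_full_rank {m n : ℕ}
    (A B : Matrix (Fin m) (Fin n) ℝ)
    (hP : Bornology.IsBounded (Pset B)) (hQ : Bornology.IsBounded (Qset A)) :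
    Nondegenerate A B ↔
      ((∀ x : Fin m → ℝ, IsMixed x →
          LinearIndependent ℝ (fun j : {j // j ∈ bestresp2 B x} =>
            fun i : {i // i ∈ supp x} => B i.1 j.1)) ∧
       (∀ y : Fin n → ℝ, IsMixed y →
          LinearIndependent ℝ (fun i : {i // i ∈ bestresp1 A y} =>
            fun j : {j // j ∈ supp y} => A i.1 j.1))) := by
  have h1 := onesided B hP
  have hQ' : Bornology.IsBounded (Pset Aᵀ) := by
    have hPQ : Pset Aᵀ = Qset A := by
      ext z
      simp only [Pset, Qset, Matrix.transpose_transpose, Set.mem_setOf_eq]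
      exact and_comm
    rw [hPQ]
    exact hQ
  have h2 := onesided Aᵀ hQ'
  constructor
  · rintro ⟨hB, hA⟩
    refine ⟨h1.mp hB, ?_⟩
    intro y hy
    exact h2.mp (fun y' hy' => hA y' hy') y hy
  · rintro ⟨hB, hA⟩
    refine ⟨h1.mpr hB, ?_⟩
    intro y hy
    exact h2.mpr (fun y' hy' => hA y' hy') y hy
end
end

section
/- Let (A,B) be an m×n bimatrix game such that P and Q are bounded. Then (A,B) is nondegenerate if and only if for every x̂ ∈ X and every ŷ ∈ Y the following holds: if I is the set of labels of x̂ (namely the i ∈ {1,…,m} with x̂_i = 0 together with the m+j for j ∈ bestresp(x̂)) and J is the set of labels of ŷ (namely the m+j with ŷ_j = 0 together with the i ∈ bestresp(ŷ)), then the affine dimension of P(I) is m − |I| and the affine dimension of Q(J) is n − |J|. -/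
open Matrix
open scoped Classical

noncomputable section

/-- A point `x ∈ P` has label `i` (encoded `Sum.inl i`) if `x i = 0`, and label
`m + j` (encoded `Sum.inr j`) if `(Bᵀx)_j = 1`. -/
def hasLabelP {m n : ℕ} (B : Matrix (Fin m) (Fin n) ℝ) (x : Fin m → ℝ) :
    Fin m ⊕ Fin n → Prop :=
  Sum.elim (fun i => x i = 0) (fun j => (Bᵀ *ᵥ x) j = 1)

/-- A point `y ∈ Q` has label `i` (encoded `Sum.inl i`) if `(Ay)_i = 1`, and label
`m + j` (encoded `Sum.inr j`) if `y j = 0`. -/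
def hasLabelQ {m n : ℕ} (A : Matrix (Fin m) (Fin n) ℝ) (y : Fin n → ℝ) :
    Fin m ⊕ Fin n → Prop :=
  Sum.elim (fun i => (A *ᵥ y) i = 1) (fun j => y j = 0)

/-- `P(I)`: the set of points of `P` having (at least) all the labels in `I`. -/
def PI {m n : ℕ} (B : Matrix (Fin m) (Fin n) ℝ) (I : Finset (Fin m ⊕ Fin n)) :
    Set (Fin m → ℝ) :=
  {x ∈ Pset B | ∀ l ∈ I, hasLabelP B x l}

/-- `Q(J)`: the set of points of `Q` having (at least) all the labels in `J`. -/
def QJ {m n : ℕ} (A : Matrix (Fin m) (Fin n) ℝ) (J : Finset (Fin m ⊕ Fin n)) :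
    Set (Fin n → ℝ) :=
  {y ∈ Qset A | ∀ l ∈ J, hasLabelQ A y l}

/-- The labels of a mixed strategy `x̂ ∈ X`: the `i` with `x̂ i = 0` together with the
labels `m + j` for the pure best responses `j` to `x̂`. -/
def labelsX {m n : ℕ} (B : Matrix (Fin m) (Fin n) ℝ) (x : Fin m → ℝ) :
    Finset (Fin m ⊕ Fin n) :=
  Finset.univ.filter
    (Sum.elim (fun i => x i = 0) (fun j => ∀ k, (Bᵀ *ᵥ x) k ≤ (Bᵀ *ᵥ x) j))

/-- The labels of a mixed strategy `ŷ ∈ Y`: the pure best responses `i` to `ŷ`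
together with the labels `m + j` for the `j` with `ŷ j = 0`. -/
def labelsY {m n : ℕ} (A : Matrix (Fin m) (Fin n) ℝ) (y : Fin n → ℝ) :
    Finset (Fin m ⊕ Fin n) :=
  Finset.univ.filter
    (Sum.elim (fun i => ∀ k, (A *ᵥ y) k ≤ (A *ᵥ y) i) (fun j => y j = 0))

/-- Affine dimension of a subset of `ℝ^ι`, with the empty set having dimension `-1`. -/
def affDim {ι : Type*} [Fintype ι] (s : Set (ι → ℝ)) : ℤ :=
  if s = ∅ then -1 else Module.finrank ℝ (affineSpan ℝ s).direction

section Aux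
open Finset Module

variable {m n : ℕ}

lemma mulVecT_apply (B : Matrix (Fin m) (Fin n) ℝ) (w : Fin m → ℝ) (j : Fin n) :
    (Bᵀ *ᵥ w) j = ∑ i, B i j * w i := by
  simp [Matrix.mulVec, dotProduct]

lemma mem_supp {x : Fin m → ℝ} {i : Fin m} : i ∈ supp x ↔ 0 < x i := by
  simp [supp]

lemma mem_bestresp2 {B : Matrix (Fin m) (Fin n) ℝ} {x : Fin m → ℝ} {j : Fin n} :
    j ∈ bestresp2 B x ↔ ∀ k, (Bᵀ *ᵥ x) k ≤ (Bᵀ *ᵥ x) j := by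
  simp [bestresp2]

lemma recession {B : Matrix (Fin m) (Fin n) ℝ} (hP : Bornology.IsBounded (Pset B))
    {d : Fin m → ℝ} (h0 : ∀ i, 0 ≤ d i) (h1 : ∀ j, (Bᵀ *ᵥ d) j ≤ 0) : d = 0 := by
  by_contra hd
  obtain ⟨r, hr⟩ := hP.subset_closedBall 0
  have hdn : 0 < ‖d‖ := norm_pos_iff.mpr hd
  set t : ℝ := (|r| + 1) / ‖d‖ with ht
  have htpos : 0 < t := by positivity
  have hmem : t • d ∈ Pset B := by
    refine ⟨fun i => by simpa using mul_nonneg htpos.le (h0 i), fun j => ?_⟩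
    rw [Matrix.mulVec_smul]
    have := h1 j
    have : t * (Bᵀ *ᵥ d) j ≤ 0 := mul_nonpos_of_nonneg_of_nonpos htpos.le this
    simpa using this.trans zero_le_one
  have := hr hmem
  rw [Metric.mem_closedBall, dist_zero_right, norm_smul, Real.norm_eq_abs,
    abs_of_pos htpos] at this
  rw [ht, div_mul_cancel₀ _ (ne_of_gt hdn)] at this
  have : |r| + 1 ≤ r := this
  have := le_abs_self r
  linarith

lemma exists_pos_payoff {B : Matrix (Fin m) (Fin n) ℝ} (hP : Bornology.IsBounded (Pset B))
    {x : Fin m → ℝ} (hx : IsMixed x) : ∃ j, 0 < (Bᵀ *ᵥ x) j := by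
  by_contra h
  push_neg at h
  have hx0 : x = 0 := recession hP hx.1 h
  rw [hx0] at hx
  simpa using hx.2

end Aux

section Aux2
open Finset Module

variable {m n : ℕ}

def ext0 {m : ℕ} (S : Finset (Fin m)) (e : {i // i ∈ S} → ℝ) : Fin m → ℝ :=
  fun i => if h : i ∈ S then e ⟨i, h⟩ else 0

lemma ext0_mem {S : Finset (Fin m)} {e : {i // i ∈ S} → ℝ} {i : Fin m} (h : i ∈ S) :
    ext0 S e i = e ⟨i, h⟩ := dif_pos h

lemma ext0_not_mem {S : Finset (Fin m)} {e : {i // i ∈ S} → ℝ} {i : Fin m} (h : i ∉ S) :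
    ext0 S e i = 0 := dif_neg h

lemma sum_mul_ext0 (S : Finset (Fin m)) (e : {i // i ∈ S} → ℝ) (f : Fin m → ℝ) :
    ∑ i, f i * ext0 S e i = ∑ i : {i // i ∈ S}, f (i : Fin m) * e i := by
  rw [← Finset.sum_subset (Finset.subset_univ S)
    (fun i _ hi => by rw [ext0_not_mem hi, mul_zero])]
  rw [← Finset.sum_attach S (fun i => f i * ext0 S e i), Finset.univ_eq_attach]
  exact Finset.sum_congr rfl fun i _ => by rw [ext0_mem i.2]

lemma exists_kernel_vec {B : Matrix (Fin m) (Fin n) ℝ} {S : Finset (Fin m)}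
    {K : Finset (Fin n)} (hbs : K.card ≤ S.card)
    (hdep : ¬ LinearIndependent ℝ
      (fun j : {j // j ∈ K} => fun i : {i // i ∈ S} => B (i : Fin m) (j : Fin n))) :
    ∃ d : {i // i ∈ S} → ℝ, d ≠ 0 ∧
      ∀ j : {j // j ∈ K}, ∑ i : {i // i ∈ S}, B (i : Fin m) (j : Fin n) * d i = 0 := by
  classical
  set N : Matrix {j // j ∈ K} {i // i ∈ S} ℝ := fun j i => B (i : Fin m) (j : Fin n) with hN
  obtain ⟨g, hg0, j₀, hj₀⟩ := Fintype.not_linearIndependent_iff.mp hdep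
  have hgker : g ∈ LinearMap.ker Nᵀ.mulVecLin := by
    rw [LinearMap.mem_ker]
    ext i
    have := congrFun hg0 i
    simpa [Matrix.mulVecLin_apply, Matrix.vecMul, Matrix.mulVec, dotProduct,
      Matrix.transpose_apply, Finset.univ_eq_attach, mul_comm] using this
  have hkerT : 0 < finrank ℝ (LinearMap.ker Nᵀ.mulVecLin) := by
    rw [Module.finrank_pos_iff]
    exact ⟨⟨g, hgker⟩, 0, by simp [Subtype.ext_iff]; exact fun h => hj₀ (congrFun h j₀)⟩
  have hrankT : Nᵀ.rank < K.card := by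
    have := LinearMap.finrank_range_add_finrank_ker Nᵀ.mulVecLin
    rw [finrank_pi, Fintype.card_coe] at this
    unfold Matrix.rank
    omega
  have hrank : N.rank < S.card := by
    have := Matrix.rank_transpose N
    omega
  have hker : 0 < finrank ℝ (LinearMap.ker N.mulVecLin) := by
    have := LinearMap.finrank_range_add_finrank_ker N.mulVecLin
    rw [finrank_pi, Fintype.card_coe] at this
    unfold Matrix.rank at hrank
    omega
  rw [Module.finrank_pos_iff] at hker
  obtain ⟨⟨d, hdker⟩, hdne⟩ := exists_ne (0 : LinearMap.ker N.mulVecLin)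
  refine ⟨d, ?_, ?_⟩
  · simpa [Subtype.ext_iff] using hdne
  · intro j
    rw [LinearMap.mem_ker] at hdker
    have : (N *ᵥ d) j = 0 := congrFun hdker j
    simpa [Matrix.mulVecLin_apply, Matrix.mulVec, dotProduct, hN] using this

end Aux2

section Aux3
open Finset Module

variable {m n : ℕ}

lemma step_lemma {B : Matrix (Fin m) (Fin n) ℝ} (hP : Bornology.IsBounded (Pset B))
    {x : Fin m → ℝ} (hx : IsMixed x)
    (hbs : (bestresp2 B x).card ≤ (supp x).card)
    (hdep : ¬ LinearIndependent ℝ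
      (fun j : {j // j ∈ bestresp2 B x} => fun i : {i // i ∈ supp x} =>
        B (i : Fin m) (j : Fin n))) :
    ∃ x' : Fin m → ℝ, IsMixed x' ∧ supp x' ⊆ supp x ∧ bestresp2 B x ⊆ bestresp2 B x' ∧
      ((supp x').card < (supp x).card ∨ (bestresp2 B x).card < (bestresp2 B x').card) := by
  classical
  set S := supp x with hS
  set K := bestresp2 B x with hK
  set w := Bᵀ *ᵥ x with hw
  have hxS : ∀ i, i ∉ S → x i = 0 := by
    intro i hi
    rw [hS, mem_supp, not_lt] at hi
    exact le_antisymm hi (hx.1 i)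
  obtain ⟨jp, hjp⟩ := exists_pos_payoff hP hx
  obtain ⟨j₀, -, hj₀⟩ := Finset.exists_max_image Finset.univ (fun k => w k) ⟨jp, mem_univ _⟩
  have hj₀' : ∀ k, w k ≤ w j₀ := fun k => hj₀ k (mem_univ k)
  set v := w j₀ with hv
  have hvpos : 0 < v := lt_of_lt_of_le hjp (hj₀' jp)
  have hj₀K : j₀ ∈ K := mem_bestresp2.mpr hj₀'
  have hvK : ∀ j ∈ K, w j = v := fun j hj =>
    le_antisymm (hj₀' j) ((mem_bestresp2.mp hj) j₀)
  have hvnK : ∀ j, j ∉ K → w j < v := by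
    intro j hj
    rcases lt_or_eq_of_le (hj₀' j) with h | h
    · exact h
    · exact absurd (mem_bestresp2.mpr (fun k => le_trans (hj₀' k) (le_of_eq h.symm))) hj
  obtain ⟨d, hd0, hdker⟩ := exists_kernel_vec (B := B) hbs hdep
  set dbar := ext0 S d with hdbar
  set u := Bᵀ *ᵥ dbar with hu
  have huK : ∀ j ∈ K, u j = 0 := by
    intro j hj
    rw [hu, mulVecT_apply, sum_mul_ext0]
    exact hdker ⟨j, hj⟩
  -- the event set
  set E : Finset ℝ :=
    ((S.filter (fun i => dbar i < 0)).image (fun i => x i / (-dbar i))) ∪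
    ((Finset.univ.filter (fun j => j ∉ K ∧ 0 < u j)).image (fun j => (v - w j) / u j))
    with hE
  have hEne : E.Nonempty := by
    by_contra hEe
    have hA : ∀ i ∈ S, 0 ≤ dbar i := by
      intro i hi
      by_contra h
      exact hEe ⟨_, mem_union_left _ (mem_image_of_mem _
        (mem_filter.mpr ⟨hi, lt_of_not_ge h⟩))⟩
    have hU : ∀ j, j ∉ K → u j ≤ 0 := by
      intro j hj
      by_contra h
      exact hEe ⟨_, mem_union_right _ (mem_image_of_mem _
        (mem_filter.mpr ⟨mem_univ _, hj, lt_of_not_ge h⟩))⟩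
    have hdbar0 : dbar = 0 := by
      apply recession hP
      · intro i
        by_cases hi : i ∈ S
        · exact hA i hi
        · rw [hdbar, ext0_not_mem hi]
      · intro j
        by_cases hj : j ∈ K
        · rw [← hu, huK j hj]
        · exact hU j hj
    apply hd0
    funext i
    have := congrFun hdbar0 (i : Fin m)
    rwa [hdbar, ext0_mem i.2, Subtype.coe_eta, Pi.zero_apply] at this
  set t := E.min' hEne with hts
  have htpos : 0 < t := by
    rw [hts, Finset.lt_min'_iff]
    intro b hb
    rw [hE, mem_union] at hb
    rcases hb with hb | hb
    · obtain ⟨i, hi, rfl⟩ := mem_image.mp hb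
      obtain ⟨hiS, hid⟩ := mem_filter.mp hi
      have hxi : 0 < x i := mem_supp.mp hiS
      exact div_pos hxi (by linarith)
    · obtain ⟨j, hj, rfl⟩ := mem_image.mp hb
      obtain ⟨-, hjK, hju⟩ := mem_filter.mp hj
      exact div_pos (by linarith [hvnK j hjK]) hju
  set z := x + t • dbar with hz
  have hzap : ∀ i, z i = x i + t * dbar i := fun i => rfl
  have hznS : ∀ i, i ∉ S → z i = 0 := by
    intro i hi
    rw [hzap, hxS i hi, hdbar, ext0_not_mem hi, mul_zero, add_zero]
  have hz0 : ∀ i, 0 ≤ z i := by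
    intro i
    by_cases hi : i ∈ S
    · by_cases hd : dbar i < 0
      · have hmem : x i / (-dbar i) ∈ E :=
          mem_union_left _ (mem_image_of_mem _ (mem_filter.mpr ⟨hi, hd⟩))
        have := Finset.min'_le E _ hmem
        rw [← hts, le_div_iff₀ (by linarith : (0:ℝ) < -dbar i)] at this
        rw [hzap]; nlinarith
      · push_neg at hd
        rw [hzap]
        have := hx.1 i
        nlinarith
    · rw [hznS i hi]
  have hBz : ∀ j, (Bᵀ *ᵥ z) j = w j + t * u j := by
    intro j
    rw [hz, Matrix.mulVec_add, Matrix.mulVec_smul]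
    simp [hw, hu]
  have hzK : ∀ j ∈ K, (Bᵀ *ᵥ z) j = v := by
    intro j hj
    rw [hBz, huK j hj, mul_zero, add_zero, hvK j hj]
  have hzle : ∀ j, (Bᵀ *ᵥ z) j ≤ v := by
    intro j
    by_cases hj : j ∈ K
    · exact (hzK j hj).le
    · rw [hBz]
      by_cases hju : 0 < u j
      · have hmem : (v - w j) / u j ∈ E :=
          mem_union_right _ (mem_image_of_mem _ (mem_filter.mpr ⟨mem_univ _, hj, hju⟩))
        have := Finset.min'_le E _ hmem
        rw [← hts, le_div_iff₀ hju] at this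
        linarith
      · push_neg at hju
        have := hvnK j hj
        nlinarith
  have hzne : ∃ i, 0 < z i := by
    by_contra h
    push_neg at h
    have hz00 : z = 0 := funext fun i => le_antisymm (h i) (hz0 i)
    have := hzK j₀ hj₀K
    rw [hz00] at this
    simp [Matrix.mulVec_zero] at this
    linarith
  set σ := ∑ i, z i with hσ
  have hσpos : 0 < σ := by
    obtain ⟨i, hi⟩ := hzne
    exact Finset.sum_pos' (fun i _ => hz0 i) ⟨i, mem_univ i, hi⟩
  set x' := σ⁻¹ • z with hx'
  have hinv : 0 < σ⁻¹ := inv_pos.mpr hσpos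
  have hx'm : IsMixed x' := by
    constructor
    · intro i
      have := hz0 i
      have : 0 ≤ σ⁻¹ * z i := mul_nonneg hinv.le this
      simpa [hx'] using this
    · rw [hx']
      simp only [Pi.smul_apply, smul_eq_mul, ← Finset.mul_sum]
      rw [← hσ, inv_mul_cancel₀ (ne_of_gt hσpos)]
  have hsuppx' : ∀ i, i ∈ supp x' ↔ 0 < z i := by
    intro i
    rw [mem_supp, hx']
    simp only [Pi.smul_apply, smul_eq_mul]
    constructor
    · intro h; nlinarith
    · intro h; positivity
  have hsupp_sub : supp x' ⊆ S := by
    intro i hi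
    rw [hsuppx' i] at hi
    by_contra hiS
    rw [hznS i hiS] at hi
    exact lt_irrefl 0 hi
  have hBx' : ∀ j, (Bᵀ *ᵥ x') j = σ⁻¹ * (Bᵀ *ᵥ z) j := by
    intro j
    rw [hx', Matrix.mulVec_smul]
    simp
  have hbr_sub : K ⊆ bestresp2 B x' := by
    intro j hj
    rw [mem_bestresp2]
    intro k
    rw [hBx', hBx', hzK j hj]
    exact mul_le_mul_of_nonneg_left (hzle k) hinv.le
  refine ⟨x', hx'm, hsupp_sub, hbr_sub, ?_⟩
  have htE : t ∈ E := Finset.min'_mem E hEne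
  rw [hE, mem_union] at htE
  rcases htE with hb | hb
  · -- a support coordinate vanishes
    obtain ⟨i₀, hi₀, hti⟩ := mem_image.mp hb
    obtain ⟨hi₀S, hi₀d⟩ := mem_filter.mp hi₀
    left
    have hzi₀ : z i₀ = 0 := by
      have hdne : dbar i₀ ≠ 0 := ne_of_lt hi₀d
      rw [hzap, ← hti, div_neg, neg_mul, div_mul_cancel₀ _ hdne]
      ring
    have hi₀n : i₀ ∉ supp x' := by
      rw [hsuppx', hzi₀]
      exact lt_irrefl 0
    exact Finset.card_lt_card (Finset.ssubset_iff_of_subset hsupp_sub |>.mpr ⟨i₀, hi₀S, hi₀n⟩)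
  · -- a new best response appears
    obtain ⟨j₁, hj₁, htj⟩ := mem_image.mp hb
    obtain ⟨-, hj₁K, hj₁u⟩ := mem_filter.mp hj₁
    right
    have hzj₁ : (Bᵀ *ᵥ z) j₁ = v := by
      have hune : u j₁ ≠ 0 := ne_of_gt hj₁u
      rw [hBz, ← htj, div_mul_cancel₀ _ hune]
      ring
    have hj₁br : j₁ ∈ bestresp2 B x' := by
      rw [mem_bestresp2]
      intro k
      rw [hBx', hBx', hzj₁]
      exact mul_le_mul_of_nonneg_left (hzle k) hinv.le
    exact Finset.card_lt_card (Finset.ssubset_iff_of_subset hbr_sub |>.mpr ⟨j₁, hj₁br, hj₁K⟩)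
end Aux3

section Aux4
open Finset Module

variable {m n : ℕ}

lemma dep_mono {B : Matrix (Fin m) (Fin n) ℝ} {S' S : Finset (Fin m)}
    {K K' : Finset (Fin n)} (hS : S' ⊆ S) (hK : K ⊆ K')
    (h : ¬ LinearIndependent ℝ
      (fun j : {j // j ∈ K} => fun i : {i // i ∈ S} => B (i : Fin m) (j : Fin n))) :
    ¬ LinearIndependent ℝ
      (fun j : {j // j ∈ K'} => fun i : {i // i ∈ S'} => B (i : Fin m) (j : Fin n)) := by
  classical
  rw [Fintype.not_linearIndependent_iff] at h ⊢
  obtain ⟨g, hg, j₀, hj₀⟩ := h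
  set G : Fin n → ℝ := fun j => if h : j ∈ K then g ⟨j, h⟩ else 0 with hG
  refine ⟨fun j => G (j : Fin n), ?_, ⟨(j₀ : Fin n), hK j₀.2⟩, ?_⟩
  · funext i
    have hthis := congrFun hg ⟨(i : Fin m), hS i.2⟩
    simp only [Finset.sum_apply, Pi.smul_apply, smul_eq_mul, Pi.zero_apply] at hthis ⊢
    set F : Fin n → ℝ := fun j => G j * B (i : Fin m) j with hF
    have e1 : ∑ j : {j // j ∈ K'}, G (j : Fin n) * B (i : Fin m) (j : Fin n)
        = ∑ j ∈ K', F j := Finset.sum_coe_sort K' F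
    have e2 : ∑ j ∈ K', F j = ∑ j ∈ K, F j := by
      refine (Finset.sum_subset hK ?_).symm
      intro j _ hjK
      rw [hF, hG]
      simp [dif_neg hjK]
    have e3 : ∑ j ∈ K, F j = ∑ j : {j // j ∈ K}, F (j : Fin n) :=
      (Finset.sum_coe_sort K F).symm
    have e4 : ∑ j : {j // j ∈ K}, F (j : Fin n)
        = ∑ j : {j // j ∈ K}, g j * B (i : Fin m) (j : Fin n) := by
      apply Finset.sum_congr rfl
      intro j _
      rw [hF, hG]
      simp only [dif_pos j.2, Subtype.coe_eta]
    rw [e1, e2, e3, e4]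
    exact hthis
  · show G (j₀ : Fin n) ≠ 0
    rw [hG]
    simp only [dif_pos j₀.2, Subtype.coe_eta]
    exact hj₀

lemma witness_lemma {B : Matrix (Fin m) (Fin n) ℝ} (hP : Bornology.IsBounded (Pset B)) :
    ∀ N : ℕ, ∀ x : Fin m → ℝ, IsMixed x →
      (supp x).card ≤ N + (bestresp2 B x).card →
      ¬ LinearIndependent ℝ
        (fun j : {j // j ∈ bestresp2 B x} => fun i : {i // i ∈ supp x} =>
          B (i : Fin m) (j : Fin n)) →
      ∃ x' : Fin m → ℝ, IsMixed x' ∧ (supp x').card < (bestresp2 B x').card := by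
  intro N
  induction N with
  | zero =>
    intro x hx hcard hdep
    rcases lt_or_ge (supp x).card (bestresp2 B x).card with h | h
    · exact ⟨x, hx, h⟩
    · obtain ⟨x', hx'm, hsub, hbsub, hlt⟩ := step_lemma hP hx h hdep
      have h1 := Finset.card_le_card hsub
      have h2 := Finset.card_le_card hbsub
      exact ⟨x', hx'm, by omega⟩
  | succ N ih =>
    intro x hx hcard hdep
    rcases lt_or_ge (supp x).card (bestresp2 B x).card with h | h
    · exact ⟨x, hx, h⟩
    · obtain ⟨x', hx'm, hsub, hbsub, hlt⟩ := step_lemma hP hx h hdep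
      have h1 := Finset.card_le_card hsub
      have h2 := Finset.card_le_card hbsub
      exact ih x' hx'm (by omega) (dep_mono hsub hbsub hdep)

lemma indep_of_nondeg {B : Matrix (Fin m) (Fin n) ℝ} (hP : Bornology.IsBounded (Pset B))
    (hnd : ∀ x : Fin m → ℝ, IsMixed x → (bestresp2 B x).card ≤ (supp x).card)
    {x : Fin m → ℝ} (hx : IsMixed x) :
    LinearIndependent ℝ
      (fun j : {j // j ∈ bestresp2 B x} => fun i : {i // i ∈ supp x} =>
        B (i : Fin m) (j : Fin n)) := by
  by_contra hdep
  obtain ⟨x', hx'm, hlt⟩ :=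
    witness_lemma hP (supp x).card x hx (Nat.le_add_right _ _) hdep
  exact absurd (hnd x' hx'm) (not_le.mpr hlt)

end Aux4

section Aux5
open Finset Module

variable {m n : ℕ}

lemma mem_labelsX_inl {B : Matrix (Fin m) (Fin n) ℝ} {x : Fin m → ℝ} {i : Fin m} :
    Sum.inl i ∈ labelsX B x ↔ x i = 0 := by simp [labelsX]

lemma mem_labelsX_inr {B : Matrix (Fin m) (Fin n) ℝ} {x : Fin m → ℝ} {j : Fin n} :
    Sum.inr j ∈ labelsX B x ↔ j ∈ bestresp2 B x := by simp [labelsX, bestresp2]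

lemma not_mem_supp_iff {x : Fin m → ℝ} (hx : ∀ i, 0 ≤ x i) {i : Fin m} :
    i ∉ supp x ↔ x i = 0 := by
  rw [mem_supp, not_lt]
  exact ⟨fun h => le_antisymm h (hx i), fun h => le_of_eq h⟩

lemma card_labelsX {B : Matrix (Fin m) (Fin n) ℝ} {x : Fin m → ℝ} (hx : ∀ i, 0 ≤ x i) :
    (labelsX B x).card = (m - (supp x).card) + (bestresp2 B x).card := by
  classical
  rw [← Finset.card_toLeft_add_card_toRight (u := labelsX B x)]
  have h1 : (labelsX B x).toLeft = (supp x)ᶜ := by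
    ext i
    rw [Finset.mem_toLeft, mem_labelsX_inl, Finset.mem_compl, not_mem_supp_iff hx]
  have h2 : (labelsX B x).toRight = bestresp2 B x := by
    ext j
    rw [Finset.mem_toRight, mem_labelsX_inr]
  rw [h1, h2, Finset.card_compl, Fintype.card_fin]

lemma payoff_max {B : Matrix (Fin m) (Fin n) ℝ} (hP : Bornology.IsBounded (Pset B))
    {x : Fin m → ℝ} (hx : IsMixed x) :
    ∃ v : ℝ, 0 < v ∧ (∀ j ∈ bestresp2 B x, (Bᵀ *ᵥ x) j = v) ∧
      (∀ j ∉ bestresp2 B x, (Bᵀ *ᵥ x) j < v) := by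
  obtain ⟨jp, hjp⟩ := exists_pos_payoff hP hx
  obtain ⟨j₀, -, hj₀⟩ := Finset.exists_max_image Finset.univ (fun k => (Bᵀ *ᵥ x) k)
    ⟨jp, Finset.mem_univ _⟩
  have hj₀' : ∀ k, (Bᵀ *ᵥ x) k ≤ (Bᵀ *ᵥ x) j₀ := fun k => hj₀ k (Finset.mem_univ k)
  refine ⟨(Bᵀ *ᵥ x) j₀, lt_of_lt_of_le hjp (hj₀' jp), ?_, ?_⟩
  · exact fun j hj => le_antisymm (hj₀' j) ((mem_bestresp2.mp hj) j₀)
  · intro j hj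
    rcases lt_or_eq_of_le (hj₀' j) with h | h
    · exact h
    · exact absurd (mem_bestresp2.mpr (fun k => le_trans (hj₀' k) (le_of_eq h.symm))) hj

end Aux5

section Aux6
open Finset Module

variable {m n : ℕ}

lemma dim_PI {B : Matrix (Fin m) (Fin n) ℝ} (hP : Bornology.IsBounded (Pset B))
    (hnd : ∀ x : Fin m → ℝ, IsMixed x → (bestresp2 B x).card ≤ (supp x).card)
    {x : Fin m → ℝ} (hx : IsMixed x) :
    affDim (PI B (labelsX B x)) = (m : ℤ) - (labelsX B x).card := by
  classical
  set S := supp x with hS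
  set K := bestresp2 B x with hK
  have hbs : K.card ≤ S.card := hnd x hx
  have hsm : S.card ≤ m := by
    have := Finset.card_le_univ S
    simpa using this
  have hind := indep_of_nondeg hP hnd hx
  obtain ⟨v, hvpos, hvK, hvnK⟩ := payoff_max hP hx
  have hxS0 : ∀ i, i ∉ S → x i = 0 := fun i hi => (not_mem_supp_iff hx.1).mp hi
  -- the linear map whose kernel is the direction of the affine hull
  set Φ : (Fin m → ℝ) →ₗ[ℝ] ({i // i ∉ S} → ℝ) × ({j // j ∈ K} → ℝ) :=
    LinearMap.prod (LinearMap.pi fun i => LinearMap.proj (i : Fin m))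
      (LinearMap.pi fun j => (LinearMap.proj (j : Fin n)).comp (Matrix.mulVecLin Bᵀ)) with hΦ
  have hΦ1 : ∀ (w : Fin m → ℝ) (i : {i // i ∉ S}), (Φ w).1 i = w (i : Fin m) := fun w i => rfl
  have hΦ2 : ∀ (w : Fin m → ℝ) (j : {j // j ∈ K}), (Φ w).2 j = (Bᵀ *ᵥ w) (j : Fin n) :=
    fun w j => rfl
  have hker : ∀ w : Fin m → ℝ, w ∈ LinearMap.ker Φ ↔
      ((∀ i, i ∉ S → w i = 0) ∧ ∀ j, j ∈ K → (Bᵀ *ᵥ w) j = 0) := by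
    intro w
    rw [LinearMap.mem_ker, Prod.ext_iff]
    constructor
    · rintro ⟨h1, h2⟩
      constructor
      · intro i hi
        have := congrFun h1 ⟨i, hi⟩
        rwa [hΦ1] at this
      · intro j hj
        have := congrFun h2 ⟨j, hj⟩
        rwa [hΦ2] at this
    · rintro ⟨h1, h2⟩
      constructor
      · funext i
        rw [hΦ1]
        exact h1 i i.2
      · funext j
        rw [hΦ2]
        exact h2 j j.2
  -- surjectivity of the matrix part
  set N : Matrix {j // j ∈ K} {i // i ∈ S} ℝ := fun j i => B (i : Fin m) (j : Fin n) with hN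
  have hNrank : N.rank = K.card := by
    have h1 : Nᵀ.rank = K.card := by
      rw [Matrix.rank_eq_finrank_span_cols]
      change finrank ℝ (Submodule.span ℝ (Set.range N)) = _
      rw [finrank_span_eq_card hind]
      simp [hK]
    rw [← Matrix.rank_transpose, h1]
  have hNsurj : Function.Surjective N.mulVecLin := by
    rw [← LinearMap.range_eq_top]
    apply Submodule.eq_top_of_finrank_eq
    have h2 : finrank ℝ (LinearMap.range N.mulVecLin) = N.rank := rfl
    rw [h2, hNrank, finrank_pi, Fintype.card_coe]
  have hΦsurj : Function.Surjective Φ := by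
    rintro ⟨a, c⟩
    set d₀ : Fin m → ℝ := fun i => if h : i ∈ S then 0 else a ⟨i, h⟩ with hd₀
    obtain ⟨e, he⟩ := hNsurj (fun j => c j - (Bᵀ *ᵥ d₀) (j : Fin n))
    refine ⟨d₀ + ext0 S e, ?_⟩
    have hext : ∀ j : {j // j ∈ K}, (Bᵀ *ᵥ ext0 S e) (j : Fin n)
        = ∑ i : {i // i ∈ S}, B (i : Fin m) (j : Fin n) * e i := by
      intro j
      rw [mulVecT_apply, sum_mul_ext0]
    ext q
    · rw [hΦ1]
      simp only [Pi.add_apply]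
      rw [hd₀]
      simp only [dif_neg q.2]
      rw [ext0_not_mem q.2, add_zero]
    · rw [hΦ2, Matrix.mulVec_add]
      simp only [Pi.add_apply]
      rw [hext q]
      have h5 := congrFun he q
      rw [Matrix.mulVecLin_apply] at h5
      have h6 : (N *ᵥ e) q = ∑ i : {i // i ∈ S}, B (i : Fin m) (q : Fin n) * e i := by
        simp [Matrix.mulVec, dotProduct, hN]
      rw [h6] at h5
      linarith
  have hkerrank : finrank ℝ (LinearMap.ker Φ) = S.card - K.card := by
    have h1 := LinearMap.finrank_range_add_finrank_ker Φ
    rw [LinearMap.range_eq_top.mpr hΦsurj, finrank_top, Module.finrank_prod,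
      finrank_pi, finrank_pi, finrank_pi, Fintype.card_fin, Fintype.card_coe,
      Fintype.card_subtype_compl, Fintype.card_fin, Fintype.card_coe] at h1
    omega
  -- the canonical point x* = v⁻¹ • x in the relative interior
  have hinv : 0 < v⁻¹ := inv_pos.mpr hvpos
  set xs : Fin m → ℝ := v⁻¹ • x with hxs
  have hxsap : ∀ i, xs i = v⁻¹ * x i := fun i => rfl
  have hBxs : ∀ j, (Bᵀ *ᵥ xs) j = v⁻¹ * (Bᵀ *ᵥ x) j := by
    intro j
    rw [hxs, Matrix.mulVec_smul]
    simp
  have hxs0 : ∀ i, i ∉ S → xs i = 0 := by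
    intro i hi
    rw [hxsap, hxS0 i hi, mul_zero]
  have hxsK : ∀ j ∈ K, (Bᵀ *ᵥ xs) j = 1 := fun j hj => by
    rw [hBxs, hvK j hj, inv_mul_cancel₀ (ne_of_gt hvpos)]
  have hxsPI : xs ∈ PI B (labelsX B x) := by
    refine ⟨⟨fun i => mul_nonneg hinv.le (hx.1 i), fun j => ?_⟩, ?_⟩
    · rw [hBxs]
      by_cases hj : j ∈ K
      · rw [hvK j hj, inv_mul_cancel₀ (ne_of_gt hvpos)]
      · have h7 := hvnK j hj
        calc v⁻¹ * (Bᵀ *ᵥ x) j ≤ v⁻¹ * v := by nlinarith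
        _ = 1 := inv_mul_cancel₀ (ne_of_gt hvpos)
    · intro l hl
      cases l with
      | inl i =>
        have h8 := mem_labelsX_inl.mp hl
        show xs i = 0
        rw [hxsap, h8, mul_zero]
      | inr j =>
        have hj := mem_labelsX_inr.mp hl
        exact hxsK j hj
  set AS : AffineSubspace ℝ (Fin m → ℝ) := AffineSubspace.mk' xs (LinearMap.ker Φ) with hAS
  have hsub : PI B (labelsX B x) ⊆ (AS : Set (Fin m → ℝ)) := by
    intro p hp
    rw [hAS, AffineSubspace.mem_coe, AffineSubspace.mem_mk', hker]
    constructor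
    · intro i hi
      have hp0 : p i = 0 := hp.2 (Sum.inl i) (mem_labelsX_inl.mpr (hxS0 i hi))
      rw [vsub_eq_sub, Pi.sub_apply, hp0, hxs0 i hi, sub_zero]
    · intro j hj
      have hp1 : (Bᵀ *ᵥ p) j = 1 := hp.2 (Sum.inr j) (mem_labelsX_inr.mpr hj)
      rw [vsub_eq_sub, Matrix.mulVec_sub, Pi.sub_apply, hp1, hxsK j hj, sub_self]
  have hsup : AS ≤ affineSpan ℝ (PI B (labelsX B x)) := by
    intro p hp
    rw [hAS, AffineSubspace.mem_mk', hker] at hp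
    obtain ⟨hp1, hp2⟩ := hp
    have hpe1 : ∀ i, i ∉ S → p i = 0 := by
      intro i hi
      have := hp1 i hi
      rw [vsub_eq_sub, Pi.sub_apply, hxs0 i hi, sub_zero] at this
      exact this
    have hpe2 : ∀ j ∈ K, (Bᵀ *ᵥ p) j = 1 := by
      intro j hj
      have := hp2 j hj
      rw [vsub_eq_sub, Matrix.mulVec_sub, Pi.sub_apply, hxsK j hj] at this
      linarith
    set line : ℝ → (Fin m → ℝ) := fun t => xs + t • (p - xs) with hline
    have hlc : Continuous line := continuous_const.add (continuous_id.smul continuous_const)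
    set U : Set (Fin m → ℝ) :=
      (⋂ i ∈ S, {q : Fin m → ℝ | 0 < q i}) ∩
      (⋂ j ∈ (Finset.univ \ K), {q : Fin m → ℝ | (Bᵀ *ᵥ q) j < 1}) with hU
    have hUopen : IsOpen U := by
      apply IsOpen.inter
      · apply isOpen_biInter_finset
        intro i _
        exact isOpen_lt continuous_const (continuous_apply i)
      · apply isOpen_biInter_finset
        intro j _
        exact isOpen_lt
          ((continuous_apply j).comp Bᵀ.mulVecLin.continuous_of_finiteDimensional)
          continuous_const
    have hxsU : xs ∈ U := by
      constructor
      · rw [Set.mem_iInter₂]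
        intro i hi
        have : 0 < x i := mem_supp.mp hi
        show 0 < xs i
        rw [hxsap]
        positivity
      · rw [Set.mem_iInter₂]
        intro j hj
        have hjK : j ∉ K := (Finset.mem_sdiff.mp hj).2
        show (Bᵀ *ᵥ xs) j < 1
        rw [hBxs]
        calc v⁻¹ * (Bᵀ *ᵥ x) j < v⁻¹ * v := by
              have := hvnK j hjK
              nlinarith
        _ = 1 := inv_mul_cancel₀ (ne_of_gt hvpos)
    have hnhds : line ⁻¹' U ∈ nhds (0 : ℝ) := by
      apply hlc.continuousAt.preimage_mem_nhds
      have h9 : line 0 = xs := by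
        rw [hline]
        simp
      rw [h9]
      exact hUopen.mem_nhds hxsU
    obtain ⟨ε, hεpos, hεsub⟩ := Metric.mem_nhds_iff.mp hnhds
    set t := ε / 2 with ht
    have htpos : 0 < t := by positivity
    have htU : line t ∈ U := by
      apply hεsub
      rw [Metric.mem_ball, dist_zero_right, Real.norm_eq_abs, abs_of_pos htpos]
      rw [ht]
      linarith
    have hlineap : ∀ i, line t i = xs i + t * (p i - xs i) := fun i => rfl
    have hBline : ∀ j, (Bᵀ *ᵥ line t) j
        = (Bᵀ *ᵥ xs) j + t * ((Bᵀ *ᵥ p) j - (Bᵀ *ᵥ xs) j) := by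
      intro j
      have hterm : ∀ i, B i j * (xs i + t * (p i - xs i))
          = B i j * xs i + t * (B i j * p i - B i j * xs i) := fun i => by ring
      simp only [mulVecT_apply, hlineap, hterm]
      rw [Finset.sum_add_distrib, ← Finset.mul_sum, Finset.sum_sub_distrib]
    obtain ⟨hU1, hU2⟩ := htU
    rw [Set.mem_iInter₂] at hU1 hU2
    have hU2' : ∀ j, j ∉ K → (Bᵀ *ᵥ line t) j < 1 := fun j hj =>
      hU2 j (Finset.mem_sdiff.mpr ⟨Finset.mem_univ j, hj⟩)
    have hlinePI : line t ∈ PI B (labelsX B x) := by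
      refine ⟨⟨?_, ?_⟩, ?_⟩
      · intro i
        by_cases hi : i ∈ S
        · exact (hU1 i hi).le
        · rw [hlineap i, hpe1 i hi, hxs0 i hi]
          simp
      · intro j
        by_cases hj : j ∈ K
        · rw [hBline, hpe2 j hj, hxsK j hj]
          simp
        · exact (hU2' j hj).le
      · intro l hl
        cases l with
        | inl i =>
          have h8 := mem_labelsX_inl.mp hl
          have hi : i ∉ S := by
            rw [hS, mem_supp, h8]
            exact lt_irrefl 0
          show line t i = 0
          rw [hlineap i, hpe1 i hi, hxs0 i hi]
          simp
        | inr j =>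
          have hj := mem_labelsX_inr.mp hl
          show (Bᵀ *ᵥ line t) j = 1
          rw [hBline, hpe2 j hj, hxsK j hj]
          simp
    have hxsSpan : xs ∈ affineSpan ℝ (PI B (labelsX B x)) :=
      subset_affineSpan ℝ _ hxsPI
    have hlSpan : line t ∈ affineSpan ℝ (PI B (labelsX B x)) :=
      subset_affineSpan ℝ _ hlinePI
    have hmem := AffineSubspace.smul_vsub_vadd_mem (affineSpan ℝ (PI B (labelsX B x)))
      t⁻¹ hlSpan hxsSpan hxsSpan
    have heq : t⁻¹ • (line t -ᵥ xs) +ᵥ xs = p := by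
      have h10 : line t -ᵥ xs = t • (p - xs) := by
        show (xs + t • (p - xs)) -ᵥ xs = t • (p - xs)
        rw [vsub_eq_sub]
        exact add_sub_cancel_left xs _
      rw [h10, smul_smul, inv_mul_cancel₀ (ne_of_gt htpos), one_smul, vadd_eq_add]
      exact sub_add_cancel p xs
    rw [heq] at hmem
    exact hmem
  have hspan : affineSpan ℝ (PI B (labelsX B x)) = AS :=
    le_antisymm (affineSpan_le.mpr hsub) hsup
  have hne : PI B (labelsX B x) ≠ ∅ := Set.nonempty_iff_ne_empty.mp ⟨xs, hxsPI⟩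
  rw [affDim, if_neg hne, hspan, hAS, AffineSubspace.direction_mk', hkerrank,
    card_labelsX hx.1]
  rw [← hS, ← hK]
  omega

end Aux6

section Aux7
open Finset Module

variable {m n : ℕ}

lemma PI_nonempty {B : Matrix (Fin m) (Fin n) ℝ} (hP : Bornology.IsBounded (Pset B))
    {x : Fin m → ℝ} (hx : IsMixed x) : (PI B (labelsX B x)).Nonempty := by
  obtain ⟨v, hvpos, hvK, hvnK⟩ := payoff_max hP hx
  have hinv : 0 < v⁻¹ := inv_pos.mpr hvpos
  have hBxs : ∀ j, (Bᵀ *ᵥ (v⁻¹ • x)) j = v⁻¹ * (Bᵀ *ᵥ x) j := by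
    intro j
    rw [Matrix.mulVec_smul]
    simp
  refine ⟨v⁻¹ • x, ⟨fun i => mul_nonneg hinv.le (hx.1 i), fun j => ?_⟩, ?_⟩
  · rw [hBxs]
    by_cases hj : j ∈ bestresp2 B x
    · rw [hvK j hj, inv_mul_cancel₀ (ne_of_gt hvpos)]
    · have := hvnK j hj
      calc v⁻¹ * (Bᵀ *ᵥ x) j ≤ v⁻¹ * v := by nlinarith
      _ = 1 := inv_mul_cancel₀ (ne_of_gt hvpos)
  · intro l hl
    cases l with
    | inl i =>
      show v⁻¹ * x i = 0
      rw [mem_labelsX_inl.mp hl, mul_zero]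
    | inr j =>
      show (Bᵀ *ᵥ (v⁻¹ • x)) j = 1
      rw [hBxs, hvK j (mem_labelsX_inr.mp hl), inv_mul_cancel₀ (ne_of_gt hvpos)]

lemma main_side {B : Matrix (Fin m) (Fin n) ℝ} (hP : Bornology.IsBounded (Pset B)) :
    (∀ x : Fin m → ℝ, IsMixed x → (bestresp2 B x).card ≤ (supp x).card) ↔
    (∀ x : Fin m → ℝ, IsMixed x →
      affDim (PI B (labelsX B x)) = (m : ℤ) - (labelsX B x).card) := by
  constructor
  · intro hnd x hx
    exact dim_PI hP hnd hx
  · intro hdim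
    by_contra h
    push_neg at h
    obtain ⟨x, hx, hlt⟩ := h
    have hdi := hdim x hx
    have hne := PI_nonempty hP hx
    have hcard := card_labelsX (B := B) (x := x) hx.1
    rw [affDim, if_neg (Set.nonempty_iff_ne_empty.mp hne), hcard] at hdi
    have hsm : (supp x).card ≤ m := by simpa using Finset.card_le_univ (supp x)
    omega

lemma Qset_eq (A : Matrix (Fin m) (Fin n) ℝ) : Qset A = Pset Aᵀ := by
  ext y
  constructor <;> rintro ⟨h1, h2⟩ <;>
    exact ⟨h2, by simpa [Matrix.transpose_transpose] using h1⟩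

lemma bestresp1_eq (A : Matrix (Fin m) (Fin n) ℝ) (y : Fin n → ℝ) :
    bestresp1 A y = bestresp2 Aᵀ y := by
  unfold bestresp1 bestresp2
  rw [Matrix.transpose_transpose]

lemma labelsY_eq (A : Matrix (Fin m) (Fin n) ℝ) (y : Fin n → ℝ) :
    labelsY A y = (labelsX Aᵀ y).map (Equiv.sumComm (Fin n) (Fin m)).toEmbedding := by
  ext l
  rw [Finset.mem_map_equiv]
  cases l <;> simp [labelsY, labelsX, Matrix.transpose_transpose]

lemma QJ_eq (A : Matrix (Fin m) (Fin n) ℝ) (y : Fin n → ℝ) :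
    QJ A (labelsY A y) = PI Aᵀ (labelsX Aᵀ y) := by
  ext q
  simp only [QJ, PI, Set.mem_setOf_eq]
  constructor
  · rintro ⟨hq, h3⟩
    refine ⟨by rw [← Qset_eq]; exact hq, ?_⟩
    intro l hl
    cases l with
    | inl j =>
      have hmem : Sum.inr j ∈ labelsY A y := by
        simp only [labelsX, Finset.mem_filter] at hl
        simp only [labelsY, Finset.mem_filter]
        exact ⟨Finset.mem_univ _, hl.2⟩
      exact h3 (Sum.inr j) hmem
    | inr i =>
      have hmem : Sum.inl i ∈ labelsY A y := by
        simp only [labelsX, Finset.mem_filter, Sum.elim_inr, Matrix.transpose_transpose] at hl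
        simp only [labelsY, Finset.mem_filter, Sum.elim_inl]
        exact ⟨Finset.mem_univ _, hl.2⟩
      have := h3 (Sum.inl i) hmem
      show (Aᵀᵀ *ᵥ q) i = 1
      rw [Matrix.transpose_transpose]
      exact this
  · rintro ⟨hq, h3⟩
    refine ⟨by rw [Qset_eq]; exact hq, ?_⟩
    intro l hl
    cases l with
    | inl i =>
      have hmem : Sum.inr i ∈ labelsX Aᵀ y := by
        simp only [labelsY, Finset.mem_filter, Sum.elim_inl] at hl
        simp only [labelsX, Finset.mem_filter, Sum.elim_inr, Matrix.transpose_transpose]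
        exact ⟨Finset.mem_univ _, hl.2⟩
      have := h3 (Sum.inr i) hmem
      show (A *ᵥ q) i = 1
      rw [show A = Aᵀᵀ from (Matrix.transpose_transpose A).symm]
      exact this
    | inr j =>
      have hmem : Sum.inl j ∈ labelsX Aᵀ y := by
        simp only [labelsY, Finset.mem_filter, Sum.elim_inr] at hl
        simp only [labelsX, Finset.mem_filter, Sum.elim_inl]
        exact ⟨Finset.mem_univ _, hl.2⟩
      exact h3 (Sum.inl j) hmem

end Aux7

/-- Let `P` and `Q` be bounded.  Then `(A,B)` is nondegenerate iff for every
`x̂ ∈ X` and `ŷ ∈ Y`, with label sets `I` of `x̂` and `J` of `ŷ`, the affine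
dimension of `P(I)` is `m - |I|` and the affine dimension of `Q(J)` is `n - |J|`. -/
theorem nondegenerate_iff_dimensions {m n : ℕ} (A B : Matrix (Fin m) (Fin n) ℝ)
    (hP : Bornology.IsBounded (Pset B)) (hQ : Bornology.IsBounded (Qset A)) :
    Nondegenerate A B ↔
      ((∀ x : Fin m → ℝ, IsMixed x →
          affDim (PI B (labelsX B x)) = (m : ℤ) - (labelsX B x).card) ∧
       (∀ y : Fin n → ℝ, IsMixed y →
          affDim (QJ A (labelsY A y)) = (n : ℤ) - (labelsY A y).card)) := by
  have hQ' : Bornology.IsBounded (Pset Aᵀ) := by rwa [← Qset_eq]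
  have hcomp : ∀ y : Fin n → ℝ, (labelsY A y).card = (labelsX Aᵀ y).card := by
    intro y
    rw [labelsY_eq, Finset.card_map]
  constructor
  · rintro ⟨h1, h2⟩
    refine ⟨(main_side hP).mp h1, ?_⟩
    intro y hy
    have h2' : ∀ y' : Fin n → ℝ, IsMixed y' →
        (bestresp2 Aᵀ y').card ≤ (supp y').card := by
      intro y' hy'
      rw [← bestresp1_eq]
      exact h2 y' hy'
    have := (main_side hQ').mp h2' y hy
    rw [QJ_eq, hcomp y]
    exact this
  · rintro ⟨h1, h2⟩
    refine ⟨(main_side hP).mpr h1, ?_⟩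
    intro y hy
    have h2' : ∀ y' : Fin n → ℝ, IsMixed y' →
        affDim (PI Aᵀ (labelsX Aᵀ y')) = (n : ℤ) - (labelsX Aᵀ y').card := by
      intro y' hy'
      have := h2 y' hy'
      rwa [QJ_eq, hcomp y'] at this
    rw [bestresp1_eq]
    exact (main_side hQ').mpr h2' y hy
end
end

section
/- Let (A,B) be an m×n bimatrix game such that P and Q are bounded. Then (A,B) is nondegenerate if and only if the following two conditions hold: (i) P and Q are simple polytopes, i.e. no point of P lies on more than m facets of P and no point of Q lies on more than n facets of Q; and (ii) every redundant inequality among the defining inequalities of P (the inequalities x_i ≥ 0 and (Bᵀx)_j ≤ 1) is binding at no point of P, and likewise every redundant inequality among the defining inequalities of Q (the inequalities (Ay)_i ≤ 1 and y_j ≥ 0) is binding at no point of Q. -/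
open Matrix
open scoped Classical

noncomputable section

/-- `F` is a face of `P'`: `F = {z ∈ P' | cᵀz = q₀}` for a valid inequality
`cᵀz ≤ q₀` of `P'`. -/
def IsFace {ι : Type*} [Fintype ι] (P' F : Set (ι → ℝ)) : Prop :=
  ∃ (c : ι → ℝ) (q₀ : ℝ), (∀ z ∈ P', c ⬝ᵥ z ≤ q₀) ∧ F = {z ∈ P' | c ⬝ᵥ z = q₀}

/-- `F` is a facet of the (full-dimensional) polytope `P' ⊆ ℝ^ι`: a face of affine
dimension `|ι| - 1`. -/
def IsFacet {ι : Type*} [Fintype ι] (P' F : Set (ι → ℝ)) : Prop :=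
  IsFace P' F ∧ affDim F = (Fintype.card ι : ℤ) - 1

/-- `P'` is a simple polytope in `ℝ^ι`: no point of `P'` lies on more than `|ι|`
facets of `P'`, i.e. there is no point lying on `|ι| + 1` pairwise distinct facets. -/
def IsSimple {ι : Type*} [Fintype ι] (P' : Set (ι → ℝ)) : Prop :=
  ∀ x ∈ P', ¬ ∃ F : Fin (Fintype.card ι + 1) → Set (ι → ℝ),
    Function.Injective F ∧ ∀ k, IsFacet P' (F k) ∧ x ∈ F k


section Helpers
set_option linter.unusedSectionVars false
variable {m : ℕ} {κ : Type*} [Fintype κ]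



def psys (g : κ → Fin m → ℝ) (b : κ → ℝ) : Set (Fin m → ℝ) := {x | ∀ k, g k ⬝ᵥ x ≤ b k}

lemma abs_dot_le (g v : Fin m → ℝ) : |g ⬝ᵥ v| ≤ (∑ i, |g i|) * ‖v‖ := by
  calc |g ⬝ᵥ v| ≤ ∑ i, |g i * v i| := Finset.abs_sum_le_sum_abs _ _
  _ ≤ ∑ i, |g i| * ‖v‖ := by
      refine Finset.sum_le_sum fun i _ => ?_
      rw [abs_mul]
      exact mul_le_mul_of_nonneg_left (by simpa using norm_le_pi_norm v i) (abs_nonneg _)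
  _ = (∑ i, |g i|) * ‖v‖ := by rw [Finset.sum_mul]

lemma psys_convex (g : κ → Fin m → ℝ) (b : κ → ℝ) : Convex ℝ (psys g b) := by
  intro x hx y hy a c ha hc hac
  intro k
  have : g k ⬝ᵥ (a • x + c • y) = a * (g k ⬝ᵥ x) + c * (g k ⬝ᵥ y) := by
    simp [dotProduct_add, dotProduct_smul, smul_eq_mul]
  rw [this]
  calc a * (g k ⬝ᵥ x) + c * (g k ⬝ᵥ y) ≤ a * b k + c * b k := by
        gcongr; exacts [hx k, hy k]
  _ = b k := by rw [← add_mul, hac, one_mul]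
set_option linter.unusedSectionVars false

/-- A ball (within a finite set of constraints strict at `v`) stays feasible. -/
lemma ball_feasible (g : κ → Fin m → ℝ) (b : κ → ℝ) (T : Finset κ) (v : Fin m → ℝ)
    (hv : ∀ t ∈ T, g t ⬝ᵥ v < b t) :
    ∃ δ > 0, ∀ y, ‖y - v‖ < δ → ∀ t ∈ T, g t ⬝ᵥ y ≤ b t := by
  rcases T.eq_empty_or_nonempty with rfl | hT
  · exact ⟨1, one_pos, by simp⟩
  · set f : κ → ℝ := fun t => (b t - g t ⬝ᵥ v) / (1 + ∑ i, |g t i|) with hf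
    refine ⟨T.inf' hT f, ?_, ?_⟩
    · refine (Finset.lt_inf'_iff hT).2 fun t ht => ?_
      have h1 : (0:ℝ) < 1 + ∑ i, |g t i| := by positivity
      exact div_pos (by linarith [hv t ht]) h1
    · intro y hy t ht
      have h1 : (0:ℝ) < 1 + ∑ i, |g t i| := by positivity
      have h2 : T.inf' hT f ≤ f t := Finset.inf'_le _ ht
      have h3 : (∑ i, |g t i|) * ‖y - v‖ ≤ (∑ i, |g t i|) * (T.inf' hT f) := by
        apply mul_le_mul_of_nonneg_left (le_of_lt hy)
        positivity
      have h4 : g t ⬝ᵥ y - g t ⬝ᵥ v ≤ (∑ i, |g t i|) * ‖y - v‖ := by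
        have := abs_dot_le (g t) (y - v)
        have heq : g t ⬝ᵥ (y - v) = g t ⬝ᵥ y - g t ⬝ᵥ v := by
          simp [dotProduct_sub]
        rw [heq] at this
        exact (abs_le.mp this).2
      have h5 : f t * (1 + ∑ i, |g t i|) = b t - g t ⬝ᵥ v := by
        rw [hf]; exact div_mul_cancel₀ _ (ne_of_gt h1)
      have hS : (0:ℝ) ≤ ∑ i, |g t i| := by positivity
      have hft : 0 < f t := div_pos (by linarith [hv t ht]) h1
      nlinarith

/-- dot-product functional. -/
def dotL (g : Fin m → ℝ) : (Fin m → ℝ) →ₗ[ℝ] ℝ where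
  toFun v := g ⬝ᵥ v
  map_add' x y := by simp [dotProduct_add]
  map_smul' c x := by simp [dotProduct_smul, smul_eq_mul]

@[simp] lemma dotL_apply (g v : Fin m → ℝ) : dotL g v = g ⬝ᵥ v := rfl

lemma dot_self_pos {g : Fin m → ℝ} (hg : g ≠ 0) : 0 < g ⬝ᵥ g := by
  have h1 : 0 ≤ g ⬝ᵥ g := by
    apply Finset.sum_nonneg; intro i _; exact mul_self_nonneg _
  rcases h1.lt_or_eq with h | h
  · exact h
  · exfalso; apply hg; funext i
    have h2 := Finset.sum_eq_zero_iff_of_nonneg (fun i (_ : i ∈ Finset.univ) => mul_self_nonneg (g i)) |>.mp h.symm i (Finset.mem_univ i)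
    have : g i * g i = 0 := h2
    simpa using mul_self_eq_zero.mp this

lemma finrank_ker_dotL {g : Fin m → ℝ} (hg : g ≠ 0) :
    Module.finrank ℝ (LinearMap.ker (dotL g)) = m - 1 ∧ 1 ≤ m := by
  have hsurj : Function.Surjective (dotL g) := by
    intro r
    refine ⟨(r / (g ⬝ᵥ g)) • g, ?_⟩
    have := dot_self_pos hg
    simp [dotProduct_smul, smul_eq_mul]
    field_simp
  have hrange : LinearMap.range (dotL g) = ⊤ := LinearMap.range_eq_top.mpr hsurj
  have h := LinearMap.finrank_range_add_finrank_ker (dotL g)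
  rw [hrange] at h
  have h1 : Module.finrank ℝ (⊤ : Submodule ℝ ℝ) = 1 := by
    rw [finrank_top]; exact Module.finrank_self ℝ
  rw [h1] at h
  have hm : Module.finrank ℝ (Fin m → ℝ) = m := by simp
  rw [hm] at h
  omega

lemma not_bounded_of_ray {S : Set (Fin m → ℝ)} {v u : Fin m → ℝ} (hu : u ≠ 0)
    (h : ∀ s : ℝ, 0 ≤ s → v + s • u ∈ S) : ¬ Bornology.IsBounded S := by
  intro hb
  obtain ⟨R, hR⟩ := isBounded_iff_forall_norm_le.mp hb
  have hu' : 0 < ‖u‖ := norm_pos_iff.mpr hu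
  have hR0 : (0:ℝ) ≤ R := le_trans (norm_nonneg _) (hR _ (by simpa using h 0 le_rfl))
  set s := (R + ‖v‖ + 1) / ‖u‖ with hs
  have hs0 : 0 ≤ s := by positivity
  have h1 : ‖v + s • u‖ ≤ R := hR _ (h s hs0)
  have h2 : ‖s • u‖ ≤ ‖v + s • u‖ + ‖v‖ := by
    simpa using norm_sub_le (v + s • u) v
  have h4 : ‖s • u‖ = s * ‖u‖ := by rw [norm_smul, Real.norm_of_nonneg hs0]
  have h5 : s * ‖u‖ = R + ‖v‖ + 1 := by
    rw [hs]; field_simp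
  linarith

/-- If a direction never increases any constraint, the polytope is unbounded. -/
lemma exists_pos_dir {g : κ → Fin m → ℝ} {b : κ → ℝ} (hbdd : Bornology.IsBounded (psys g b))
    {v u : Fin m → ℝ} (hv : v ∈ psys g b) (hu : u ≠ 0) :
    ∃ c, 0 < g c ⬝ᵥ u := by
  by_contra hc
  push_neg at hc
  refine not_bounded_of_ray (v := v) hu (fun s hs => ?_) hbdd
  intro k
  have he : g k ⬝ᵥ (v + s • u) = g k ⬝ᵥ v + s * (g k ⬝ᵥ u) := by
    simp [dotProduct_add, dotProduct_smul, smul_eq_mul]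
  rw [he]
  nlinarith [hv k, hc k]

/-- From a proper subspace, extract a vector orthogonal (in dot product) to it. -/
lemma exists_perp {W : Submodule ℝ (Fin m → ℝ)} (hW : W ≠ ⊤) :
    ∃ u : Fin m → ℝ, u ≠ 0 ∧ ∀ w ∈ W, w ⬝ᵥ u = 0 := by
  obtain ⟨x, hx⟩ : ∃ x, x ∉ W := by
    by_contra h; push_neg at h; exact hW (Submodule.eq_top_iff'.mpr h)
  obtain ⟨φ, hφx, hφW⟩ := Submodule.exists_dual_map_eq_bot_of_notMem hx inferInstance
  set u : Fin m → ℝ := fun i => φ (Pi.single i 1) with hu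
  have key : ∀ w : Fin m → ℝ, w ⬝ᵥ u = φ w := by
    intro w
    have hw : w = ∑ i, w i • (Pi.single i (1:ℝ) : Fin m → ℝ) := by
      funext j
      rw [Finset.sum_apply]
      simp [Pi.single_apply]
    conv_rhs => rw [hw]
    rw [map_sum]
    simp [dotProduct, hu, smul_eq_mul]
  refine ⟨u, ?_, fun w hw => ?_⟩
  · intro h0
    apply hφx
    rw [← key x, h0]
    simp
  · rw [key]
    have : φ w ∈ W.map φ := ⟨w, hw, rfl⟩
    rw [hφW] at this
    simpa using this

lemma vectorSpan_eq_ker {g0 : Fin m → ℝ} {b0 : ℝ} {F : Set (Fin m → ℝ)} {w : Fin m → ℝ} {δ : ℝ}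
    (hδ : 0 < δ) (hwF : w ∈ F) (hF1 : ∀ y ∈ F, g0 ⬝ᵥ y = b0)
    (hball : ∀ y, ‖y - w‖ < δ → g0 ⬝ᵥ y = b0 → y ∈ F) :
    vectorSpan ℝ F = LinearMap.ker (dotL g0) := by
  apply le_antisymm
  · rw [vectorSpan_def, Submodule.span_le]
    rintro d ⟨y1, hy1, y2, hy2, rfl⟩
    simp only [SetLike.mem_coe, LinearMap.mem_ker, dotL_apply, vsub_eq_sub, dotProduct_sub]
    rw [hF1 y1 hy1, hF1 y2 hy2, sub_self]
  · intro v hv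
    rw [LinearMap.mem_ker, dotL_apply] at hv
    set c : ℝ := δ / (2 * (‖v‖ + 1)) with hc
    have hvn : (0:ℝ) < ‖v‖ + 1 := by positivity
    have hc0 : 0 < c := by positivity
    set y := w + c • v with hy
    have hyF : y ∈ F := by
      apply hball
      · have : ‖y - w‖ = c * ‖v‖ := by
          rw [hy]; simp [norm_smul, abs_of_pos hc0]
        rw [this, hc]
        rw [div_mul_eq_mul_div, div_lt_iff₀ (by positivity)]
        nlinarith [norm_nonneg v]
      · have : g0 ⬝ᵥ y = g0 ⬝ᵥ w + c * (g0 ⬝ᵥ v) := by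
          simp [hy, dotProduct_add, dotProduct_smul, smul_eq_mul]
        rw [this, hv, hF1 w hwF]; ring
    have hmem : y - w ∈ vectorSpan ℝ F := by
      have := vsub_mem_vectorSpan ℝ hyF hwF
      simpa using this
    have : v = c⁻¹ • (y - w) := by
      rw [hy]; simp [smul_smul, inv_mul_cancel₀ (ne_of_gt hc0)]
    rw [this]
    exact Submodule.smul_mem _ _ hmem

lemma isFacet_of_witness {g : κ → Fin m → ℝ} {b : κ → ℝ} {k : κ} {w : Fin m → ℝ}
    (hwk : g k ⬝ᵥ w = b k) (hstrict : ∀ t, t ≠ k → g t ⬝ᵥ w < b t)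
    (hgk : g k ≠ 0) :
    IsFacet (psys g b) {z ∈ psys g b | g k ⬝ᵥ z = b k} ∧
      vectorSpan ℝ {z ∈ psys g b | g k ⬝ᵥ z = b k} = LinearMap.ker (dotL (g k)) ∧
      w ∈ {z ∈ psys g b | g k ⬝ᵥ z = b k} := by
  set F := {z ∈ psys g b | g k ⬝ᵥ z = b k} with hF
  have hw : w ∈ psys g b := by
    intro t
    by_cases ht : t = k
    · rw [ht, hwk]
    · exact le_of_lt (hstrict t ht)
  have hwF : w ∈ F := ⟨hw, hwk⟩
  obtain ⟨δ, hδ, hball⟩ := ball_feasible g b (Finset.univ.erase k) w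
    (fun t ht => hstrict t (Finset.ne_of_mem_erase ht))
  have hball' : ∀ y, ‖y - w‖ < δ → g k ⬝ᵥ y = b k → y ∈ F := by
    intro y hy hyk
    refine ⟨fun t => ?_, hyk⟩
    by_cases ht : t = k
    · rw [ht, hyk]
    · exact hball y hy t (Finset.mem_erase.mpr ⟨ht, Finset.mem_univ t⟩)
  have hvs : vectorSpan ℝ F = LinearMap.ker (dotL (g k)) :=
    vectorSpan_eq_ker hδ hwF (fun y hy => hy.2) hball'
  obtain ⟨hker, hm1⟩ := finrank_ker_dotL hgk
  refine ⟨⟨⟨g k, b k, fun z hz => hz k, rfl⟩, ?_⟩, hvs, hwF⟩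
  rw [affDim]
  rw [if_neg (by exact Set.nonempty_iff_ne_empty.mp ⟨w, hwF⟩)]
  rw [direction_affineSpan, hvs, hker, Fintype.card_fin]
  omega

section nored
variable {g : κ → Fin m → ℝ} {b : κ → ℝ} {k : κ}

/-- binding set among constraints other than `k`. -/
def bset (g : κ → Fin m → ℝ) (b : κ → ℝ) (k : κ) (v : Fin m → ℝ) : Finset κ :=
  (Finset.univ.erase k).filter (fun t => g t ⬝ᵥ v = b t)

lemma perp_key (hred : {x | ∀ t ≠ k, g t ⬝ᵥ x ≤ b t} = psys g b)
    {v : Fin m → ℝ} (hv : v ∈ psys g b) (hvk : g k ⬝ᵥ v = b k)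
    {u : Fin m → ℝ} (hu : ∀ t ∈ bset g b k v, g t ⬝ᵥ u = 0) :
    g k ⬝ᵥ u = 0 := by
  have main : ∀ σ : Fin m → ℝ, (∀ t ∈ bset g b k v, g t ⬝ᵥ σ = 0) → g k ⬝ᵥ σ ≤ 0 := by
    intro σ hσ
    by_contra hpos
    push_neg at hpos
    set T : Finset κ := (Finset.univ.erase k).filter (fun t => g t ⬝ᵥ v < b t) with hT
    obtain ⟨δ, hδ, hball⟩ := ball_feasible g b T v (fun t ht => (Finset.mem_filter.mp ht).2)
    set ε : ℝ := δ / (‖σ‖ + 1) with hε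
    have hε0 : 0 < ε := by positivity
    set y := v + ε • σ with hy
    have hyb : ‖y - v‖ < δ := by
      have : ‖y - v‖ = ε * ‖σ‖ := by rw [hy]; simp [norm_smul, abs_of_pos hε0]
      rw [this, hε]
      rw [div_mul_eq_mul_div, div_lt_iff₀ (by positivity)]
      nlinarith [norm_nonneg σ]
    have hym : y ∈ {x | ∀ t ≠ k, g t ⬝ᵥ x ≤ b t} := by
      intro t ht
      by_cases hb' : g t ⬝ᵥ v = b t
      · have ht' : t ∈ bset g b k v := Finset.mem_filter.mpr ⟨Finset.mem_erase.mpr ⟨ht, Finset.mem_univ t⟩, hb'⟩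
        have : g t ⬝ᵥ y = g t ⬝ᵥ v + ε * (g t ⬝ᵥ σ) := by
          simp [hy, dotProduct_add, dotProduct_smul, smul_eq_mul]
        rw [this, hσ t ht', hb']; simp
      · have htT : t ∈ T := Finset.mem_filter.mpr ⟨Finset.mem_erase.mpr ⟨ht, Finset.mem_univ t⟩,
          lt_of_le_of_ne (hv t) hb'⟩
        exact hball y hyb t htT
    rw [hred] at hym
    have := hym k
    have hgy : g k ⬝ᵥ y = g k ⬝ᵥ v + ε * (g k ⬝ᵥ σ) := by
      simp [hy, dotProduct_add, dotProduct_smul, smul_eq_mul]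
    rw [hgy, hvk] at this
    nlinarith
  have h1 := main u hu
  have h2 := main (-u) (fun t ht => by rw [dotProduct_neg, hu t ht, neg_zero])
  rw [dotProduct_neg] at h2
  linarith

lemma push_to_vertex (hbdd : Bornology.IsBounded (psys g b))
    (hred : {x | ∀ t ≠ k, g t ⬝ᵥ x ≤ b t} = psys g b) :
    ∀ N : ℕ, ∀ v ∈ psys g b, g k ⬝ᵥ v = b k → Fintype.card κ ≤ (bset g b k v).card + N →
    ∃ v' ∈ psys g b, g k ⬝ᵥ v' = b k ∧
      Submodule.span ℝ (((bset g b k v').image g : Finset (Fin m → ℝ)) : Set (Fin m → ℝ)) = ⊤ := by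
  intro N
  induction N with
  | zero =>
    intro v hv hvk hcard
    exfalso
    have h1 : (bset g b k v).card ≤ (Finset.univ.erase k).card :=
      Finset.card_le_card (Finset.filter_subset _ _)
    have h2 : (Finset.univ.erase k).card = Fintype.card κ - 1 := by
      rw [Finset.card_erase_of_mem (Finset.mem_univ k), Finset.card_univ]
    have h3 : 1 ≤ Fintype.card κ := Fintype.card_pos_iff.mpr ⟨k⟩
    omega
  | succ N ih =>
    intro v hv hvk hcard
    set W := Submodule.span ℝ (((bset g b k v).image g : Finset (Fin m → ℝ)) : Set (Fin m → ℝ)) with hW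
    by_cases htop : W = ⊤
    · exact ⟨v, hv, hvk, htop⟩
    · obtain ⟨u, hu0, huW⟩ := exists_perp htop
      have huS : ∀ t ∈ bset g b k v, g t ⬝ᵥ u = 0 := by
        intro t ht
        exact huW (g t) (Submodule.subset_span (by simp; exact ⟨t, ht, rfl⟩))
      have huk : g k ⬝ᵥ u = 0 := perp_key hred hv hvk huS
      obtain ⟨c1, hc1⟩ := exists_pos_dir hbdd hv hu0
      set C : Finset κ := Finset.univ.filter (fun c => 0 < g c ⬝ᵥ u) with hC
      have hCne : C.Nonempty := ⟨c1, Finset.mem_filter.mpr ⟨Finset.mem_univ _, hc1⟩⟩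
      set f : κ → ℝ := fun c => (b c - g c ⬝ᵥ v) / (g c ⬝ᵥ u) with hf
      obtain ⟨c₀, hc₀C, hc₀min⟩ := Finset.exists_min_image C f hCne
      have hc₀u : 0 < g c₀ ⬝ᵥ u := (Finset.mem_filter.mp hc₀C).2
      set s := f c₀ with hs
      have hs0 : 0 ≤ s := div_nonneg (by linarith [hv c₀]) (le_of_lt hc₀u)
      set v' := v + s • u with hv'
      have hdot : ∀ t, g t ⬝ᵥ v' = g t ⬝ᵥ v + s * (g t ⬝ᵥ u) := by
        intro t; simp [hv', dotProduct_add, dotProduct_smul, smul_eq_mul]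
      have hv'P : v' ∈ psys g b := by
        intro t
        rw [hdot t]
        by_cases htC : 0 < g t ⬝ᵥ u
        · have : s ≤ f t := hc₀min t (Finset.mem_filter.mpr ⟨Finset.mem_univ _, htC⟩)
          have : s * (g t ⬝ᵥ u) ≤ f t * (g t ⬝ᵥ u) := by
            apply mul_le_mul_of_nonneg_right this (le_of_lt htC)
          have hft : f t * (g t ⬝ᵥ u) = b t - g t ⬝ᵥ v := by
            rw [hf]; field_simp
          linarith
        · push_neg at htC
          nlinarith [hv t]
      have hv'k : g k ⬝ᵥ v' = b k := by rw [hdot k, huk]; rw [hvk]; ring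
      have hsub : bset g b k v ⊆ bset g b k v' := by
        intro t ht
        obtain ⟨ht1, ht2⟩ := Finset.mem_filter.mp ht
        refine Finset.mem_filter.mpr ⟨ht1, ?_⟩
        rw [hdot t, huS t ht, ht2]; ring
      have hc₀new : c₀ ∈ bset g b k v' := by
        refine Finset.mem_filter.mpr ⟨Finset.mem_erase.mpr ⟨?_, Finset.mem_univ _⟩, ?_⟩
        · intro h; rw [h] at hc₀u; rw [huk] at hc₀u; exact lt_irrefl 0 hc₀u
        · rw [hdot c₀, hs, hf]; field_simp; ring
      have hc₀old : c₀ ∉ bset g b k v := by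
        intro h
        have := huS c₀ h
        rw [this] at hc₀u; exact lt_irrefl 0 hc₀u
      have hcard' : (bset g b k v).card < (bset g b k v').card :=
        Finset.card_lt_card (Finset.ssubset_iff_of_subset hsub |>.mpr ⟨c₀, hc₀new, hc₀old⟩)
      exact ih v' hv'P hv'k (by omega)
end nored

lemma nored_of_count {g : κ → Fin m → ℝ} {b : κ → ℝ}
    (hbdd : Bornology.IsBounded (psys g b))
    (hcount : ∀ x ∈ psys g b, (Finset.univ.filter fun t => g t ⬝ᵥ x = b t).card ≤ m)
    (k : κ) (hred : {x | ∀ t ≠ k, g t ⬝ᵥ x ≤ b t} = psys g b) :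
    ∀ x ∈ psys g b, g k ⬝ᵥ x ≠ b k := by
  intro x hx hxk
  obtain ⟨v', hv', hv'k, hspan⟩ := push_to_vertex hbdd hred (Fintype.card κ) x hx hxk (by omega)
  -- m ≤ card of the binding set among others
  have h1 : m ≤ ((bset g b k v').image g).card := by
    have h2 := finrank_span_finset_le_card (R := ℝ) ((bset g b k v').image g)
    rw [Set.finrank, hspan, finrank_top] at h2
    simpa using h2
  have h3 : ((bset g b k v').image g).card ≤ (bset g b k v').card := Finset.card_image_le
  have h4 : insert k (bset g b k v') ⊆ Finset.univ.filter (fun t => g t ⬝ᵥ v' = b t) := by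
    intro t ht
    rcases Finset.mem_insert.mp ht with rfl | ht'
    · exact Finset.mem_filter.mpr ⟨Finset.mem_univ _, hv'k⟩
    · exact Finset.mem_filter.mpr ⟨Finset.mem_univ _, (Finset.mem_filter.mp ht').2⟩
  have h5 : (insert k (bset g b k v')).card = (bset g b k v').card + 1 := by
    rw [Finset.card_insert_of_notMem]
    intro h
    exact ((Finset.mem_erase.mp (Finset.mem_filter.mp h).1).1) rfl
  have h6 := Finset.card_le_card h4
  have h7 := hcount v' hv'
  omega

lemma affDim_empty_of_neg_one {s : Set (Fin m → ℝ)} (h : affDim s = -1) : s = ∅ := by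
  by_contra hne
  rw [affDim, if_neg hne] at h
  omega

lemma vectorSpan_top_of_ball {s : Set (Fin m → ℝ)} {x₀ : Fin m → ℝ} {δ : ℝ} (hδ : 0 < δ)
    (hball : ∀ y, ‖y - x₀‖ < δ → y ∈ s) : vectorSpan ℝ s = ⊤ := by
  rw [eq_top_iff]
  have hx₀ : x₀ ∈ s := hball x₀ (by simpa using hδ)
  have hsingle : ∀ i : Fin m, (Pi.single i (δ/2) : Fin m → ℝ) ∈ vectorSpan ℝ s := by
    intro i
    have hy : x₀ + Pi.single i (δ/2) ∈ s := by
      apply hball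
      have : ‖(x₀ + Pi.single i (δ/2)) - x₀‖ = ‖(Pi.single i (δ/2) : Fin m → ℝ)‖ := by
        congr 1; abel
      rw [this]
      have : ‖(Pi.single i (δ/2) : Fin m → ℝ)‖ ≤ δ/2 := by
        apply pi_norm_le_iff_of_nonneg (by positivity) |>.mpr
        intro j
        rcases eq_or_ne j i with rfl | hj
        · simp [Real.norm_of_nonneg (le_of_lt (half_pos hδ))]
        · simp [Pi.single_apply, hj, Real.norm_of_nonneg, le_of_lt (half_pos hδ)]
      linarith
    have := vsub_mem_vectorSpan ℝ hy hx₀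
    simpa using this
  intro v _
  have hv : v = ∑ i, ((2/δ) * v i) • (Pi.single i (δ/2) : Fin m → ℝ) := by
    funext j
    rw [Finset.sum_apply]
    have : ∀ i, (((2/δ) * v i) • (Pi.single i (δ/2) : Fin m → ℝ)) j
        = if i = j then v j else 0 := by
      intro i
      rcases eq_or_ne i j with rfl | hij
      · simp [smul_eq_mul]; field_simp
      · simp [Pi.single_apply, hij, smul_eq_mul]
    simp only [this]
    simp
  rw [hv]
  exact Submodule.sum_mem _ fun i _ => Submodule.smul_mem _ _ (hsingle i)

lemma simple_of_count {g : κ → Fin m → ℝ} {b : κ → ℝ} {x₀ : Fin m → ℝ}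
    (hbdd : Bornology.IsBounded (psys g b)) (hx₀ : ∀ t, g t ⬝ᵥ x₀ < b t)
    (hcount : ∀ x ∈ psys g b, (Finset.univ.filter fun t => g t ⬝ᵥ x = b t).card ≤ m) :
    IsSimple (psys g b) := by
  intro x hx ⟨F, hFinj, hF⟩
  rcases Nat.eq_zero_or_pos m with hm | hm
  · subst hm
    have h0 := (hF 0).1.2
    simp only [Fintype.card_fin, Nat.cast_zero, zero_sub] at h0
    have he := affDim_empty_of_neg_one h0
    have hmem := (hF 0).2
    rw [he] at hmem
    exact hmem
  -- m ≥ 1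
  have hκ : Nonempty κ := by
    by_contra hk
    rw [not_nonempty_iff] at hk
    refine not_bounded_of_ray (v := 0) (u := Pi.single ⟨0, hm⟩ 1) ?_ ?_ hbdd
    · intro h0
      have := congrFun h0 ⟨0, hm⟩
      simp at this
    · intro s hs t
      exact hk.elim t
  -- for each facet, a binding constraint defining it
  have key : ∀ l, ∃ k : κ, F l = {z ∈ psys g b | g k ⬝ᵥ z = b k} ∧ g k ⬝ᵥ x = b k := by
    intro l
    obtain ⟨⟨c, q, hvalid, hFeq⟩, hdim⟩ := hF l |>.1
    have hxF : x ∈ F l := (hF l).2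
    have hxc : c ⬝ᵥ x = q := by rw [hFeq] at hxF; exact hxF.2
    -- F l is convex
    have hconv : Convex ℝ (F l) := by
      rw [hFeq]
      have : {z ∈ psys g b | c ⬝ᵥ z = q} = psys g b ∩ {z | c ⬝ᵥ z = q} := rfl
      rw [this]
      apply (psys_convex g b).inter
      intro y hy z hz a a' ha ha' haa
      simp only [Set.mem_setOf_eq] at *
      rw [dotProduct_add, dotProduct_smul, dotProduct_smul, hy, hz, smul_eq_mul, smul_eq_mul,
        ← add_mul, haa, one_mul]
    -- existence of a constraint binding on all of F l
    have hbind : ∃ k : κ, ∀ z ∈ F l, g k ⬝ᵥ z = b k := by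
      by_contra hno
      push_neg at hno
      choose z hzF hzk using hno
      have hzlt : ∀ k, g k ⬝ᵥ z k < b k := by
        intro k
        have : z k ∈ psys g b := by rw [hFeq] at hzF; exact (hzF k).1
        exact lt_of_le_of_ne (this k) (hzk k)
      set N := Fintype.card κ with hN
      have hN0 : 0 < N := Fintype.card_pos
      set zbar := ∑ t : κ, ((N:ℝ)⁻¹) • z t with hzbar
      have hzbarF : zbar ∈ F l := by
        apply hconv.sum_mem (fun t _ => by positivity)
        · rw [Finset.sum_const, Finset.card_univ, nsmul_eq_mul]
          field_simp
          simp [hN]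
        · exact fun t _ => hzF t
      have hzbarlt : ∀ t, g t ⬝ᵥ zbar < b t := by
        intro t
        have hdz : g t ⬝ᵥ zbar = ∑ s : κ, (N:ℝ)⁻¹ * (g t ⬝ᵥ z s) := by
          simp only [hzbar, dotProduct, Finset.sum_apply, Pi.smul_apply, smul_eq_mul,
            Finset.mul_sum]
          rw [Finset.sum_comm]
          apply Finset.sum_congr rfl
          intro s _
          apply Finset.sum_congr rfl
          intro i _
          ring
        rw [hdz]
        have hlt : ∑ s : κ, (N:ℝ)⁻¹ * (g t ⬝ᵥ z s) < ∑ s : κ, (N:ℝ)⁻¹ * b t := by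
          apply Finset.sum_lt_sum
          · intro s _
            apply mul_le_mul_of_nonneg_left _ (by positivity)
            rw [hFeq] at hzF
            exact (hzF s).1 t
          · exact ⟨t, Finset.mem_univ t, by
              apply mul_lt_mul_of_pos_left (hzlt t) (by positivity)⟩
        have : ∑ _s : κ, (N:ℝ)⁻¹ * b t = b t := by
          rw [Finset.sum_const, Finset.card_univ, nsmul_eq_mul]
          field_simp
          simp [hN]
        linarith [hlt.trans_eq this]
      obtain ⟨δ, hδ, hball⟩ := ball_feasible g b Finset.univ zbar (fun t _ => hzbarlt t)
      -- c ≠ 0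
      have hc0 : c ≠ 0 := by
        intro hc
        subst hc
        simp only [zero_dotProduct] at hxc hFeq
        rw [← hxc] at hFeq
        -- q = 0, so F l = psys g b, contradicting affDim
        obtain ⟨δ', hδ', hball'⟩ := ball_feasible g b Finset.univ x₀ (fun t _ => hx₀ t)
        have htop : vectorSpan ℝ (psys g b) = ⊤ :=
          vectorSpan_top_of_ball hδ' (fun y hy => fun t => hball' y hy t (Finset.mem_univ t))
        have hFl : F l = psys g b := by
          rw [hFeq]; ext z; simp
        rw [hFl] at hdim
        rw [affDim, if_neg (Set.nonempty_iff_ne_empty.mp ⟨x, hx⟩), direction_affineSpan, htop] at hdim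
        have : Module.finrank ℝ (⊤ : Submodule ℝ (Fin m → ℝ)) = m := by
          rw [finrank_top]; simp
        rw [this, Fintype.card_fin] at hdim
        omega
      -- push along c
      have hcc : 0 < c ⬝ᵥ c := dot_self_pos hc0
      set r : ℝ := δ / (2 * (‖c‖ + 1)) with hr
      have hr0 : 0 < r := by positivity
      have hyP : zbar + r • c ∈ psys g b := by
        intro t
        refine hball _ ?_ t (Finset.mem_univ t)
        have : ‖(zbar + r • c) - zbar‖ = r * ‖c‖ := by
          simp [norm_smul, abs_of_pos hr0]
        rw [this, hr]
        rw [div_mul_eq_mul_div, div_lt_iff₀ (by positivity)]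
        nlinarith [norm_nonneg c]
      have := hvalid _ hyP
      have hcy : c ⬝ᵥ (zbar + r • c) = q + r * (c ⬝ᵥ c) := by
        rw [dotProduct_add, dotProduct_smul, smul_eq_mul]
        rw [hFeq] at hzbarF
        rw [hzbarF.2]
      nlinarith
    obtain ⟨k, hk⟩ := hbind
    have hgk0 : g k ≠ 0 := by
      intro h0
      have h1 := hk x hxF
      rw [h0] at h1
      have h2 := hx₀ k
      rw [h0] at h2
      simp only [zero_dotProduct] at h1 h2
      linarith
    -- vectorSpan F l = ker
    have hle1 : vectorSpan ℝ (F l) ≤ LinearMap.ker (dotL (g k)) := by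
      rw [vectorSpan_def, Submodule.span_le]
      rintro d ⟨y1, hy1, y2, hy2, rfl⟩
      simp only [SetLike.mem_coe, LinearMap.mem_ker, dotL_apply, vsub_eq_sub, dotProduct_sub]
      rw [hk y1 hy1, hk y2 hy2, sub_self]
    have hle2 : vectorSpan ℝ (F l) ≤ LinearMap.ker (dotL c) := by
      rw [vectorSpan_def, Submodule.span_le]
      rintro d ⟨y1, hy1, y2, hy2, rfl⟩
      simp only [SetLike.mem_coe, LinearMap.mem_ker, dotL_apply, vsub_eq_sub, dotProduct_sub]
      rw [hFeq] at hy1 hy2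
      rw [hy1.2, hy2.2, sub_self]
    obtain ⟨hkerrank, hm1⟩ := finrank_ker_dotL hgk0
    have hfr : Module.finrank ℝ (vectorSpan ℝ (F l)) = m - 1 := by
      rw [affDim, if_neg (Set.nonempty_iff_ne_empty.mp ⟨x, hxF⟩), direction_affineSpan,
        Fintype.card_fin] at hdim
      omega
    have hvseq : vectorSpan ℝ (F l) = LinearMap.ker (dotL (g k)) :=
      Submodule.eq_of_le_of_finrank_eq hle1 (by rw [hfr, hkerrank])
    refine ⟨k, ?_, hk x hxF⟩
    apply Set.eq_of_subset_of_subset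
    · intro z hz
      exact ⟨by rw [hFeq] at hz; exact hz.1, hk z hz⟩
    · rintro z' ⟨hz'P, hz'k⟩
      have hdiff : z' - x ∈ LinearMap.ker (dotL (g k)) := by
        simp only [LinearMap.mem_ker, dotL_apply, dotProduct_sub]
        rw [hz'k, hk x hxF, sub_self]
      rw [← hvseq] at hdiff
      have hc : c ⬝ᵥ (z' - x) = 0 := hle2 hdiff
      rw [hFeq]
      refine ⟨hz'P, ?_⟩
      rw [dotProduct_sub] at hc
      rw [← hxc]; linarith
  choose kk hkk hkbind using key
  have hkinj : Function.Injective kk := by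
    intro l l' h
    apply hFinj
    rw [hkk l, hkk l', h]
  have himg : (Finset.univ.image kk).card = m + 1 := by
    rw [Finset.card_image_of_injective _ hkinj, Finset.card_univ]
    simp
  have hsub : Finset.univ.image kk ⊆ Finset.univ.filter (fun t => g t ⬝ᵥ x = b t) := by
    intro t ht
    obtain ⟨l, _, rfl⟩ := Finset.mem_image.mp ht
    exact Finset.mem_filter.mpr ⟨Finset.mem_univ _, hkbind l⟩
  have := Finset.card_le_card hsub
  have := hcount x hx
  omega

lemma count_le_of_simple {g : κ → Fin m → ℝ} {b : κ → ℝ} {x₀ : Fin m → ℝ}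
    (hx₀ : ∀ t, g t ⬝ᵥ x₀ < b t)
    (hsimple : IsSimple (psys g b))
    (hnr : ∀ k, ({x | ∀ t ≠ k, g t ⬝ᵥ x ≤ b t} = psys g b) → ∀ x ∈ psys g b, g k ⬝ᵥ x ≠ b k) :
    ∀ x ∈ psys g b, (Finset.univ.filter fun t => g t ⬝ᵥ x = b t).card ≤ m := by
  intro x hx
  by_contra hgt
  push_neg at hgt
  set S := Finset.univ.filter (fun t => g t ⬝ᵥ x = b t) with hS
  have hbindS : ∀ k ∈ S, g k ⬝ᵥ x = b k := fun k hk => (Finset.mem_filter.mp hk).2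
  -- each binding constraint is irredundant and nonzero, and gives a facet through x
  have hirr : ∀ k ∈ S, ∃ z, (∀ t ≠ k, g t ⬝ᵥ z ≤ b t) ∧ b k < g k ⬝ᵥ z := by
    intro k hk
    by_contra hno
    push_neg at hno
    have heq : {y | ∀ t ≠ k, g t ⬝ᵥ y ≤ b t} = psys g b := by
      apply Set.eq_of_subset_of_subset
      · intro y hy t
        by_cases ht : t = k
        · rw [ht]; exact hno y hy
        · exact hy t ht
      · intro y hy t _
        exact hy t
    exact hnr k heq x hx (hbindS k hk)
  have hgne : ∀ k ∈ S, g k ≠ 0 := by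
    intro k hk h0
    have h1 := hbindS k hk
    have h2 := hx₀ k
    rw [h0] at h1 h2
    simp only [zero_dotProduct] at h1 h2
    linarith
  -- facet data
  have hfacet : ∀ k ∈ S, IsFacet (psys g b) {z ∈ psys g b | g k ⬝ᵥ z = b k} ∧
      vectorSpan ℝ {z ∈ psys g b | g k ⬝ᵥ z = b k} = LinearMap.ker (dotL (g k)) := by
    intro k hk
    obtain ⟨z, hz1, hz2⟩ := hirr k hk
    set t' : ℝ := (b k - g k ⬝ᵥ x₀) / (g k ⬝ᵥ z - g k ⬝ᵥ x₀) with ht'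
    have hd : g k ⬝ᵥ x₀ < g k ⬝ᵥ z := lt_trans (hx₀ k) hz2
    have ht'0 : 0 < t' := div_pos (by linarith [hx₀ k]) (by linarith)
    have ht'1 : t' < 1 := by
      rw [ht', div_lt_one (by linarith)]
      linarith [hz2]
    set w := x₀ + t' • (z - x₀) with hw
    have hdotw : ∀ t, g t ⬝ᵥ w = g t ⬝ᵥ x₀ + t' * (g t ⬝ᵥ z - g t ⬝ᵥ x₀) := by
      intro t
      simp [hw, dotProduct_add, dotProduct_smul, dotProduct_sub, smul_eq_mul]
    have hwk : g k ⬝ᵥ w = b k := by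
      rw [hdotw k, ht']
      field_simp
      rw [mul_div_assoc, div_self (ne_of_gt (sub_pos.mpr hd)), mul_one]
      ring
    have hstrict : ∀ t, t ≠ k → g t ⬝ᵥ w < b t := by
      intro t ht
      rw [hdotw t]
      have h1 := hx₀ t
      have h2 := hz1 t ht
      nlinarith
    obtain ⟨h1, h2, _⟩ := isFacet_of_witness hwk hstrict (hgne k hk)
    exact ⟨h1, h2⟩
  -- injectivity of k ↦ facet on S
  have hinj : ∀ k ∈ S, ∀ k' ∈ S, k ≠ k' →
      ({z ∈ psys g b | g k ⬝ᵥ z = b k} : Set (Fin m → ℝ)) ≠ {z ∈ psys g b | g k' ⬝ᵥ z = b k'} := by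
    intro k hk k' hk' hne heq
    have hker : LinearMap.ker (dotL (g k)) = LinearMap.ker (dotL (g k')) := by
      rw [← (hfacet k hk).2, ← (hfacet k' hk').2, heq]
    have hcc : 0 < g k ⬝ᵥ g k := dot_self_pos (hgne k hk)
    set lam : ℝ := (g k' ⬝ᵥ g k) / (g k ⬝ᵥ g k) with hlam
    have hprop : ∀ v, g k' ⬝ᵥ v = lam * (g k ⬝ᵥ v) := by
      intro v
      have hmem : v - ((g k ⬝ᵥ v) / (g k ⬝ᵥ g k)) • g k ∈ LinearMap.ker (dotL (g k)) := by
        simp only [LinearMap.mem_ker, dotL_apply, dotProduct_sub, dotProduct_smul, smul_eq_mul]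
        field_simp
        ring
      rw [hker] at hmem
      simp only [LinearMap.mem_ker, dotL_apply, dotProduct_sub, dotProduct_smul, smul_eq_mul] at hmem
      have : g k' ⬝ᵥ v = (g k ⬝ᵥ v) / (g k ⬝ᵥ g k) * (g k' ⬝ᵥ g k) := by linarith
      rw [this, hlam]; ring
    have hbk' : b k' = lam * b k := by
      rw [← hbindS k hk, ← hbindS k' hk', hprop x]
    have hlampos : 0 < lam := by
      rcases lt_trichotomy lam 0 with h | h | h
      · exfalso
        have h1 := hx₀ k'
        rw [hprop x₀, hbk'] at h1
        have := hx₀ k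
        nlinarith
      · exfalso
        have h1 := hx₀ k'
        rw [hprop x₀, hbk', h] at h1
        simp at h1
      · exact h
    have hred : {y | ∀ t ≠ k', g t ⬝ᵥ y ≤ b t} = psys g b := by
      apply Set.eq_of_subset_of_subset
      · intro y hy t
        by_cases ht : t = k'
        · subst ht
          have h1 : g k ⬝ᵥ y ≤ b k := hy k hne
          rw [hprop y, hbk']
          exact mul_le_mul_of_nonneg_left h1 (le_of_lt hlampos)
        · exact hy t ht
      · intro y hy t _
        exact hy t
    exact hnr k' hred x hx (hbindS k' hk')
  -- build an injective family of m+1 facets through x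
  obtain ⟨S₀, hS₀sub, hS₀card⟩ := Finset.exists_subset_card_eq (s := S) (n := m+1) (by omega)
  have e : Fin (m+1) ≃ {y // y ∈ S₀} := (S₀.equivFin.trans (by rw [hS₀card])).symm
  refine hsimple x hx ⟨fun l => {z ∈ psys g b | g ((e (Fin.cast (by simp) l)) : κ) ⬝ᵥ z = b ((e (Fin.cast (by simp) l)) : κ)}, ?_, ?_⟩
  · intro l l' hll
    have h1 : ((e (Fin.cast (by simp) l)) : κ) ∈ S := hS₀sub (e (Fin.cast (by simp) l)).2
    have h2 : ((e (Fin.cast (by simp) l)) : κ) ∈ S := hS₀sub (e (Fin.cast (by simp) l)).2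
    by_contra hne
    have hne' : ((e (Fin.cast (by simp) l)) : κ) ≠ ((e (Fin.cast (by simp) l')) : κ) := by
      intro h
      apply hne
      have := Subtype.ext h
      have := e.injective this
      simpa [Fin.ext_iff] using this
    exact hinj _ (hS₀sub (e (Fin.cast (by simp) l)).2) _ (hS₀sub (e (Fin.cast (by simp) l')).2) hne' hll
  · intro l
    refine ⟨(hfacet _ (hS₀sub (e (Fin.cast (by simp) l)).2)).1, hx, hbindS _ (hS₀sub (e (Fin.cast (by simp) l)).2)⟩

lemma core_iff {g : κ → Fin m → ℝ} {b : κ → ℝ} {x₀ : Fin m → ℝ}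
    (hbdd : Bornology.IsBounded (psys g b)) (hx₀ : ∀ t, g t ⬝ᵥ x₀ < b t) :
    (∀ x ∈ psys g b, (Finset.univ.filter fun t => g t ⬝ᵥ x = b t).card ≤ m) ↔
    (IsSimple (psys g b) ∧
      ∀ k, ({x | ∀ t ≠ k, g t ⬝ᵥ x ≤ b t} = psys g b) → ∀ x ∈ psys g b, g k ⬝ᵥ x ≠ b k) := by
  constructor
  · intro hcount
    exact ⟨simple_of_count hbdd hx₀ hcount, fun k hred => nored_of_count hbdd hcount k hred⟩
  · intro ⟨hsimple, hnr⟩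
    exact count_le_of_simple hx₀ hsimple hnr

lemma card_filter_sum {α β : Type*} [Fintype α] [Fintype β] (p : α ⊕ β → Prop) :
    (Finset.univ.filter p).card =
      (Finset.univ.filter fun a => p (Sum.inl a)).card +
      (Finset.univ.filter fun b' => p (Sum.inr b')).card := by
  classical
  rw [Finset.card_filter, Finset.card_filter, Finset.card_filter, Fintype.sum_sum_type]

section bridge
variable {m n : ℕ} (B : Matrix (Fin m) (Fin n) ℝ)

def gB : (Fin m ⊕ Fin n) → Fin m → ℝ :=
  Sum.elim (fun i => -(Pi.single i 1)) (fun j i => B i j)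

def bB (_B : Matrix (Fin m) (Fin n) ℝ) : (Fin m ⊕ Fin n) → ℝ := Sum.elim (fun _ => 0) (fun _ => 1)

lemma dot_inl (i : Fin m) (x : Fin m → ℝ) : gB B (Sum.inl i) ⬝ᵥ x = -(x i) := by
  simp [gB, dotProduct, Pi.single_apply, neg_mul, Finset.sum_ite_eq']

lemma dot_inr (j : Fin n) (x : Fin m → ℝ) : gB B (Sum.inr j) ⬝ᵥ x = (Bᵀ *ᵥ x) j := by
  simp [gB, dotProduct, mulVec, transpose_apply]

lemma psys_eq_Pset : psys (gB B) (bB B) = Pset B := by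
  ext x
  constructor
  · intro h
    exact ⟨fun i => by have := h (Sum.inl i); rw [dot_inl] at this; simpa [bB] using this,
      fun j => by have := h (Sum.inr j); rw [dot_inr] at this; simpa [bB] using this⟩
  · rintro ⟨h1, h2⟩ k
    rcases k with i | j
    · rw [dot_inl]; simpa [bB] using h1 i
    · rw [dot_inr]; simpa [bB] using h2 j

lemma slaterB : ∃ x₀ : Fin m → ℝ, ∀ t, gB B t ⬝ᵥ x₀ < bB B t := by
  set M : ℝ := ∑ i, ∑ j, |B i j| with hM
  have hM0 : 0 ≤ M := by positivity
  set ε : ℝ := 1 / (2 * (1 + M)) with hε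
  have hε0 : 0 < ε := by positivity
  refine ⟨fun _ => ε, ?_⟩
  intro t
  rcases t with i | j
  · rw [dot_inl]
    simp only [bB, Sum.elim_inl]
    linarith
  · rw [dot_inr]
    simp only [bB, Sum.elim_inr]
    have h1 : (Bᵀ *ᵥ fun _ => ε) j = (∑ i, B i j) * ε := by
      simp [mulVec, dotProduct, transpose_apply, Finset.sum_mul]
    rw [h1]
    have h2 : ∑ i, B i j ≤ M := by
      rw [hM]
      apply Finset.sum_le_sum
      intro i _
      exact le_trans (le_abs_self (B i j))
        (Finset.single_le_sum (f := fun j' => |B i j'|) (fun j' _ => abs_nonneg _)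
          (Finset.mem_univ j))
    have h3 : (∑ i, B i j) * ε ≤ M * ε := mul_le_mul_of_nonneg_right h2 (le_of_lt hε0)
    have h4 : M * ε < 1 := by
      rw [hε]
      rw [mul_one_div, div_lt_one (by positivity)]
      linarith
    linarith
end bridge

section bridge2
variable {m n : ℕ} (B : Matrix (Fin m) (Fin n) ℝ)

lemma supp_card (x : Fin m → ℝ) (hx : ∀ i, 0 ≤ x i) :
    (Finset.univ.filter fun i => x i = 0).card + (supp x).card = m := by
  have h1 : supp x = Finset.univ.filter fun i => ¬ (x i = 0) := by
    rw [supp]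
    apply Finset.filter_congr
    intro i _
    constructor
    · intro h; linarith
    · intro h; exact lt_of_le_of_ne (hx i) (Ne.symm h)
  rw [h1, Finset.card_filter_add_card_filter_not, Finset.card_univ, Fintype.card_fin]

lemma count_iff_best (hbdd : Bornology.IsBounded (Pset B)) :
    (∀ x ∈ Pset B, (Finset.univ.filter fun i : Fin m => x i = 0).card +
        (Finset.univ.filter fun j : Fin n => (Bᵀ *ᵥ x) j = 1).card ≤ m) ↔
    (∀ x, IsMixed x → (bestresp2 B x).card ≤ (supp x).card) := by
  constructor
  · intro hcount x' hx'
    obtain ⟨hx'0, hx'1⟩ := hx'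
    rcases Nat.eq_zero_or_pos n with hn | hn
    · have : (bestresp2 B x').card ≤ n := by
        have := Finset.card_le_card (Finset.subset_univ (bestresp2 B x'))
        simpa using this
      omega
    -- x' ≠ 0
    have hx'ne : x' ≠ 0 := by
      intro h
      rw [h] at hx'1
      simp at hx'1
    -- the maximum of Bᵀ x'
    have hnemp : Nonempty (Fin n) := ⟨⟨0, hn⟩⟩
    obtain ⟨j₀, _, hj₀⟩ := Finset.exists_max_image Finset.univ (fun j => (Bᵀ *ᵥ x') j)
      ⟨⟨0, hn⟩, Finset.mem_univ _⟩
    set v := (Bᵀ *ᵥ x') j₀ with hv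
    have hvpos : 0 < v := by
      by_contra hv0
      push_neg at hv0
      refine not_bounded_of_ray (v := 0) (u := x') hx'ne ?_ hbdd
      intro s hs
      refine ⟨fun i => by simpa using mul_nonneg hs (hx'0 i), fun j => ?_⟩
      have : (Bᵀ *ᵥ (0 + s • x')) j = s * (Bᵀ *ᵥ x') j := by
        rw [zero_add, mulVec_smul]
        simp
      rw [this]
      have h1 : (Bᵀ *ᵥ x') j ≤ v := hj₀ j (Finset.mem_univ j)
      nlinarith
    set x := v⁻¹ • x' with hxd
    have hxP : x ∈ Pset B := by
      constructor
      · intro i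
        have h0 := hx'0 i
        have : 0 ≤ v⁻¹ * x' i := mul_nonneg (inv_nonneg.mpr (le_of_lt hvpos)) h0
        simpa [hxd] using this
      · intro j
        have h1 : (Bᵀ *ᵥ x) j = v⁻¹ * (Bᵀ *ᵥ x') j := by
          rw [hxd, mulVec_smul]; simp
        rw [h1]
        rw [show (1:ℝ) = v⁻¹ * v by field_simp]
        apply mul_le_mul_of_nonneg_left (hj₀ j (Finset.mem_univ j))
          (inv_nonneg.mpr (le_of_lt hvpos))
    have hc := hcount x hxP
    have hzero : (Finset.univ.filter fun i => x i = 0) = (Finset.univ.filter fun i => x' i = 0) := by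
      apply Finset.filter_congr
      intro i _
      simp only [hxd, Pi.smul_apply, smul_eq_mul]
      constructor
      · intro h
        exact (mul_eq_zero.mp h).resolve_left (inv_ne_zero (ne_of_gt hvpos))
      · intro h; rw [h]; ring
    have hbr : bestresp2 B x' ⊆ Finset.univ.filter fun j => (Bᵀ *ᵥ x) j = 1 := by
      intro j hj
      have hj' : ∀ k, (Bᵀ *ᵥ x') k ≤ (Bᵀ *ᵥ x') j := by
        simp only [bestresp2, Finset.mem_filter] at hj
        exact hj.2
      have h1 : (Bᵀ *ᵥ x') j = v := le_antisymm (hj₀ j (Finset.mem_univ j)) (hj' j₀)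
      refine Finset.mem_filter.mpr ⟨Finset.mem_univ _, ?_⟩
      have h2 : (Bᵀ *ᵥ x) j = v⁻¹ * (Bᵀ *ᵥ x') j := by
        rw [hxd, mulVec_smul]; simp
      rw [h2, h1]
      field_simp
    have hbrc := Finset.card_le_card hbr
    have hsupp := supp_card x' hx'0
    rw [hzero] at hc
    omega
  · intro hbest x hxP
    obtain ⟨hx0, hx1⟩ := hxP
    by_cases hxz : x = 0
    · subst hxz
      have h1 : (Finset.univ.filter fun i : Fin m => (0:Fin m → ℝ) i = 0) = Finset.univ := by
        apply Finset.filter_true_of_mem; intro i _; rfl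
      have h2 : (Finset.univ.filter fun j : Fin n => (Bᵀ *ᵥ (0:Fin m → ℝ)) j = 1) = ∅ := by
        apply Finset.filter_false_of_mem
        intro j _
        rw [mulVec_zero]
        norm_num
      rw [h1, h2]
      simp
    · set s := ∑ i, x i with hs
      have hspos : 0 < s := by
        have hex : ∃ i ∈ Finset.univ, 0 < x i := by
          by_contra hno
          push_neg at hno
          apply hxz
          funext i
          have h1 := hno i (Finset.mem_univ i)
          have h2 := hx0 i
          simp only [Pi.zero_apply]
          linarith
        exact Finset.sum_pos' (fun i _ => hx0 i) hex
      set x' := s⁻¹ • x with hx'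
      have hmix : IsMixed x' := by
        constructor
        · intro i
          exact mul_nonneg (by positivity) (hx0 i)
        · rw [hx']
          simp only [Pi.smul_apply, smul_eq_mul, ← Finset.mul_sum]
          field_simp
          rw [hs]
      have hkey := hbest x' hmix
      have hzero : (Finset.univ.filter fun i => x i = 0).card + (supp x').card = m := by
        have h1 : supp x' = supp x := by
          apply Finset.filter_congr
          intro i _
          simp only [hx', Pi.smul_apply, smul_eq_mul]
          constructor
          · intro h
            by_contra hno
            push_neg at hno
            nlinarith [inv_pos.mpr hspos]
          · intro h
            exact mul_pos (inv_pos.mpr hspos) h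
        rw [h1]
        exact supp_card x hx0
      have hsub : (Finset.univ.filter fun j => (Bᵀ *ᵥ x) j = 1) ⊆ bestresp2 B x' := by
        intro j hj
        have hj' := (Finset.mem_filter.mp hj).2
        simp only [bestresp2, Finset.mem_filter]
        refine ⟨Finset.mem_univ _, ?_⟩
        intro k
        have h1 : ∀ j', (Bᵀ *ᵥ x') j' = s⁻¹ * (Bᵀ *ᵥ x) j' := by
          intro j'; rw [hx', mulVec_smul]; simp
        rw [h1, h1, hj']
        apply mul_le_mul_of_nonneg_left _ (by positivity)
        exact hx1 k
      have := Finset.card_le_card hsub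
      omega
end bridge2

lemma oneSide {m n : ℕ} (B : Matrix (Fin m) (Fin n) ℝ) (hbdd : Bornology.IsBounded (Pset B)) :
    (∀ x, IsMixed x → (bestresp2 B x).card ≤ (supp x).card) ↔
      (IsSimple (Pset B) ∧
       (∀ i : Fin m,
          {x : Fin m → ℝ | (∀ i', i' ≠ i → 0 ≤ x i') ∧ ∀ j, (Bᵀ *ᵥ x) j ≤ 1} = Pset B →
          ∀ x ∈ Pset B, x i ≠ 0) ∧
       (∀ j : Fin n,
          {x : Fin m → ℝ | (∀ i, 0 ≤ x i) ∧ ∀ j', j' ≠ j → (Bᵀ *ᵥ x) j' ≤ 1} = Pset B →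
          ∀ x ∈ Pset B, (Bᵀ *ᵥ x) j ≠ 1)) := by
  obtain ⟨x₀, hx₀⟩ := slaterB B
  have hPeq : psys (gB B) (bB B) = Pset B := psys_eq_Pset B
  have hbdd' : Bornology.IsBounded (psys (gB B) (bB B)) := by rw [hPeq]; exact hbdd
  have hcard : ∀ x : Fin m → ℝ,
      (Finset.univ.filter fun t => gB B t ⬝ᵥ x = bB B t).card =
      (Finset.univ.filter fun i : Fin m => x i = 0).card +
      (Finset.univ.filter fun j : Fin n => (Bᵀ *ᵥ x) j = 1).card := by
    intro x
    rw [card_filter_sum]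
    have e1 : (Finset.univ.filter fun a : Fin m => gB B (Sum.inl a) ⬝ᵥ x = bB B (Sum.inl a)) =
        Finset.univ.filter fun i : Fin m => x i = 0 := by
      apply Finset.filter_congr
      intro i _
      rw [dot_inl]
      simp [bB, neg_eq_zero]
    have e2 : (Finset.univ.filter fun a : Fin n => gB B (Sum.inr a) ⬝ᵥ x = bB B (Sum.inr a)) =
        Finset.univ.filter fun j : Fin n => (Bᵀ *ᵥ x) j = 1 := by
      apply Finset.filter_congr
      intro j _
      rw [dot_inr]
      simp [bB]
    rw [e1, e2]
  have step1 : (∀ x, IsMixed x → (bestresp2 B x).card ≤ (supp x).card) ↔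
      (∀ x ∈ psys (gB B) (bB B), (Finset.univ.filter fun t => gB B t ⬝ᵥ x = bB B t).card ≤ m) := by
    rw [← count_iff_best B hbdd]
    rw [hPeq]
    apply forall_congr'
    intro x
    apply imp_congr_right
    intro _
    rw [hcard x]
  rw [step1, core_iff hbdd' hx₀]
  apply and_congr
  · rw [hPeq]
  · rw [Sum.forall]
    apply and_congr
    · apply forall_congr'
      intro i
      have hset : {x : Fin m → ℝ | ∀ t ≠ Sum.inl i, gB B t ⬝ᵥ x ≤ bB B t} =
          {x : Fin m → ℝ | (∀ i', i' ≠ i → 0 ≤ x i') ∧ ∀ j, (Bᵀ *ᵥ x) j ≤ 1} := by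
        ext x
        simp only [Set.mem_setOf_eq]
        constructor
        · intro h
          refine ⟨fun i' hi' => ?_, fun j => ?_⟩
          · have := h (Sum.inl i') (by simpa using hi')
            rw [dot_inl] at this
            simpa [bB] using this
          · have := h (Sum.inr j) (by simp)
            rw [dot_inr] at this
            simpa [bB] using this
        · rintro ⟨h1, h2⟩ t ht
          rcases t with i' | j
          · rw [dot_inl]
            have : i' ≠ i := by simpa using ht
            simpa [bB] using h1 i' this
          · rw [dot_inr]
            simpa [bB] using h2 j
      rw [hset, hPeq]
      apply imp_congr_right
      intro _
      apply forall_congr'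
      intro x
      apply imp_congr_right
      intro _
      rw [dot_inl]
      simp [bB, neg_eq_zero]
    · apply forall_congr'
      intro j
      have hset : {x : Fin m → ℝ | ∀ t ≠ Sum.inr j, gB B t ⬝ᵥ x ≤ bB B t} =
          {x : Fin m → ℝ | (∀ i, 0 ≤ x i) ∧ ∀ j', j' ≠ j → (Bᵀ *ᵥ x) j' ≤ 1} := by
        ext x
        simp only [Set.mem_setOf_eq]
        constructor
        · intro h
          refine ⟨fun i => ?_, fun j' hj' => ?_⟩
          · have := h (Sum.inl i) (by simp)
            rw [dot_inl] at this
            simpa [bB] using this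
          · have := h (Sum.inr j') (by simpa using hj')
            rw [dot_inr] at this
            simpa [bB] using this
        · rintro ⟨h1, h2⟩ t ht
          rcases t with i | j'
          · rw [dot_inl]
            simpa [bB] using h1 i
          · rw [dot_inr]
            have : j' ≠ j := by simpa using ht
            simpa [bB] using h2 j' this
      rw [hset, hPeq]
      apply imp_congr_right
      intro _
      apply forall_congr'
      intro x
      apply imp_congr_right
      intro _
      rw [dot_inr]
      simp [bB]

end Helpers

/-- Let `P` and `Q` be bounded.  Then `(A,B)` is nondegenerate iff (i) `P` and `Q`
are simple polytopes, and (ii) every redundant inequality among the defining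
inequalities of `P` (resp. of `Q`) is binding at no point of `P` (resp. `Q`). -/
theorem nondegenerate_iff_simple_and_redundant_never_binding {m n : ℕ}
    (A B : Matrix (Fin m) (Fin n) ℝ)
    (hP : Bornology.IsBounded (Pset B)) (hQ : Bornology.IsBounded (Qset A)) :
    Nondegenerate A B ↔
      (IsSimple (Pset B) ∧ IsSimple (Qset A) ∧
       (∀ i : Fin m,
          {x : Fin m → ℝ | (∀ i', i' ≠ i → 0 ≤ x i') ∧ ∀ j, (Bᵀ *ᵥ x) j ≤ 1} = Pset B →
          ∀ x ∈ Pset B, x i ≠ 0) ∧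
       (∀ j : Fin n,
          {x : Fin m → ℝ | (∀ i, 0 ≤ x i) ∧ ∀ j', j' ≠ j → (Bᵀ *ᵥ x) j' ≤ 1} = Pset B →
          ∀ x ∈ Pset B, (Bᵀ *ᵥ x) j ≠ 1) ∧
       (∀ i : Fin m,
          {y : Fin n → ℝ | (∀ i', i' ≠ i → (A *ᵥ y) i' ≤ 1) ∧ ∀ j, 0 ≤ y j} = Qset A →
          ∀ y ∈ Qset A, (A *ᵥ y) i ≠ 1) ∧
       (∀ j : Fin n,
          {y : Fin n → ℝ | (∀ i, (A *ᵥ y) i ≤ 1) ∧ ∀ j', j' ≠ j → 0 ≤ y j'} = Qset A →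
          ∀ y ∈ Qset A, y j ≠ 0)) := by
  have hQP : Pset Aᵀ = Qset A := by
    ext y
    simp only [Pset, Qset, Set.mem_setOf_eq, transpose_transpose]
    tauto
  have hbQ : Bornology.IsBounded (Pset Aᵀ) := by rw [hQP]; exact hQ
  have h1 := oneSide B hP
  have h2 := oneSide Aᵀ hbQ
  have hbr : ∀ y : Fin n → ℝ, bestresp2 Aᵀ y = bestresp1 A y := by
    intro y
    ext j
    simp [bestresp2, bestresp1, transpose_transpose]
  constructor
  · rintro ⟨c1, c2⟩
    have h1' := h1.mp c1
    have h2' := h2.mp (by intro y hy; rw [hbr y]; exact c2 y hy)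
    refine ⟨h1'.1, ?_, h1'.2.1, h1'.2.2, ?_, ?_⟩
    · rw [← hQP]; exact h2'.1
    · intro i hset y hyQ
      have hset' : {y : Fin n → ℝ | (∀ i'', 0 ≤ y i'') ∧
          ∀ j', j' ≠ i → ((Aᵀ)ᵀ *ᵥ y) j' ≤ 1} = Pset Aᵀ := by
        rw [hQP, ← hset]
        ext z
        simp only [Set.mem_setOf_eq, transpose_transpose]
        tauto
      have := h2'.2.2 i hset' y (by rw [hQP]; exact hyQ)
      simpa [transpose_transpose] using this
    · intro j hset y hyQ
      have hset' : {y : Fin n → ℝ | (∀ i', i' ≠ j → 0 ≤ y i') ∧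
          ∀ j', ((Aᵀ)ᵀ *ᵥ y) j' ≤ 1} = Pset Aᵀ := by
        rw [hQP, ← hset]
        ext z
        simp only [Set.mem_setOf_eq, transpose_transpose]
        tauto
      exact h2'.2.1 j hset' y (by rw [hQP]; exact hyQ)
  · rintro ⟨hs1, hs2, hr1, hr2, hr3, hr4⟩
    constructor
    · exact h1.mpr ⟨hs1, hr1, hr2⟩
    · intro y hy
      rw [← hbr y]
      have hrhs : IsSimple (Pset Aᵀ) ∧
          (∀ i : Fin n, {y : Fin n → ℝ | (∀ i', i' ≠ i → 0 ≤ y i') ∧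
              ∀ j, ((Aᵀ)ᵀ *ᵥ y) j ≤ 1} = Pset Aᵀ → ∀ y ∈ Pset Aᵀ, y i ≠ 0) ∧
          (∀ j : Fin m, {y : Fin n → ℝ | (∀ i, 0 ≤ y i) ∧
              ∀ j', j' ≠ j → ((Aᵀ)ᵀ *ᵥ y) j' ≤ 1} = Pset Aᵀ →
              ∀ y ∈ Pset Aᵀ, ((Aᵀ)ᵀ *ᵥ y) j ≠ 1) := by
        refine ⟨by rw [hQP]; exact hs2, ?_, ?_⟩
        · intro i hset y' hy'
          apply hr4 i ?_ y' (by rw [← hQP]; exact hy')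
          rw [← hQP, ← hset]
          ext z
          simp only [Set.mem_setOf_eq, transpose_transpose]
          tauto
        · intro j hset y' hy'
          have hset2 : {y : Fin n → ℝ | (∀ i', i' ≠ j → (A *ᵥ y) i' ≤ 1) ∧
              ∀ j', 0 ≤ y j'} = Qset A := by
            rw [← hQP, ← hset]
            ext z
            simp only [Set.mem_setOf_eq, transpose_transpose]
            tauto
          have := hr3 j hset2 y' (by rw [← hQP]; exact hy')
          simpa [transpose_transpose] using this
      exact h2.mpr hrhs y hy
end
end
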